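/- arXiv:2104.05701 — 3 statements merged into one kernel-verified Lean document; each statement's English description precedes it below -/
import Mathlib

section
/- Let f ∈ Θ_{k,n} and let P_∞ be its big path, the piecewise-linear path through the points p_r = (r, f^r(0)/n) for r ∈ ℤ (with r the horizontal coordinate and f^r(0)/n the vertical coordinate). Then for α = (b, a) ∈ ℤ² (horizontal shift b, vertical shift a) with α not a multiple of (n, k): the multiplicity of (a,b) in the inversion multiset F'(f) (after normalizing α modulo ℤ·(n,k) to lie in [k-1]×[n-1]) equals half the number of intersection points of P_∞ with P_∞ + α, counted modulo the translation (n,k). -/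
open Finset

/-- `f : ℤ → ℤ` is an `n`-periodic affine permutation. -/
def IsAffinePerm (n : ℕ) (f : ℤ → ℤ) : Prop :=
  Function.Bijective f ∧ ∀ i : ℤ, f (i + (n : ℤ)) = f i + (n : ℤ)

/-- Boundedness condition `i ≤ f i ≤ i + n`. -/
def IsBoundedFn (n : ℕ) (f : ℤ → ℤ) : Prop :=
  ∀ i : ℤ, i ≤ f i ∧ f i ≤ i + (n : ℤ)

/-- Bounded affine permutation. -/
def IsBAP (n : ℕ) (f : ℤ → ℤ) : Prop := IsAffinePerm n f ∧ IsBoundedFn n f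

/-- The orbit of the residue of `a` under the reduction of `f` modulo `n`. -/
def orbitF (n : ℕ) (f : ℤ → ℤ) (a : ℤ) : Finset ℤ :=
  (Finset.range n).image (fun r => (f^[r] a) % (n : ℤ))

/-- The reduction of `f` modulo `n` is an `n`-cycle. -/
def IsCycleMod (n : ℕ) (f : ℤ → ℤ) : Prop :=
  ∀ j : ℤ, ∃ r : ℕ, r < n ∧ (f^[r] 0) % (n : ℤ) = j % (n : ℤ)

/-- The winding number `k(f̄) = #{i ∈ [1,n] : f̄(i) < i} = #{i ∈ [1,n] : f(i) > n}`. -/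
noncomputable def winding (n : ℕ) (f : ℤ → ℤ) : ℕ :=
  ((Finset.Icc (1 : ℤ) (n : ℤ)).filter (fun i => (n : ℤ) < f i)).card

/-- `f ∈ Θ_{k,n}`: a bounded affine permutation whose reduction modulo `n`
is an `n`-cycle with winding number `k`. -/
def IsTheta (k n : ℕ) (f : ℤ → ℤ) : Prop :=
  IsBAP n f ∧ IsCycleMod n f ∧ winding n f = k

/-- Inversions of `f`: pairs `i < j` with `f(i) > f(j)` and `i ∈ [n]`
(for a bounded affine permutation all inversions lie in the indicated box). -/
noncomputable def inversions (n : ℕ) (f : ℤ → ℤ) : Finset (ℤ × ℤ) :=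
  ((Finset.Icc (1 : ℤ) (n : ℤ)) ×ˢ (Finset.Icc (1 : ℤ) (3 * (n : ℤ)))).filter
    (fun p => p.1 < p.2 ∧ f p.2 < f p.1)

/-- The length `ℓ(f)`, i.e. the number of inversions. -/
noncomputable def alen (n : ℕ) (f : ℤ → ℤ) : ℕ := (inversions n f).card

/-- The number of cycles of the reduction of `f` modulo `n`. -/
def numCycles (n : ℕ) (f : ℤ → ℤ) : ℕ :=
  ((Finset.range n).image (fun a : ℕ => orbitF n f (a : ℤ))).card

/-- The affine simple transposition `s_i`, swapping `i + rn` and `i + 1 + rn` for all `r`. -/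
def sT (n : ℕ) (i : ℤ) (j : ℤ) : ℤ :=
  if j % (n : ℤ) = i % (n : ℤ) then j + 1
  else if j % (n : ℤ) = (i + 1) % (n : ℤ) then j - 1
  else j

/-- `s_i f`. -/
def mulS (n : ℕ) (i : ℤ) (f : ℤ → ℤ) : ℤ → ℤ := fun m => sT n i (f m)

/-- `f s_i`. -/
def smulS (n : ℕ) (i : ℤ) (f : ℤ → ℤ) : ℤ → ℤ := fun m => f (sT n i m)

/-- `s_i f s_i`. -/
def conjS (n : ℕ) (i : ℤ) (f : ℤ → ℤ) : ℤ → ℤ := fun m => sT n i (f (sT n i m))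

/-- The cyclic shift `σ`. -/
def cshift (f : ℤ → ℤ) : ℤ → ℤ := fun i => f (i - 1) + 1

/-- Resolving the crossing `(i,j)`: swap the values `f(i)` and `f(j)` `n`-periodically. -/
def resolve (n : ℕ) (f : ℤ → ℤ) (i j : ℤ) : ℤ → ℤ := fun m =>
  if m % (n : ℤ) = i % (n : ℤ) then f j + (m - i)
  else if m % (n : ℤ) = j % (n : ℤ) then f i + (m - j)
  else f m

/-- `g'` is the order-preserving relabeling (by `ℤ`, `n'`-periodically) of the
restriction of `g` to the set `S` of integers. -/
def IsRelabelOn (n : ℕ) (g : ℤ → ℤ) (S : Set ℤ) (n' : ℕ) (g' : ℤ → ℤ) : Prop :=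
  ∃ φ : ℤ → ℤ, StrictMono φ ∧ (∀ m : ℤ, φ (m + (n' : ℤ)) = φ m + (n : ℤ)) ∧
    Set.range φ = S ∧ ∀ m : ℤ, g (φ m) = φ (g' m)

/-- The parameters `(k₁, n₁)` of the cycle of `g` through `a`:
`n₁` is the size of the orbit of the residue of `a`, and `k₁` is the winding number of the
permutation obtained by order-preserving relabeling of the restriction of `g`
to the integers whose residue lies in that orbit. -/
noncomputable def resParamsAt (n : ℕ) (g : ℤ → ℤ) (a : ℤ) : ℕ × ℕ :=
  (sInf {k₁ : ℕ | ∃ g₁ : ℤ → ℤ,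
      IsRelabelOn n g {m : ℤ | m % (n : ℤ) ∈ orbitF n g a} (orbitF n g a).card g₁ ∧
      winding (orbitF n g a).card g₁ = k₁},
   (orbitF n g a).card)

/-- The inversion multiset `F'(f)`: one point `(k₁, n₁)` for each inversion `(i,j)`,
recording the parameters of the cycle through `i` after resolving the crossing. -/
noncomputable def invMultiset (n : ℕ) (f : ℤ → ℤ) : Multiset (ℕ × ℕ) :=
  Multiset.map (fun p => resParamsAt n (resolve n f p.1 p.2) p.1) (inversions n f).val

/-- The inversion multiset `F(f)` in `(k, n-k)`-coordinates: points `(k₁, n₁ - k₁)`. -/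
noncomputable def invMultisetF (n : ℕ) (f : ℤ → ℤ) : Multiset (ℕ × ℕ) :=
  Multiset.map (fun p => (p.1, p.2 - p.1)) (invMultiset n f)

/-- `f` is repetition-free if its inversion multiset has no repeated elements. -/
def RepFree (n : ℕ) (f : ℤ → ℤ) : Prop := (invMultiset n f).Nodup

/-- A double crossing at `i`: with `a = f⁻¹(i+1)`, `b = f⁻¹(i)`, `c = f(i+1)`, `d = f(i)`,
we have `a < b < i < i+1 < c < d`. -/
def DoubleCrossingAt (n : ℕ) (f : ℤ → ℤ) (i : ℤ) : Prop :=
  ∃ a b : ℤ, f a = i + 1 ∧ f b = i ∧ a < b ∧ b < i ∧ i + 1 < f (i + 1) ∧ f (i + 1) < f i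

/-- `i` and `j` lie in the same cycle of the reduction of `f` modulo `n`. -/
def SameCycleMod (n : ℕ) (f : ℤ → ℤ) (i j : ℤ) : Prop :=
  j % (n : ℤ) ∈ orbitF n f i

/-- The recurrence defining the positroid Catalan numbers `C_f`. -/
structure CatalanRules (C : (n : ℕ) → (ℤ → ℤ) → ℕ) : Prop where
  base : ∀ f : ℤ → ℤ, IsBAP 1 f → C 1 f = 1
  fix_removal : ∀ (n n' : ℕ) (f f' : ℤ → ℤ), IsBAP n f → IsBAP n' f' →
    IsRelabelOn n f {m : ℤ | f m ≠ m ∧ f m ≠ m + (n : ℤ)} n' f' → C n f = C n' f'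
  mul_left : ∀ (n : ℕ) (f : ℤ → ℤ) (i : ℤ), 2 ≤ n → IsBAP n f →
    (f i = i + 1 ∨ f (i + 1) = i + (n : ℤ)) → C n f = C n (mulS n i f)
  mul_right : ∀ (n : ℕ) (f : ℤ → ℤ) (i : ℤ), 2 ≤ n → IsBAP n f →
    (f i = i + 1 ∨ f (i + 1) = i + (n : ℤ)) → C n f = C n (smulS n i f)
  conj_inv : ∀ (n : ℕ) (f : ℤ → ℤ) (i : ℤ), IsBAP n f → IsBAP n (conjS n i f) →
    alen n (conjS n i f) = alen n f → C n (conjS n i f) = C n f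
  double_same : ∀ (n : ℕ) (f : ℤ → ℤ) (i : ℤ), IsBAP n f → DoubleCrossingAt n f i →
    SameCycleMod n f i (i + 1) → C n (conjS n i f) = C n (mulS n i f) + C n f
  double_diff : ∀ (n : ℕ) (f : ℤ → ℤ) (i : ℤ), IsBAP n f → DoubleCrossingAt n f i →
    ¬ SameCycleMod n f i (i + 1) → C n (conjS n i f) = C n f

/-- The value `f^r(0)` for `r ∈ ℤ` (using `f^n(0) = kn` to extend periodically). -/
def bigPt (n k : ℕ) (f : ℤ → ℤ) (r : ℤ) : ℤ :=
  f^[(r % (n : ℤ)).toNat] 0 + (r / (n : ℤ)) * ((k : ℤ) * (n : ℤ))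

/-- The big path `P_∞` of `f`: the piecewise-linear path through the points
`(r, f^r(0)/n)` for `r ∈ ℤ` (horizontal coordinate `r`, vertical `f^r(0)/n`). -/
def bigPath (n k : ℕ) (f : ℤ → ℤ) : Set (ℝ × ℝ) :=
  ⋃ r : ℤ, segment ℝ ((r : ℝ), (bigPt n k f r : ℝ) / (n : ℝ))
    ((r : ℝ) + 1, (bigPt n k f (r + 1) : ℝ) / (n : ℝ))

/-- The small path `P^{(f)}`: the piecewise-linear path through the points
`(r, f^r(0)/n)` for `r = 0, 1, …, n`. -/
def smallPath (n : ℕ) (f : ℤ → ℤ) : Set (ℝ × ℝ) :=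
  ⋃ r ∈ Finset.range n, segment ℝ ((r : ℝ), ((f^[r] 0 : ℤ) : ℝ) / (n : ℝ))
    ((r : ℝ) + 1, ((f^[r + 1] 0 : ℤ) : ℝ) / (n : ℝ))

/-- The number of up steps among the first `t` steps of `s`. -/
def upsTo (n : ℕ) (s : Fin n → Bool) (t : ℕ) : ℕ :=
  (Finset.univ.filter (fun r : Fin n => r.val < t ∧ s r = true)).card

/-- The number of lattice paths from `(0,0)` to `(k, n-k)` with unit up and right steps
(`n` steps in total, recorded by `s : Fin n → Bool`, `true` = up) which stay above the
main diagonal of the `k × (n-k)` rectangle and avoid every point of `F`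
(points recorded as `(height, horizontal position)`). -/
noncomputable def dyckCount (k n : ℕ) (F : Multiset (ℕ × ℕ)) : ℕ :=
  Nat.card {s : Fin n → Bool //
    upsTo n s n = k ∧
    (∀ t ≤ n, k * (t - upsTo n s t) ≤ (n - k) * upsTo n s t) ∧
    (∀ t ≤ n, (upsTo n s t, t - upsTo n s t) ∉ F)}

section Basic
variable {n k : ℕ} {f : ℤ → ℤ}

lemma eq_of_res_eq_close {i j : ℤ} (h : i % (n:ℤ) = j % (n:ℤ))
    (h1 : -(n:ℤ) < j - i) (h2 : j - i < n) : i = j := by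
  obtain ⟨t, ht⟩ := Int.ModEq.dvd h
  have hn : (0:ℤ) < n := by omega
  have ht1 : t < 1 := by nlinarith
  have ht2 : -1 < t := by nlinarith
  have ht0 : t = 0 := by omega
  rw [ht0, mul_zero] at ht
  omega

lemma per_mul (hper : ∀ i : ℤ, f (i + (n:ℤ)) = f i + n) (t : ℤ) (i : ℤ) :
    f (i + t * n) = f i + t * n := by
  induction t using Int.induction_on with
  | zero => simp
  | succ t ih =>
      have h1 : i + (t + 1 : ℤ) * n = (i + t * n) + n := by ring
      rw [h1, hper, ih]; ring
  | pred t ih =>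
      have e1 : i + (-(t:ℤ)) * n = (i + (-(t:ℤ) - 1) * n) + n := by ring
      rw [e1, hper] at ih
      have e2 : (-(t:ℤ)) * n - n = (-(t:ℤ) - 1) * n := by ring
      linarith

lemma theta_pos (hf : IsTheta k n f) : 0 < n := by
  obtain ⟨r, hr, -⟩ := hf.2.1 0
  omega

lemma theta_per (hf : IsTheta k n f) : ∀ i : ℤ, f (i + (n:ℤ)) = f i + n := hf.1.1.2
lemma theta_inj (hf : IsTheta k n f) : Function.Injective f := hf.1.1.1.1
lemma theta_bdd (hf : IsTheta k n f) : IsBoundedFn n f := hf.1.2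

/-- the iterates of 0 have pairwise distinct residues below n -/
lemma iter_res_inj (hf : IsTheta k n f) : ∀ r s : ℕ, r < n → s < n →
    f^[r] 0 % (n:ℤ) = f^[s] 0 % (n:ℤ) → r = s := by
  classical
  have hn := theta_pos hf
  set e : ℕ → ℤ := fun r => f^[r] 0 % (n:ℤ) with he
  have hsub : (Finset.range n).image e ⊆ Finset.Ico (0:ℤ) n := by
    intro x hx
    simp only [Finset.mem_image] at hx
    obtain ⟨r, -, rfl⟩ := hx
    simp only [Finset.mem_Ico, he]
    exact ⟨Int.emod_nonneg _ (by omega), Int.emod_lt_of_pos _ (by omega)⟩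
  have hsurj : Finset.Ico (0:ℤ) (n:ℤ) ⊆ (Finset.range n).image e := by
    intro j hj
    simp only [Finset.mem_Ico] at hj
    obtain ⟨r, hr, hrr⟩ := hf.2.1 j
    simp only [Finset.mem_image]
    exact ⟨r, Finset.mem_range.2 hr, by rw [he]; simp only; rw [hrr, Int.emod_eq_of_lt hj.1 hj.2]⟩
  have himg : (Finset.range n).image e = Finset.Ico (0:ℤ) n :=
    Finset.Subset.antisymm hsub hsurj
  have hcard : ((Finset.range n).image e).card = (Finset.range n).card := by
    rw [himg, Int.card_Ico]
    simp
  have hinj := Finset.injOn_of_card_image_eq hcard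
  intro r s hr hs hrs
  exact hinj (by simp [hr]) (by simp [hs]) hrs

lemma iter_telescope (g : ℤ → ℤ) (x : ℤ) (N : ℕ) :
    g^[N] x = x + ∑ r ∈ Finset.range N, (g (g^[r] x) - g^[r] x) := by
  induction N with
  | zero => simp
  | succ N ih => rw [Finset.sum_range_succ, Function.iterate_succ_apply', ih]; ring

lemma disp_period (hper : ∀ i : ℤ, f (i + (n:ℤ)) = f i + n) (m : ℤ) :
    f m - m = f (m % n) - (m % n) := by
  have h1 : m % (n:ℤ) + (m / n) * n = m := by
    have := Int.emod_add_mul_ediv m n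
    linarith [mul_comm (m / (n:ℤ)) (n:ℤ)]
  have := per_mul hper (m / n) (m % n)
  rw [h1] at this
  linarith

/-- sum of displacements over any complete set of residue iterates -/
lemma iter_disp (hn : 0 < n) (hper : ∀ i : ℤ, f (i + (n:ℤ)) = f i + n) (x : ℤ)
    (hres : ∀ r s : ℕ, r < n → s < n → f^[r] x % (n:ℤ) = f^[s] x % (n:ℤ) → r = s) :
    f^[n] x - x = ∑ i ∈ Finset.Icc (1:ℤ) n, (f i - i) := by
  classical
  set d : ℤ → ℤ := fun m => f m - m with hd
  have hdper : ∀ m : ℤ, d m = d (m % n) := fun m => disp_period hper m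
  have h1 : f^[n] x - x = ∑ r ∈ Finset.range n, d (f^[r] x) := by
    rw [iter_telescope f x n]; ring
  have h2 : ∀ r ∈ Finset.range n, d (f^[r] x) = d (f^[r] x % n) := fun r _ => hdper _
  rw [h1, Finset.sum_congr rfl h2]
  set e : ℕ → ℤ := fun r => f^[r] x % (n:ℤ) with he
  have hinj : ∀ r ∈ Finset.range n, ∀ s ∈ Finset.range n, e r = e s → r = s := by
    intro r hr s hs hrs
    exact hres r s (Finset.mem_range.1 hr) (Finset.mem_range.1 hs) hrs
  have himg : (Finset.range n).image e = Finset.Ico (0:ℤ) n := by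
    apply Finset.eq_of_subset_of_card_le
    · intro y hy
      simp only [Finset.mem_image] at hy
      obtain ⟨r, -, rfl⟩ := hy
      simp only [Finset.mem_Ico, he]
      exact ⟨Int.emod_nonneg _ (by omega), Int.emod_lt_of_pos _ (by omega)⟩
    · rw [Finset.card_image_of_injOn (fun r hr s hs h => hinj r hr s hs h), Int.card_Ico]
      simp
  have h3 : ∑ r ∈ Finset.range n, d (e r) = ∑ m ∈ Finset.Ico (0:ℤ) n, d m := by
    rw [← himg, Finset.sum_image hinj]
  rw [h3]
  -- shift Ico 0 n to Icc 1 n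
  have hico : Finset.Ico (0:ℤ) n = insert (0:ℤ) (Finset.Ico (1:ℤ) n) := by
    ext m; simp only [Finset.mem_Ico, Finset.mem_insert]; omega
  have hicc : Finset.Icc (1:ℤ) n = insert (n:ℤ) (Finset.Ico (1:ℤ) n) := by
    ext m; simp only [Finset.mem_Icc, Finset.mem_Ico, Finset.mem_insert]; omega
  rw [hico, hicc, Finset.sum_insert (by simp), Finset.sum_insert (by simp)]
  have : d 0 = d (n:ℤ) := by
    rw [hdper (n:ℤ), Int.emod_self]
  rw [this]

lemma res_eq_of_f_res_eq (hinj : Function.Injective f)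
    (hper : ∀ i : ℤ, f (i + (n:ℤ)) = f i + n) {i j : ℤ}
    (h : f i % (n:ℤ) = f j % (n:ℤ)) : i % (n:ℤ) = j % (n:ℤ) := by
  obtain ⟨t, ht⟩ := Int.ModEq.dvd h
  have : f (i + t * n) = f j := by
    rw [per_mul hper]
    have : (n:ℤ) * t = t * n := mul_comm _ _
    omega
  have hj : i + t * n = j := hinj this
  rw [← hj, Int.add_mul_emod_self_right]

lemma f_res_eq_of_res_eq (hper : ∀ i : ℤ, f (i + (n:ℤ)) = f i + n) {i j : ℤ}
    (h : i % (n:ℤ) = j % (n:ℤ)) : f i % (n:ℤ) = f j % (n:ℤ) := by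
  obtain ⟨t, ht⟩ := Int.ModEq.dvd h
  have hij : i + t * n = j := by
    have : (n:ℤ) * t = t * n := mul_comm _ _
    omega
  have : f (i + t * n) = f i + t * n := per_mul hper t i
  rw [hij] at this
  rw [this, Int.add_mul_emod_self_right]

lemma sub_n_emod (a : ℤ) : (a - (n:ℤ)) % (n:ℤ) = a % n := by
  rw [Int.sub_emod, Int.emod_self, sub_zero, Int.emod_emod_of_dvd _ dvd_rfl]

lemma sum_disp (hinj : Function.Injective f)
    (hper : ∀ i : ℤ, f (i + (n:ℤ)) = f i + n) (hbdd : IsBoundedFn n f) :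
    ∑ i ∈ Finset.Icc (1:ℤ) n, (f i - i) = n * winding n f := by
  classical
  set ρ : ℤ → ℤ := fun i => if (n:ℤ) < f i then f i - n else f i with hρ
  have hmem : ∀ i ∈ Finset.Icc (1:ℤ) n, ρ i ∈ Finset.Icc (1:ℤ) n := by
    intro i hi
    simp only [Finset.mem_Icc] at hi ⊢
    have h1 := (hbdd i).1; have h2 := (hbdd i).2
    simp only [hρ]; split <;> omega
  have hinjOn : Set.InjOn ρ (Finset.Icc (1:ℤ) n) := by
    intro i hi j hj hij
    simp only [Finset.coe_Icc, Set.mem_Icc] at hi hj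
    have hres : f i % (n:ℤ) = f j % (n:ℤ) := by
      have e1 : ρ i % (n:ℤ) = f i % n := by
        simp only [hρ]; split
        · exact sub_n_emod _
        · rfl
      have e2 : ρ j % (n:ℤ) = f j % n := by
        simp only [hρ]; split
        · exact sub_n_emod _
        · rfl
      rw [← e1, ← e2, hij]
    have hres2 := res_eq_of_f_res_eq hinj hper hres
    exact eq_of_res_eq_close hres2 (by omega) (by omega)
  have himg : Finset.image ρ (Finset.Icc (1:ℤ) n) = Finset.Icc (1:ℤ) n := by
    apply Finset.eq_of_subset_of_card_le
    · intro x hx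
      simp only [Finset.mem_image] at hx
      obtain ⟨i, hi, rfl⟩ := hx
      exact hmem i hi
    · rw [Finset.card_image_of_injOn hinjOn]
  have hsum : ∑ i ∈ Finset.Icc (1:ℤ) n, ρ i = ∑ i ∈ Finset.Icc (1:ℤ) n, i := by
    conv_rhs => rw [← himg]
    rw [Finset.sum_image (fun x hx y hy h => hinjOn hx hy h)]
  have hpt : ∀ i ∈ Finset.Icc (1:ℤ) n, f i - i = (ρ i - i) + (if (n:ℤ) < f i then (n:ℤ) else 0) := by
    intro i _
    simp only [hρ]; split <;> ring
  rw [Finset.sum_congr rfl hpt, Finset.sum_add_distrib]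
  have hz : ∑ i ∈ Finset.Icc (1:ℤ) n, (ρ i - i) = 0 := by
    rw [Finset.sum_sub_distrib, hsum, sub_self]
  rw [hz, zero_add, Finset.sum_ite, Finset.sum_const, Finset.sum_const_zero, add_zero,
    winding]
  simp [mul_comm]


end Basic

section BigPt
variable {n k : ℕ} {f : ℤ → ℤ}

lemma iter_n (hf : IsTheta k n f) : f^[n] (0:ℤ) = (k:ℤ) * n := by
  have h1 := iter_disp (theta_pos hf) (theta_per hf) 0 (iter_res_inj hf)
  rw [sum_disp (theta_inj hf) (theta_per hf) (theta_bdd hf), hf.2.2] at h1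
  simp only [sub_zero] at h1
  rw [h1]; ring

lemma bigPt_zero : bigPt n k f 0 = 0 := by
  simp [bigPt]

lemma bigPt_small' (hn : 0 < n) {r : ℤ} (h0 : 0 ≤ r) (hr : r < n) :
    bigPt n k f r = f^[r.toNat] 0 := by
  unfold bigPt
  rw [Int.emod_eq_of_lt h0 hr, Int.ediv_eq_zero_of_lt h0 hr]
  simp

lemma bigPt_shift (hn : 0 < n) (t r : ℤ) :
    bigPt n k f (r + t * n) = bigPt n k f r + t * ((k:ℤ) * n) := by
  unfold bigPt
  rw [Int.add_mul_emod_self_right, Int.add_mul_ediv_right _ _ (by omega : (n:ℤ) ≠ 0)]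
  ring

lemma bigPt_succ (hf : IsTheta k n f) (r : ℤ) :
    bigPt n k f (r + 1) = f (bigPt n k f r) := by
  have hn := theta_pos hf
  set q := r / (n:ℤ) with hq
  set s := r % (n:ℤ) with hsdef
  have hs0 : 0 ≤ s := Int.emod_nonneg _ (by omega)
  have hsn : s < n := Int.emod_lt_of_pos _ (by omega)
  have hr : r = s + q * n := by
    have := Int.emod_add_mul_ediv r (n:ℤ)
    rw [← hsdef, ← hq] at this
    linarith [mul_comm (n:ℤ) q]
  by_cases hc : s = (n:ℤ) - 1
  · have h1 : r + 1 = 0 + (q + 1) * n := by rw [hr, hc]; ring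
    have h2 : r = ((n:ℤ) - 1) + q * n := by rw [hr, hc]
    rw [h1, bigPt_shift hn, bigPt_zero, h2, bigPt_shift hn,
      bigPt_small' hn (by omega) (by omega)]
    have e1 : f^[((n:ℤ) - 1).toNat] (0:ℤ) + q * ((k:ℤ) * n) =
        f^[((n:ℤ) - 1).toNat] (0:ℤ) + (q * k) * n := by ring
    rw [e1, per_mul (theta_per hf)]
    have e2 : f (f^[((n:ℤ) - 1).toNat] (0:ℤ)) = f^[((n:ℤ) - 1).toNat + 1] (0:ℤ) :=
      (Function.iterate_succ_apply' f _ 0).symm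
    have en : ((n:ℤ) - 1).toNat + 1 = n := by omega
    rw [e2, en, iter_n hf]
    ring
  · have h1 : r + 1 = (s + 1) + q * n := by rw [hr]; ring
    rw [h1, bigPt_shift hn, hr, bigPt_shift hn,
      bigPt_small' hn (by omega) (by omega), bigPt_small' hn (by omega) (by omega)]
    have e1 : f^[s.toNat] (0:ℤ) + q * ((k:ℤ) * n) =
        f^[s.toNat] (0:ℤ) + (q * k) * n := by ring
    rw [e1, per_mul (theta_per hf)]
    have e2 : f^[(s + 1).toNat] (0:ℤ) = f (f^[s.toNat] (0:ℤ)) := by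
      have en : (s + 1).toNat = s.toNat + 1 := by omega
      rw [en, Function.iterate_succ_apply']
    rw [e2]
    ring

lemma bigPt_res_period (hn : 0 < n) (r : ℤ) :
    bigPt n k f r % n = bigPt n k f (r % n) % n := by
  have h1 : r = r % n + (r / n) * n := by
    have := Int.emod_add_mul_ediv r (n:ℤ)
    linarith [mul_comm (n:ℤ) (r / (n:ℤ))]
  conv_lhs => rw [h1]
  rw [bigPt_shift hn]
  have : bigPt n k f (r % n) + r / ↑n * (↑k * ↑n) =
      bigPt n k f (r % n) + (r / ↑n * ↑k) * ↑n := by ring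
  rw [this, Int.add_mul_emod_self_right]

lemma bigPt_res_inj (hf : IsTheta k n f) {r s : ℤ}
    (h : bigPt n k f r % n = bigPt n k f s % n) : r % n = s % n := by
  have hn := theta_pos hf
  rw [bigPt_res_period hn r, bigPt_res_period hn s] at h
  have hr0 : 0 ≤ r % (n:ℤ) := Int.emod_nonneg _ (by omega)
  have hrn : r % (n:ℤ) < n := Int.emod_lt_of_pos _ (by omega)
  have hs0 : 0 ≤ s % (n:ℤ) := Int.emod_nonneg _ (by omega)
  have hsn : s % (n:ℤ) < n := Int.emod_lt_of_pos _ (by omega)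
  rw [bigPt_small' hn hr0 hrn, bigPt_small' hn hs0 hsn] at h
  have := iter_res_inj hf (r % n).toNat (s % n).toNat (by omega) (by omega) h
  omega

lemma bigPt_res_surj (hf : IsTheta k n f) (m : ℤ) :
    ∃ p : ℤ, 0 ≤ p ∧ p < n ∧ bigPt n k f p % n = m % n := by
  have hn := theta_pos hf
  obtain ⟨r, hr, hrr⟩ := hf.2.1 m
  exact ⟨(r:ℤ), by omega, by omega, by
    rw [bigPt_small' hn (by omega) (by omega)]
    simpa using hrr⟩

end BigPt

section Efun
variable {n k : ℕ} {f : ℤ → ℤ}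

/-- the discrete difference function whose sign changes mark intersections -/
def Efun (n k : ℕ) (f : ℤ → ℤ) (a b : ℤ) (p : ℤ) : ℤ :=
  bigPt n k f p - bigPt n k f (p - b) - a * n

lemma Efun_period (hn : 0 < n) (a b p : ℤ) :
    Efun n k f a b (p + n) = Efun n k f a b p := by
  unfold Efun
  have h1 : (p:ℤ) + n = p + 1 * n := by ring
  have h2 : (p:ℤ) + n - b = (p - b) + 1 * n := by ring
  rw [h2, h1, bigPt_shift hn, bigPt_shift hn]
  ring

lemma Efun_shift (hn : 0 < n) (a b p : ℤ) (t : ℤ) :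
    Efun n k f a b (p + t * n) = Efun n k f a b p := by
  unfold Efun
  have h2 : (p:ℤ) + t * n - b = (p - b) + t * n := by ring
  rw [h2, bigPt_shift hn, bigPt_shift hn]
  ring

/-- the equivalence-class invariance: `(β, c) ≡ (b, a) mod (n, k)` gives the same `E` -/
lemma Efun_congr (hn : 0 < n) (a b t p : ℤ) :
    Efun n k f (a + t * k) (b + t * n) p = Efun n k f a b p := by
  unfold Efun
  have h2 : p - (b + t * n) = (p - b) + (-t) * n := by ring
  rw [h2, bigPt_shift hn]
  ring

lemma Efun_ne_zero (hf : IsTheta k n f) (a b : ℤ)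
    (hα : ¬ ∃ t : ℤ, a = t * (k : ℤ) ∧ b = t * (n : ℤ)) (p : ℤ) :
    Efun n k f a b p ≠ 0 := by
  have hn := theta_pos hf
  intro h0
  unfold Efun at h0
  -- residues agree
  have hres : bigPt n k f p % n = bigPt n k f (p - b) % n := by
    have : bigPt n k f p = bigPt n k f (p - b) + a * n := by linarith
    rw [this]
    have e : bigPt n k f (p - b) + a * n = bigPt n k f (p - b) + a * n := rfl
    rw [Int.add_mul_emod_self_right]
  have hres2 := bigPt_res_inj hf hres
  -- n divides b
  have hdvd : (n:ℤ) ∣ b := by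
    have : (p - b) % (n:ℤ) = p % n := hres2.symm
    have h2 : (p - (p - b)) % (n:ℤ) = 0 := by
      rw [Int.sub_emod, hres2]
      simp
    have h3 : (n:ℤ) ∣ (p - (p - b)) := Int.dvd_of_emod_eq_zero h2
    simpa using h3
  obtain ⟨t, ht⟩ := hdvd
  have hb : b = t * n := by rw [ht, mul_comm]
  have e : (p - b) + t * n = p := by rw [hb]; ring
  have key : bigPt n k f p = bigPt n k f (p - b) + t * ((k:ℤ) * n) := by
    conv_lhs => rw [← e]
    exact bigPt_shift hn t (p - b)
  rw [key] at h0
  have ha : a = t * k := by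
    have h2 : (a - t * k) * (n:ℤ) = 0 := by linarith
    rcases mul_eq_zero.1 h2 with h | h
    · omega
    · omega
  exact hα ⟨t, ha, hb⟩

end Efun

section Counting
variable {n k : ℕ} {f : ℤ → ℤ}

lemma ico_int_eq_image (N : ℕ) :
    Finset.Ico (0:ℤ) (N:ℤ) = (Finset.range N).image (fun i : ℕ => (i : ℤ)) := by
  ext m
  simp only [Finset.mem_Ico, Finset.mem_image, Finset.mem_range]
  constructor
  · rintro ⟨h0, hN⟩
    exact ⟨m.toNat, by omega, by omega⟩
  · rintro ⟨i, hi, rfl⟩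
    omega

lemma card_up_eq_card_down {E : ℤ → ℤ} (hn : 0 < n)
    (hE : ∀ p : ℤ, E p ≠ 0) (hper : E (n:ℤ) = E 0) :
    ((Finset.Ico (0:ℤ) n).filter (fun p => E p < 0 ∧ 0 < E (p+1))).card =
    ((Finset.Ico (0:ℤ) n).filter (fun p => 0 < E p ∧ E (p+1) < 0)).card := by
  classical
  set χ : ℤ → ℤ := fun p => if 0 < E p then 1 else 0 with hχ
  have htel : ∑ p ∈ Finset.Ico (0:ℤ) (n:ℤ), (χ (p+1) - χ p) = 0 := by
    rw [ico_int_eq_image n, Finset.sum_image (by intro x _ y _ h; simp only at h; omega)]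
    have : ∀ i : ℕ, χ ((i:ℤ) + 1) = χ ((i+1 : ℕ) : ℤ) := by intro i; norm_cast
    calc ∑ i ∈ Finset.range n, (χ ((i:ℤ)+1) - χ (i:ℤ))
        = ∑ i ∈ Finset.range n, (χ (((i+1:ℕ)):ℤ) - χ ((i:ℕ):ℤ)) := by
          apply Finset.sum_congr rfl; intro i _; rw [this]
      _ = χ ((n:ℕ):ℤ) - χ ((0:ℕ):ℤ) := Finset.sum_range_sub (fun i : ℕ => χ (i:ℤ)) n
      _ = 0 := by simp only [hχ, Nat.cast_zero, hper]; ring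
  have hpt : ∀ p : ℤ, χ (p+1) - χ p =
      (if E p < 0 ∧ 0 < E (p+1) then (1:ℤ) else 0) -
      (if 0 < E p ∧ E (p+1) < 0 then (1:ℤ) else 0) := by
    intro p
    rcases (hE p).lt_or_gt with h1 | h1 <;> rcases (hE (p+1)).lt_or_gt with h2 | h2 <;>
      simp [hχ, h1, h2, not_lt.2 h1.le, not_lt.2 h2.le, lt_asymm]
  have hsum : ∑ p ∈ Finset.Ico (0:ℤ) (n:ℤ),
      ((if E p < 0 ∧ 0 < E (p+1) then (1:ℤ) else 0) -
       (if 0 < E p ∧ E (p+1) < 0 then (1:ℤ) else 0)) =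
      ∑ p ∈ Finset.Ico (0:ℤ) (n:ℤ), (χ (p+1) - χ p) :=
    Finset.sum_congr rfl (fun p _ => (hpt p).symm)
  rw [htel, Finset.sum_sub_distrib, Finset.sum_boole, Finset.sum_boole] at hsum
  have := sub_eq_zero.1 hsum
  exact_mod_cast this

lemma card_cross_split {E : ℤ → ℤ} (hn : 0 < n) (hE : ∀ p : ℤ, E p ≠ 0) :
    ((Finset.Ico (0:ℤ) n).filter (fun p => E p * E (p+1) < 0)).card =
    ((Finset.Ico (0:ℤ) n).filter (fun p => E p < 0 ∧ 0 < E (p+1))).card +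
    ((Finset.Ico (0:ℤ) n).filter (fun p => 0 < E p ∧ E (p+1) < 0)).card := by
  classical
  have hiff : ∀ p : ℤ, (E p * E (p+1) < 0) ↔
      ((E p < 0 ∧ 0 < E (p+1)) ∨ (0 < E p ∧ E (p+1) < 0)) := by
    intro p
    rw [mul_neg_iff]
    tauto
  rw [Finset.filter_congr (fun p _ => by rw [hiff p]), Finset.filter_or]
  apply Finset.card_union_of_disjoint
  rw [Finset.disjoint_filter]
  rintro p _ ⟨h1, h2⟩ ⟨h3, h4⟩
  omega

end Counting

section Geometry
variable {n k : ℕ} {f : ℤ → ℤ}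


/-- the piecewise linear interpolation of the big points -/
noncomputable def pathFun (n k : ℕ) (f : ℤ → ℤ) (x : ℝ) : ℝ :=
  ((bigPt n k f ⌊x⌋ : ℝ) + (x - ⌊x⌋) * ((bigPt n k f (⌊x⌋ + 1) : ℝ) - (bigPt n k f ⌊x⌋ : ℝ))) / (n : ℝ)

lemma pathFun_int (r : ℤ) : pathFun n k f (r : ℝ) = (bigPt n k f r : ℝ) / n := by
  unfold pathFun
  rw [Int.floor_intCast]
  ring_nf

lemma mem_bigPath_iff (q : ℝ × ℝ) :
    q ∈ bigPath n k f ↔ q.2 = pathFun n k f q.1 := by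
  constructor
  · intro hq
    rw [bigPath, Set.mem_iUnion] at hq
    obtain ⟨r, hr⟩ := hq
    rw [segment, Set.mem_setOf_eq] at hr
    obtain ⟨u, t, hu, ht, hut, hq⟩ := hr
    have hu' : u = 1 - t := by linarith
    subst hu'
    have h1 : q.1 = (r : ℝ) + t := by
      have := congrArg Prod.fst hq
      simp only [Prod.fst_add, Prod.smul_fst, smul_eq_mul] at this
      rw [← this]; ring
    have h2 : q.2 = ((1 - t) * (bigPt n k f r : ℝ) + t * (bigPt n k f (r+1) : ℝ)) / n := by
      have := congrArg Prod.snd hq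
      simp only [Prod.snd_add, Prod.smul_snd, smul_eq_mul] at this
      rw [← this]; ring
    by_cases hc : t < 1
    · have hfl : ⌊q.1⌋ = r := by
        rw [h1, add_comm, Int.floor_add_intCast]
        have : ⌊t⌋ = 0 := Int.floor_eq_zero_iff.2 ⟨ht, hc⟩
        omega
      rw [h2]
      unfold pathFun
      rw [hfl, h1]
      push_cast
      ring_nf
    · have ht1 : t = 1 := le_antisymm (by linarith) (by linarith)
      subst ht1
      have h1' : q.1 = ((r + 1 : ℤ) : ℝ) := by rw [h1]; push_cast; ring
      have hfl : ⌊q.1⌋ = r + 1 := by rw [h1', Int.floor_intCast]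
      unfold pathFun
      rw [hfl, h2, h1']
      push_cast
      ring_nf
  · intro hq
    rw [bigPath, Set.mem_iUnion]
    refine ⟨⌊q.1⌋, ?_⟩
    rw [segment, Set.mem_setOf_eq]
    set t : ℝ := q.1 - ⌊q.1⌋ with htdef
    have ht0 : 0 ≤ t := by
      have := Int.floor_le q.1; linarith
    have ht1 : t < 1 := by
      have := Int.lt_floor_add_one q.1; linarith
    refine ⟨1 - t, t, by linarith, ht0, by ring, ?_⟩
    have : q = (q.1, q.2) := rfl
    rw [this, hq]
    unfold pathFun
    apply Prod.ext
    · simp only [Prod.fst_add, Prod.smul_fst, smul_eq_mul]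
      push_cast
      ring
    · simp only [Prod.snd_add, Prod.smul_snd, smul_eq_mul]
      push_cast
      ring

lemma mem_translate_iff (S : Set (ℝ × ℝ)) (a' b' : ℝ) (q : ℝ × ℝ) :
    q ∈ (fun q : ℝ × ℝ => (q.1 + b', q.2 + a')) '' S ↔ (q.1 - b', q.2 - a') ∈ S := by
  constructor
  · rintro ⟨y, hy, rfl⟩
    simpa using hy
  · intro h
    exact ⟨(q.1 - b', q.2 - a'), h, by simp⟩

/-- the difference function in terms of `E` -/
lemma pathFun_diff (hn : 0 < n) (a b : ℤ) (x : ℝ) :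
    pathFun n k f x - (pathFun n k f (x - (b:ℝ)) + (a:ℝ)) =
    ((Efun n k f a b ⌊x⌋ : ℝ) +
      (x - ⌊x⌋) * ((Efun n k f a b (⌊x⌋ + 1) : ℝ) - (Efun n k f a b ⌊x⌋ : ℝ))) / n := by
  have hfl : ⌊x - (b:ℝ)⌋ = ⌊x⌋ - b := by
    rw [Int.floor_sub_intCast]
  unfold pathFun Efun
  rw [hfl]
  have hne : (n:ℝ) ≠ 0 := by positivity
  have e1 : ((⌊x⌋ : ℤ) + 1 - b) = (⌊x⌋ - b + 1) := by ring
  rw [e1]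
  push_cast
  field_simp
  ring

end Geometry

section CardInter
variable {n k : ℕ} {f : ℤ → ℤ}

noncomputable def crossPt (E : ℤ → ℤ) (p : ℤ) : ℝ :=
  (p : ℝ) + (E p : ℝ) / ((E p : ℝ) - (E (p+1) : ℝ))

lemma crossPt_facts {E : ℤ → ℤ} {p : ℤ} (h : E p * E (p+1) < 0) :
    ((E p : ℝ) - (E (p+1) : ℝ)) ≠ 0 ∧
    0 < (E p : ℝ) / ((E p : ℝ) - (E (p+1) : ℝ)) ∧
    (E p : ℝ) / ((E p : ℝ) - (E (p+1) : ℝ)) < 1 := by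
  rcases mul_neg_iff.1 h with ⟨h1, h2⟩ | ⟨h1, h2⟩
  · have h1R : (0:ℝ) < (E p : ℝ) := by exact_mod_cast h1
    have h2R : ((E (p+1) : ℤ) : ℝ) < 0 := by exact_mod_cast h2
    have hd : (0:ℝ) < (E p : ℝ) - (E (p+1) : ℝ) := by linarith
    refine ⟨by linarith, div_pos h1R hd, ?_⟩
    have he : (E p : ℝ) / ((E p : ℝ) - (E (p+1) : ℝ)) - 1 =
        (E (p+1) : ℝ) / ((E p : ℝ) - (E (p+1) : ℝ)) := by
      field_simp
      ring
    have : (E (p+1) : ℝ) / ((E p : ℝ) - (E (p+1) : ℝ)) < 0 :=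
      div_neg_of_neg_of_pos h2R hd
    linarith
  · have h1R : ((E p : ℤ) : ℝ) < 0 := by exact_mod_cast h1
    have h2R : (0:ℝ) < ((E (p+1) : ℤ) : ℝ) := by exact_mod_cast h2
    have hd : (E p : ℝ) - (E (p+1) : ℝ) < 0 := by linarith
    have hdne : (E p : ℝ) - (E (p+1) : ℝ) ≠ 0 := ne_of_lt hd
    refine ⟨hdne, div_pos_of_neg_of_neg h1R hd, ?_⟩
    have he : (E p : ℝ) / ((E p : ℝ) - (E (p+1) : ℝ)) - 1 =
        (E (p+1) : ℝ) / ((E p : ℝ) - (E (p+1) : ℝ)) := by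
      field_simp
      ring
    have : (E (p+1) : ℝ) / ((E p : ℝ) - (E (p+1) : ℝ)) < 0 :=
      div_neg_of_pos_of_neg h2R hd
    linarith

lemma card_inter (hf : IsTheta k n f) (a b : ℤ)
    (hα : ¬ ∃ t : ℤ, a = t * (k : ℤ) ∧ b = t * (n : ℤ)) :
    Nat.card {p : ℝ × ℝ // p ∈ bigPath n k f ∧
        p ∈ (fun q : ℝ × ℝ => (q.1 + (b : ℝ), q.2 + (a : ℝ))) '' bigPath n k f ∧
        p.1 ∈ Set.Ico (0 : ℝ) (n : ℝ)} =
    ((Finset.Ico (0:ℤ) (n:ℤ)).filter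
      (fun p => Efun n k f a b p * Efun n k f a b (p+1) < 0)).card := by
  classical
  have hn := theta_pos hf
  have hnR : (0:ℝ) < n := by exact_mod_cast hn
  set E := Efun n k f a b with hE
  have hEnz : ∀ p, E p ≠ 0 := Efun_ne_zero hf a b hα
  set cross := (Finset.Ico (0:ℤ) (n:ℤ)).filter (fun p => E p * E (p+1) < 0) with hcrossdef
  -- the membership unfolding
  have hpred : ∀ q : ℝ × ℝ,
      (q ∈ bigPath n k f ∧
        q ∈ (fun q : ℝ × ℝ => (q.1 + (b : ℝ), q.2 + (a : ℝ))) '' bigPath n k f ∧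
        q.1 ∈ Set.Ico (0 : ℝ) (n : ℝ)) ↔
      (q.2 = pathFun n k f q.1 ∧
        pathFun n k f q.1 - (pathFun n k f (q.1 - (b:ℝ)) + (a:ℝ)) = 0 ∧
        0 ≤ q.1 ∧ q.1 < n) := by
    intro q
    rw [mem_bigPath_iff, mem_translate_iff, mem_bigPath_iff, Set.mem_Ico]
    constructor
    · rintro ⟨h1, h2, h3, h4⟩
      refine ⟨h1, ?_, h3, h4⟩
      have h2' : q.2 - (a:ℝ) = pathFun n k f (q.1 - (b:ℝ)) := h2
      rw [h1] at h2'
      linarith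
    · rintro ⟨h1, h2, h3, h4⟩
      refine ⟨h1, ?_, h3, h4⟩
      show q.2 - (a:ℝ) = pathFun n k f (q.1 - (b:ℝ))
      rw [h1]
      linarith
  -- the map from crossings to intersection points
  have hGmem : ∀ p : ℤ, p ∈ cross →
      ((crossPt E p, pathFun n k f (crossPt E p)) ∈ bigPath n k f ∧
        (crossPt E p, pathFun n k f (crossPt E p)) ∈
          (fun q : ℝ × ℝ => (q.1 + (b : ℝ), q.2 + (a : ℝ))) '' bigPath n k f ∧
        (crossPt E p, pathFun n k f (crossPt E p)).1 ∈ Set.Ico (0 : ℝ) (n : ℝ)) := by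
    intro p hp
    rw [hcrossdef, Finset.mem_filter, Finset.mem_Ico] at hp
    obtain ⟨⟨hp0, hp1⟩, hsign⟩ := hp
    obtain ⟨hden, ht0, ht1⟩ := crossPt_facts hsign
    set t : ℝ := (E p : ℝ) / ((E p : ℝ) - (E (p+1) : ℝ)) with htdef
    have hx : crossPt E p = (p : ℝ) + t := rfl
    have hfl : ⌊crossPt E p⌋ = p := by
      rw [hx, Int.floor_intCast_add]
      have : ⌊t⌋ = 0 := Int.floor_eq_zero_iff.2 ⟨le_of_lt ht0, ht1⟩
      omega
    rw [hpred]
    refine ⟨rfl, ?_, ?_, ?_⟩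
    · rw [pathFun_diff hn a b, hfl]
      have hnum : (E p : ℝ) + (crossPt E p - (p:ℝ)) * ((E (p+1) : ℝ) - (E p : ℝ)) = 0 := by
        rw [hx]
        have : (p:ℝ) + t - p = t := by ring
        rw [this, htdef]
        field_simp
        ring
      rw [hnum]
      simp
    · show (0:ℝ) ≤ crossPt E p
      rw [hx]
      have : (0:ℝ) ≤ p := by exact_mod_cast hp0
      linarith
    · show crossPt E p < (n:ℝ)
      rw [hx]
      have : (p:ℝ) + 1 ≤ n := by exact_mod_cast hp1
      linarith
  set G : {p : ℤ // p ∈ cross} →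
      {q : ℝ × ℝ // q ∈ bigPath n k f ∧
        q ∈ (fun q : ℝ × ℝ => (q.1 + (b : ℝ), q.2 + (a : ℝ))) '' bigPath n k f ∧
        q.1 ∈ Set.Ico (0 : ℝ) (n : ℝ)} :=
    fun p => ⟨(crossPt E p.1, pathFun n k f (crossPt E p.1)), hGmem p.1 p.2⟩ with hGdef
  have hGfl : ∀ p : ℤ, p ∈ cross → ⌊crossPt E p⌋ = p := by
    intro p hp
    rw [hcrossdef, Finset.mem_filter] at hp
    obtain ⟨hden, ht0, ht1⟩ := crossPt_facts hp.2
    rw [show crossPt E p = (p:ℝ) + (E p : ℝ) / ((E p : ℝ) - (E (p+1) : ℝ)) from rfl,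
      Int.floor_intCast_add]
    have : ⌊(E p : ℝ) / ((E p : ℝ) - (E (p+1) : ℝ))⌋ = 0 :=
      Int.floor_eq_zero_iff.2 ⟨le_of_lt ht0, ht1⟩
    omega
  have hGinj : Function.Injective G := by
    intro p q hpq
    rw [hGdef] at hpq
    have h1 : crossPt E p.1 = crossPt E q.1 := by
      have := congrArg (fun z => z.1.1) hpq
      simpa using this
    have := congrArg Int.floor h1
    rw [hGfl p.1 p.2, hGfl q.1 q.2] at this
    exact Subtype.ext this
  have hGsurj : Function.Surjective G := by
    rintro ⟨q, hq⟩
    rw [hpred] at hq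
    obtain ⟨hq1, hq2, hq3, hq4⟩ := hq
    set x := q.1 with hxdef
    set p := ⌊x⌋ with hpdef
    have hu0 : 0 ≤ x - p := by
      have := Int.floor_le x; linarith
    have hu1 : x - p < 1 := by
      have := Int.lt_floor_add_one x; linarith
    -- numerator equation
    rw [pathFun_diff hn a b] at hq2
    rw [div_eq_zero_iff] at hq2
    have hnum : (E p : ℝ) + (x - p) * ((E (p+1) : ℝ) - (E p : ℝ)) = 0 := by
      rcases hq2 with h | h
      · exact h
      · exfalso; exact (by positivity : (0:ℝ) < (n:ℝ)).ne' h
    have hune : x - (p:ℝ) ≠ 0 := by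
      intro h0
      rw [h0, zero_mul, add_zero] at hnum
      exact hEnz p (by exact_mod_cast hnum)
    have hu0' : 0 < x - (p:ℝ) := lt_of_le_of_ne hu0 (Ne.symm hune)
    -- opposite signs
    have hsign : E p * E (p+1) < 0 := by
      rcases (hEnz p).lt_or_gt with h1 | h1 <;> rcases (hEnz (p+1)).lt_or_gt with h2 | h2
      · exfalso
        have c1 : (E p : ℝ) < 0 := by exact_mod_cast h1
        have c2 : (E (p+1) : ℝ) < 0 := by exact_mod_cast h2
        nlinarith
      · exact mul_neg_of_neg_of_pos h1 h2
      · exact mul_neg_iff.2 (Or.inl ⟨h1, h2⟩)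
      · exfalso
        have c1 : (0:ℝ) < (E p : ℝ) := by exact_mod_cast h1
        have c2 : (0:ℝ) < (E (p+1) : ℝ) := by exact_mod_cast h2
        nlinarith
    have hpmem : p ∈ cross := by
      rw [hcrossdef, Finset.mem_filter, Finset.mem_Ico]
      refine ⟨⟨?_, ?_⟩, hsign⟩
      · rw [hpdef]
        exact Int.floor_nonneg.2 hq3
      · have : (p : ℝ) ≤ x := Int.floor_le x
        have : (p : ℝ) < n := lt_of_le_of_lt this hq4
        exact_mod_cast this
    refine ⟨⟨p, hpmem⟩, ?_⟩
    -- show the points agree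
    have hxeq : crossPt E p = x := by
      obtain ⟨hden, -, -⟩ := crossPt_facts hsign
      rw [show crossPt E p = (p:ℝ) + (E p : ℝ) / ((E p : ℝ) - (E (p+1) : ℝ)) from rfl]
      have : (x - p) * ((E p : ℝ) - (E (p+1) : ℝ)) = (E p : ℝ) := by linarith [hnum]
      have h2 : x - p = (E p : ℝ) / ((E p : ℝ) - (E (p+1) : ℝ)) := by
        field_simp at this ⊢
        linarith
      linarith
    have hqeq : q = (x, pathFun n k f x) := by
      rw [Prod.ext_iff]
      exact ⟨rfl, hq1⟩
    rw [hGdef]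
    apply Subtype.ext
    simp only
    rw [hxeq]
    exact hqeq.symm
  have hbij : Function.Bijective G := ⟨hGinj, hGsurj⟩
  rw [← Nat.card_eq_of_bijective G hbij, Nat.card_eq_finsetCard]

end CardInter

section Resolve



variable {n k : ℕ} {f : ℤ → ℤ}

/-- generalized periodicity transport -/
lemma per_mul2 {φ : ℤ → ℤ} {A B : ℤ} (h : ∀ m : ℤ, φ (m + A) = φ m + B) (t : ℤ) (m : ℤ) :
    φ (m + t * A) = φ m + t * B := by
  induction t using Int.induction_on with
  | zero => simp
  | succ t ih =>
      have h1 : m + (t + 1 : ℤ) * A = (m + t * A) + A := by ring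
      rw [h1, h, ih]; ring
  | pred t ih =>
      have e1 : m + (-(t:ℤ)) * A = (m + (-(t:ℤ) - 1) * A) + A := by ring
      rw [e1, h] at ih
      have e2 : (-(t:ℤ)) * B - B = (-(t:ℤ) - 1) * B := by ring
      linarith

/-- The context of an inversion, in path coordinates. -/
structure Ctx (k n : ℕ) (f : ℤ → ℤ) (i j p q u v : ℤ) : Prop where
  hf : IsTheta k n f
  hp0 : 0 ≤ p
  hpn : p < n
  hq0 : 0 ≤ q
  hqn : q < n
  hi : i = bigPt n k f p + n * u
  hj : j = bigPt n k f q + n * v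
  hij : i < j
  hfij : f j < f i

namespace Ctx

variable {i j p q u v : ℤ}

lemma hn (C : Ctx k n f i j p q u v) : 0 < n := theta_pos C.hf

lemma res_ne (C : Ctx k n f i j p q u v) : i % (n:ℤ) ≠ j % (n:ℤ) := by
  intro h
  obtain ⟨t, ht⟩ := Int.ModEq.dvd h
  rw [mul_comm] at ht
  have hfj : f (i + t * n) = f i + t * n := per_mul (theta_per C.hf) t i
  rw [show i + t * (n:ℤ) = j by omega] at hfj
  have : 0 < t * (n:ℤ) := by
    have := C.hij; omega
  have := C.hfij
  omega

lemma ires (C : Ctx k n f i j p q u v) : i % (n:ℤ) = bigPt n k f p % n := by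
  rw [C.hi, Int.add_mul_emod_self_left]

lemma jres (C : Ctx k n f i j p q u v) : j % (n:ℤ) = bigPt n k f q % n := by
  rw [C.hj, Int.add_mul_emod_self_left]

lemma pq_ne (C : Ctx k n f i j p q u v) : p ≠ q := by
  intro h
  apply C.res_ne
  rw [C.ires, C.jres, h]

/-- the cycle length parameter -/
lemma n1_range (C : Ctx k n f i j p q u v) : 1 ≤ (p - q) % (n:ℤ) ∧ (p - q) % (n:ℤ) ≤ (n:ℤ) - 1 := by
  have hn := C.hn
  have h0 : 0 ≤ (p - q) % (n:ℤ) := Int.emod_nonneg _ (by omega)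
  have h1 : (p - q) % (n:ℤ) < n := Int.emod_lt_of_pos _ (by omega)
  have hne : (p - q) % (n:ℤ) ≠ 0 := by
    intro h
    have hdvd : (n:ℤ) ∣ (p - q) := Int.dvd_of_emod_eq_zero h
    obtain ⟨t, ht⟩ := hdvd
    have hp := C.hp0; have hp' := C.hpn; have hq := C.hq0; have hq' := C.hqn
    have hne := C.pq_ne
    have ht0 : t = 0 := by
      rcases lt_trichotomy t 0 with h' | h' | h'
      · nlinarith
      · exact h'
      · nlinarith
    rw [ht0, mul_zero] at ht
    omega
  omega

end Ctx

lemma resolve_per (hf : IsTheta k n f) (i j : ℤ) (m : ℤ) :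
    resolve n f i j (m + n) = resolve n f i j m + n := by
  unfold resolve
  have h1 : (m + (n:ℤ)) % n = m % n := by
    rw [Int.add_emod, Int.emod_self, add_zero, Int.emod_emod_of_dvd _ dvd_rfl]
  rw [h1]
  split
  · ring
  · split
    · ring
    · exact theta_per hf m

lemma resolve_bounded {i j : ℤ} (hf : IsTheta k n f) (hij : i < j) (hfij : f j < f i) :
    IsBoundedFn n (resolve n f i j) := by
  intro m
  unfold resolve
  have hb := theta_bdd hf
  have h1 := (hb i).1; have h2 := (hb i).2
  have h3 := (hb j).1; have h4 := (hb j).2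
  have h5 := (hb m).1; have h6 := (hb m).2
  split
  · constructor <;> omega
  · split
    · constructor <;> omega
    · constructor <;> omega

end Resolve

namespace Ctx
variable {n k : ℕ} {f : ℤ → ℤ} {i j p q u v : ℤ}

lemma fres_ne (C : Ctx k n f i j p q u v) : f i % (n:ℤ) ≠ f j % (n:ℤ) := by
  intro h
  exact C.res_ne (res_eq_of_f_res_eq (theta_inj C.hf) (theta_per C.hf) h)

lemma resolve_eq_sigma_comp (C : Ctx k n f i j p q u v) (m : ℤ) :
    resolve n f i j m =
      (fun m' => if m' % (n:ℤ) = f i % (n:ℤ) then m' + (f j - f i)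
        else if m' % (n:ℤ) = f j % (n:ℤ) then m' + (f i - f j) else m') (f m) := by
  have hper := theta_per C.hf
  have hinj := theta_inj C.hf
  unfold resolve
  simp only
  by_cases h1 : m % (n:ℤ) = i % n
  · rw [if_pos h1]
    have hf1 : f m % (n:ℤ) = f i % n := f_res_eq_of_res_eq hper h1
    rw [if_pos hf1]
    obtain ⟨t, ht⟩ := Int.ModEq.dvd (h1.symm : i % (n:ℤ) = m % n)
    rw [mul_comm] at ht
    have : f (i + t * n) = f i + t * n := per_mul hper t i
    rw [show i + t * (n:ℤ) = m by omega] at this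
    omega
  · rw [if_neg h1]
    by_cases h2 : m % (n:ℤ) = j % n
    · rw [if_pos h2]
      have hf2 : f m % (n:ℤ) = f j % n := f_res_eq_of_res_eq hper h2
      have hf1 : ¬ (f m % (n:ℤ) = f i % n) := by
        intro h
        exact h1 (res_eq_of_f_res_eq hinj hper h)
      rw [if_neg hf1, if_pos hf2]
      obtain ⟨t, ht⟩ := Int.ModEq.dvd (h2.symm : j % (n:ℤ) = m % n)
      rw [mul_comm] at ht
      have : f (j + t * n) = f j + t * n := per_mul hper t j
      rw [show j + t * (n:ℤ) = m by omega] at this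
      omega
    · rw [if_neg h2]
      have hf1 : ¬ (f m % (n:ℤ) = f i % n) := fun h => h1 (res_eq_of_f_res_eq hinj hper h)
      have hf2 : ¬ (f m % (n:ℤ) = f j % n) := fun h => h2 (res_eq_of_f_res_eq hinj hper h)
      rw [if_neg hf1, if_neg hf2]

lemma ginj (C : Ctx k n f i j p q u v) : Function.Injective (resolve n f i j) := by
  set σ : ℤ → ℤ := fun m' => if m' % (n:ℤ) = f i % (n:ℤ) then m' + (f j - f i)
      else if m' % (n:ℤ) = f j % (n:ℤ) then m' + (f i - f j) else m' with hσ
  have hfir := C.fres_ne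
  have hinv : ∀ m, σ (σ m) = m := by
    intro m
    by_cases h1 : m % (n:ℤ) = f i % n
    · have e1 : σ m = m + (f j - f i) := by rw [hσ]; simp only [if_pos h1]
      have e2 : (m + (f j - f i)) % (n:ℤ) = f j % n := by
        have h2 : (m + (f j - f i)) % (n:ℤ) = (f i + (f j - f i)) % n :=
          Int.ModEq.add_right _ h1
        rwa [show f i + (f j - f i) = f j by ring] at h2
      rw [e1, hσ]
      simp only
      rw [if_neg (by rw [e2]; exact fun h => hfir h.symm), if_pos e2]
      ring
    · by_cases h2 : m % (n:ℤ) = f j % n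
      · have e1 : σ m = m + (f i - f j) := by rw [hσ]; simp only [if_neg h1, if_pos h2]
        have e2 : (m + (f i - f j)) % (n:ℤ) = f i % n := by
          have h3 : (m + (f i - f j)) % (n:ℤ) = (f j + (f i - f j)) % n :=
            Int.ModEq.add_right _ h2
          rwa [show f j + (f i - f j) = f i by ring] at h3
        rw [e1, hσ]
        simp only
        rw [if_pos e2]
        ring
      · have e1 : σ m = m := by rw [hσ]; simp only [if_neg h1, if_neg h2]
        rw [e1, hσ]
        simp only
        rw [if_neg h1, if_neg h2]
  have hσinj : Function.Injective σ := Function.LeftInverse.injective hinv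
  have hcomp : resolve n f i j = σ ∘ f := by
    funext m
    exact C.resolve_eq_sigma_comp m
  rw [hcomp]
  exact hσinj.comp (theta_inj C.hf)

end Ctx

section OrbitHelpers
variable {n k : ℕ} {f : ℤ → ℤ}

lemma dvd_zero_close {x : ℤ} (h : (n:ℤ) ∣ x) (h1 : -(n:ℤ) < x) (h2 : x < n) : x = 0 := by
  obtain ⟨t, ht⟩ := h
  have hn : (0:ℤ) < n := by omega
  have ht1 : t < 1 := by nlinarith
  have ht2 : -1 < t := by nlinarith
  have ht0 : t = 0 := by omega
  rw [ht0, mul_zero] at ht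
  omega

lemma bigPt_res_congr (hf : IsTheta k n f) {x y : ℤ} (h : x % (n:ℤ) = y % n) :
    bigPt n k f x % (n:ℤ) = bigPt n k f y % n := by
  have hn := theta_pos hf
  rw [bigPt_res_period hn x, bigPt_res_period hn y, h]

end OrbitHelpers

namespace Ctx
variable {n k : ℕ} {f : ℤ → ℤ} {i j p q u v : ℤ}

lemma g_at_i (C : Ctx k n f i j p q u v) : resolve n f i j i = f j := by
  unfold resolve
  rw [if_pos rfl]
  ring

lemma orbit_pts (C : Ctx k n f i j p q u v) : ∀ r : ℕ, 1 ≤ r → (r:ℤ) ≤ (p - q) % (n:ℤ) →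
    (resolve n f i j)^[r] i = bigPt n k f (q + r) + n * v := by
  have hn := C.hn
  have hn1 := C.n1_range
  have hpq : p - q = (p - q) % (n:ℤ) + ((p - q) / n) * n := by
    have := Int.emod_add_mul_ediv (p - q) (n:ℤ)
    linarith [mul_comm ((p - q) / (n:ℤ)) (n:ℤ)]
  intro r
  induction r with
  | zero => intro h; exact absurd h (by omega)
  | succ r ih =>
    intro _ hr1
    by_cases hr0 : r = 0
    · subst hr0
      norm_num [Function.iterate_one]
      rw [C.g_at_i, C.hj]
      have e1 : bigPt n k f q + n * v = bigPt n k f q + v * n := by ring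
      rw [e1, per_mul (theta_per C.hf), ← bigPt_succ C.hf]
      ring
    · have hr1' : 1 ≤ r := by omega
      have hrle : (r:ℤ) ≤ (p - q) % (n:ℤ) := by push_cast at hr1 ⊢; omega
      have ih' := ih hr1' hrle
      rw [Function.iterate_succ_apply', ih']
      -- show resolve acts as f on this point
      set m := bigPt n k f (q + r) + n * v with hm
      have hmres : m % (n:ℤ) = bigPt n k f (q + r) % n := by
        rw [hm, Int.add_mul_emod_self_left]
      have hne1 : ¬ (m % (n:ℤ) = i % n) := by
        rw [hmres, C.ires]
        intro h
        have h2 := bigPt_res_inj C.hf h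
        have h3 : (n:ℤ) ∣ (p - (q + r)) := Int.ModEq.dvd h2
        have h4 : (n:ℤ) ∣ ((p - q) % (n:ℤ) - r) := by
          have : (p - q) % (n:ℤ) - r = (p - (q + r)) - ((p - q) / n) * n := by omega
          rw [this]
          exact dvd_sub h3 (dvd_mul_left _ _)
        have h5 : (p - q) % (n:ℤ) - r = 0 := by
          apply dvd_zero_close h4 <;> push_cast <;> omega
        push_cast at hr1
        omega
      have hne2 : ¬ (m % (n:ℤ) = j % n) := by
        rw [hmres, C.jres]
        intro h
        have h2 := bigPt_res_inj C.hf h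
        have h3 : (n:ℤ) ∣ (q - (q + r)) := Int.ModEq.dvd h2
        have h4 : (n:ℤ) ∣ (r:ℤ) := by
          have : (r:ℤ) = -(q - (q + r)) := by ring
          rw [this]
          exact dvd_neg.mpr h3
        have h5 : (r:ℤ) = 0 := by
          apply dvd_zero_close h4 <;> push_cast <;> omega
        omega
      have hgm : resolve n f i j m = f m := by
        unfold resolve
        rw [if_neg hne1, if_neg hne2]
      rw [hgm, hm]
      have e1 : bigPt n k f (q + r) + n * v = bigPt n k f (q + r) + v * n := by ring
      rw [e1, per_mul (theta_per C.hf), ← bigPt_succ C.hf]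
      have e2 : q + (r:ℤ) + 1 = q + ((r:ℕ) + 1 : ℕ) := by push_cast; ring
      rw [← e2]
      ring

lemma orbit_ret (C : Ctx k n f i j p q u v) :
    (resolve n f i j)^[((p - q) % (n:ℤ)).toNat] i =
      i + n * ((v - u) - ((p - q) / (n:ℤ)) * k) := by
  have hn := C.hn
  have hn1 := C.n1_range
  have h1 := C.orbit_pts ((p - q) % (n:ℤ)).toNat (by omega) (by omega)
  rw [h1]
  have hpq : q + ((((p - q) % (n:ℤ))).toNat : ℤ) = p + (-((p - q) / n)) * n := by
    have := Int.emod_add_mul_ediv (p - q) (n:ℤ)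
    have e : ((((p - q) % (n:ℤ))).toNat : ℤ) = (p - q) % (n:ℤ) := by omega
    rw [e]
    linarith [mul_comm ((p - q) / (n:ℤ)) (n:ℤ), mul_comm (n:ℤ) ((p - q) / (n:ℤ))]
  rw [hpq, bigPt_shift hn]
  have hi := C.hi
  have : bigPt n k f p = i - n * u := by omega
  rw [this]
  ring

lemma orbit_per (C : Ctx k n f i j p q u v) (s : ℕ) :
    (resolve n f i j)^[s + ((p - q) % (n:ℤ)).toNat] i =
      (resolve n f i j)^[s] i + n * ((v - u) - ((p - q) / (n:ℤ)) * k) := by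
  induction s with
  | zero => simpa using C.orbit_ret
  | succ s ih =>
    have e1 : s + 1 + ((p - q) % (n:ℤ)).toNat = (s + ((p - q) % (n:ℤ)).toNat) + 1 := by omega
    rw [e1, Function.iterate_succ_apply', ih, Function.iterate_succ_apply']
    set x := (resolve n f i j)^[s] i
    set K := ((v - u) - ((p - q) / (n:ℤ)) * k)
    have e2 : x + (n:ℤ) * K = x + K * n := by ring
    rw [e2, per_mul (fun m => resolve_per C.hf i j m) K x]
    ring

end Ctx

namespace Ctx
variable {n k : ℕ} {f : ℤ → ℤ} {i j p q u v : ℤ}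

lemma orbit_res (C : Ctx k n f i j p q u v) (r : ℕ)
    (hr : (r:ℤ) ≤ (p - q) % (n:ℤ)) :
    (resolve n f i j)^[r] i % (n:ℤ) =
      bigPt n k f (q + (if r = 0 then (p - q) % (n:ℤ) else (r:ℤ))) % n := by
  have hn := C.hn
  have hn1 := C.n1_range
  by_cases hr0 : r = 0
  · subst hr0
    simp only [Function.iterate_zero, id_eq, if_pos]
    rw [C.ires]
    apply bigPt_res_congr C.hf
    have hpq : p - q = (p - q) % (n:ℤ) + ((p - q) / n) * n := by
      have := Int.emod_add_mul_ediv (p - q) (n:ℤ)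
      linarith [mul_comm ((p - q) / (n:ℤ)) (n:ℤ)]
    have e : q + (p - q) % (n:ℤ) = p + (-((p - q) / n)) * n := by linarith
    rw [e, Int.add_mul_emod_self_right]
  · rw [if_neg hr0, C.orbit_pts r (by omega) hr, Int.add_mul_emod_self_left]

lemma orbit_inj (C : Ctx k n f i j p q u v) : ∀ r s : ℕ,
    r < ((p - q) % (n:ℤ)).toNat → s < ((p - q) % (n:ℤ)).toNat →
    (resolve n f i j)^[r] i % (n:ℤ) = (resolve n f i j)^[s] i % (n:ℤ) → r = s := by
  have hn := C.hn
  have hn1 := C.n1_range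
  intro r s hr hs h
  rw [C.orbit_res r (by omega), C.orbit_res s (by omega)] at h
  have h2 := bigPt_res_inj C.hf h
  set r' : ℤ := if r = 0 then (p - q) % (n:ℤ) else (r:ℤ) with hr'
  set s' : ℤ := if s = 0 then (p - q) % (n:ℤ) else (s:ℤ) with hs'
  have hd : (n:ℤ) ∣ (s' - r') := by
    have := Int.ModEq.dvd h2
    have e : s' - r' = (q + s') - (q + r') := by ring
    rw [e]
    exact this
  have hrb : 1 ≤ r' ∧ r' ≤ (n:ℤ) - 1 := by
    rw [hr']; split <;> omega
  have hsb : 1 ≤ s' ∧ s' ≤ (n:ℤ) - 1 := by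
    rw [hs']; split <;> omega
  have h0 : s' - r' = 0 := dvd_zero_close hd (by omega) (by omega)
  have hrs : r' = s' := by omega
  rw [hr', hs'] at hrs
  by_cases h1 : r = 0 <;> by_cases h2 : s = 0 <;> simp [h1, h2] at hrs <;> omega

lemma orbit_eq (C : Ctx k n f i j p q u v) :
    orbitF n (resolve n f i j) i =
      (Finset.range ((p - q) % (n:ℤ)).toNat).image
        (fun r => (resolve n f i j)^[r] i % (n:ℤ)) := by
  have hn := C.hn
  have hn1 := C.n1_range
  set N := ((p - q) % (n:ℤ)).toNat with hN
  set g := resolve n f i j with hg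
  apply Finset.Subset.antisymm
  · intro x hx
    rw [orbitF, Finset.mem_image] at hx
    obtain ⟨r, hrr, rfl⟩ := hx
    clear hrr
    induction r using Nat.strong_induction_on with
    | _ r ih =>
      by_cases hrN : r < N
      · exact Finset.mem_image.2 ⟨r, Finset.mem_range.2 hrN, rfl⟩
      · have hNle : N ≤ r := by omega
        have e1 : r = (r - N) + N := by omega
        have e2 := C.orbit_per (r - N)
        rw [← hN, ← hg] at e2
        have e3 : g^[r] i % (n:ℤ) = g^[r - N] i % n := by
          conv_lhs => rw [e1]
          rw [e2]
          have : g^[r - N] i + (n:ℤ) * (v - u - (p - q) / ↑n * ↑k) =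
              g^[r - N] i + (v - u - (p - q) / ↑n * ↑k) * n := by ring
          rw [this, Int.add_mul_emod_self_right]
        rw [e3]
        exact ih (r - N) (by omega)
  · apply Finset.image_subset_image
    intro x hx
    rw [Finset.mem_range] at hx ⊢
    omega

lemma orbit_card (C : Ctx k n f i j p q u v) :
    ((orbitF n (resolve n f i j) i).card : ℤ) = (p - q) % (n:ℤ) := by
  have hn := C.hn
  have hn1 := C.n1_range
  rw [C.orbit_eq, Finset.card_image_of_injOn, Finset.card_range]
  · omega
  · intro r hr s hs h
    simp only [Finset.coe_range, Set.mem_Iio] at hr hs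
    exact C.orbit_inj r s hr hs h

lemma orbit_closed (C : Ctx k n f i j p q u v) (m : ℤ)
    (hm : m % (n:ℤ) ∈ orbitF n (resolve n f i j) i) :
    (resolve n f i j) m % (n:ℤ) ∈ orbitF n (resolve n f i j) i := by
  have hn := C.hn
  have hn1 := C.n1_range
  set N := ((p - q) % (n:ℤ)).toNat with hN
  set g := resolve n f i j with hg
  rw [C.orbit_eq] at hm ⊢
  rw [Finset.mem_image] at hm
  obtain ⟨r, hr, hres⟩ := hm
  rw [Finset.mem_range] at hr
  have hstep : g m % (n:ℤ) = g^[r + 1] i % n := by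
    rw [Function.iterate_succ_apply']
    exact f_res_eq_of_res_eq (fun m' => resolve_per C.hf i j m') hres.symm
  by_cases hc : r + 1 < N
  · exact Finset.mem_image.2 ⟨r + 1, Finset.mem_range.2 hc, hstep.symm⟩
  · have hrN : r + 1 = N := by omega
    have e2 := C.orbit_per 0
    rw [← hN, ← hg] at e2
    simp only [Nat.zero_add, Function.iterate_zero, id_eq] at e2
    have e3 : g^[N] i % (n:ℤ) = i % n := by
      rw [e2]
      have : i + (n:ℤ) * (v - u - (p - q) / ↑n * ↑k) =
          i + (v - u - (p - q) / ↑n * ↑k) * n := by ring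
      rw [this, Int.add_mul_emod_self_right]
    rw [hstep, hrN, e3]
    exact Finset.mem_image.2 ⟨0, Finset.mem_range.2 (by omega), by simp⟩

end Ctx

section BlockFun
variable {n N : ℕ}

/-- the canonical order preserving labeling of a union of `N` residue classes -/
def blockFun (n N : ℕ) (ι : ℕ → ℤ) : ℤ → ℤ := fun m =>
  ι ((m % (N:ℤ)).toNat) + n * (m / N)

lemma blockFun_strictMono (hN : 0 < N) {ι : ℕ → ℤ}
    (hmono : ∀ r s : ℕ, r < s → s < N → ι r < ι s)
    (hb : ∀ r : ℕ, r < N → 0 ≤ ι r ∧ ι r < n) :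
    StrictMono (blockFun n N ι) := by
  intro m m' hmm
  unfold blockFun
  set a := m / (N:ℤ) with ha
  set r := m % (N:ℤ) with hr
  set a' := m' / (N:ℤ) with ha'
  set r' := m' % (N:ℤ) with hr'
  have hNz : (0:ℤ) < N := by exact_mod_cast hN
  have hr0 : 0 ≤ r := Int.emod_nonneg _ (by omega)
  have hrN : r < N := Int.emod_lt_of_pos _ hNz
  have hr0' : 0 ≤ r' := Int.emod_nonneg _ (by omega)
  have hrN' : r' < N := Int.emod_lt_of_pos _ hNz
  have hm : m = N * a + r := by
    have := Int.emod_add_mul_ediv m (N:ℤ); linarith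
  have hm' : m' = N * a' + r' := by
    have := Int.emod_add_mul_ediv m' (N:ℤ); linarith
  have hbr := hb r.toNat (by omega)
  have hbr' := hb r'.toNat (by omega)
  rcases lt_trichotomy a a' with hc | hc | hc
  · have h1 : ι (r.toNat) + (n:ℤ) * a < n * (a + 1) := by
      have := hbr.2; push_cast; linarith
    have h2 : (n:ℤ) * (a + 1) ≤ n * a' := by
      apply mul_le_mul_of_nonneg_left (by omega) (by positivity)
    have h3 : (n:ℤ) * a' ≤ ι (r'.toNat) + n * a' := by
      have := hbr'.1; linarith
    linarith
  · have hNa : (N:ℤ) * a = N * a' := by rw [hc]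
    have hna : (n:ℤ) * a = n * a' := by rw [hc]
    have hrr : r < r' := by omega
    have h4 := hmono r.toNat r'.toNat (by omega) (by omega)
    linarith
  · exfalso
    have h1 : (N:ℤ) * (a' + 1) ≤ N * a := by
      apply mul_le_mul_of_nonneg_left (by omega) (by positivity)
    have h2 : (N:ℤ) * a' + N ≤ N * a := by linarith
    linarith

lemma blockFun_shift (hN : 0 < N) (ι : ℕ → ℤ) (m : ℤ) :
    blockFun n N ι (m + N) = blockFun n N ι m + n := by
  unfold blockFun
  have h1 : (m + (N:ℤ)) % N = m % N := by
    rw [Int.add_emod, Int.emod_self, add_zero, Int.emod_emod_of_dvd _ dvd_rfl]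
  have h2 : (m + (N:ℤ)) / N = m / N + 1 := by
    rw [show m + (N:ℤ) = m + 1 * N by ring,
      Int.add_mul_ediv_right _ _ (by exact_mod_cast hN.ne' : (N:ℤ) ≠ 0)]
  rw [h1, h2]
  ring

lemma blockFun_range (hn : 0 < n) (hN : 0 < N) {ι : ℕ → ℤ} {O : Finset ℤ}
    (hb : ∀ r : ℕ, r < N → 0 ≤ ι r ∧ ι r < n)
    (hO : ∀ x : ℤ, x ∈ O ↔ ∃ r : ℕ, r < N ∧ ι r = x) :
    Set.range (blockFun n N ι) = {m : ℤ | m % (n:ℤ) ∈ O} := by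
  have hNz : (0:ℤ) < N := by exact_mod_cast hN
  ext m
  simp only [Set.mem_range, Set.mem_setOf_eq]
  constructor
  · rintro ⟨m', rfl⟩
    unfold blockFun
    set r := (m' % (N:ℤ)).toNat with hr
    have hrN : r < N := by
      have h1 : m' % (N:ℤ) < N := Int.emod_lt_of_pos _ hNz
      have h2 : 0 ≤ m' % (N:ℤ) := Int.emod_nonneg _ (by omega)
      omega
    have hbr := hb r hrN
    have h3 : (ι r + (n:ℤ) * (m' / N)) % n = ι r % n := by
      rw [Int.add_mul_emod_self_left]
    rw [h3, Int.emod_eq_of_lt hbr.1 hbr.2]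
    exact (hO _).2 ⟨r, hrN, rfl⟩
  · intro hm
    obtain ⟨r, hrN, hιr⟩ := (hO _).1 hm
    refine ⟨(r:ℤ) + N * (m / n), ?_⟩
    unfold blockFun
    have h1 : ((r:ℤ) + N * (m / n)) % N = r := by
      rw [Int.add_mul_emod_self_left, Int.emod_eq_of_lt (by omega) (by exact_mod_cast hrN)]
    have h2 : ((r:ℤ) + N * (m / n)) / N = m / n := by
      rw [Int.add_mul_ediv_left _ _ (by omega : (N:ℤ) ≠ 0),
        Int.ediv_eq_zero_of_lt (by omega) (by exact_mod_cast hrN), zero_add]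
    rw [h1, h2]
    have h3 : ((r:ℤ)).toNat = r := by omega
    rw [h3, hιr]
    have := Int.emod_add_mul_ediv m (n:ℤ)
    linarith [mul_comm (m / (n:ℤ)) (n:ℤ)]
end BlockFun

namespace Ctx
variable {n k : ℕ} {f : ℤ → ℤ} {i j p q u v : ℤ}

lemma orbit_card_pos (C : Ctx k n f i j p q u v) :
    0 < (orbitF n (resolve n f i j) i).card := by
  have := C.orbit_card
  have := C.n1_range
  omega

lemma relabel_exists (C : Ctx k n f i j p q u v) :
    ∃ g₁ : ℤ → ℤ, IsRelabelOn n (resolve n f i j)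
      {m : ℤ | m % (n:ℤ) ∈ orbitF n (resolve n f i j) i}
      (orbitF n (resolve n f i j) i).card g₁ := by
  classical
  have hn := C.hn
  have hn1 := C.n1_range
  have hcard := C.orbit_card
  set g := resolve n f i j with hg
  set O := orbitF n g i with hO
  set N := O.card with hN
  have hNpos : 0 < N := C.orbit_card_pos
  have horbB : ∀ x ∈ O, 0 ≤ x ∧ x < (n:ℤ) := by
    intro x hx
    rw [hO, orbitF, Finset.mem_image] at hx
    obtain ⟨r, -, rfl⟩ := hx
    exact ⟨Int.emod_nonneg _ (by omega), Int.emod_lt_of_pos _ (by omega)⟩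
  set e := O.orderIsoOfFin rfl with he
  set ι : ℕ → ℤ := fun r => if h : r < N then (e ⟨r, h⟩ : ℤ) else 0 with hι
  have hιmem : ∀ r : ℕ, (h : r < N) → ι r ∈ O := by
    intro r h
    rw [hι]
    simp only [dif_pos h]
    exact (e ⟨r, h⟩).2
  have hmono : ∀ r s : ℕ, r < s → s < N → ι r < ι s := by
    intro r s hrs hsN
    have hrN : r < N := lt_trans hrs hsN
    rw [hι]
    simp only [dif_pos hrN, dif_pos hsN]
    have h1 : (⟨r, hrN⟩ : Fin N) < ⟨s, hsN⟩ := by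
      rw [Fin.mk_lt_mk]; exact hrs
    have h2 : e ⟨r, hrN⟩ < e ⟨s, hsN⟩ := by
      rw [OrderIso.lt_iff_lt]; exact h1
    exact_mod_cast h2
  have hbι : ∀ r : ℕ, r < N → 0 ≤ ι r ∧ ι r < (n:ℤ) := by
    intro r h
    exact horbB _ (hιmem r h)
  have hOiff : ∀ x : ℤ, x ∈ O ↔ ∃ r : ℕ, r < N ∧ ι r = x := by
    intro x
    constructor
    · intro hx
      set y : {z // z ∈ O} := ⟨x, hx⟩ with hy
      refine ⟨(e.symm y : Fin N).val, (e.symm y).isLt, ?_⟩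
      rw [hι]
      simp only [dif_pos (e.symm y).isLt]
      have : e ⟨(e.symm y).val, (e.symm y).isLt⟩ = e (e.symm y) := by
        congr 1
      rw [dif_pos (e.symm y).isLt, this, OrderIso.apply_symm_apply]
    · rintro ⟨r, hr, rfl⟩
      exact hιmem r hr
  have hrange : Set.range (blockFun n N ι) = {m : ℤ | m % (n:ℤ) ∈ O} :=
    blockFun_range hn hNpos hbι hOiff
  have hclosed : ∀ m : ℤ, ∃ m', blockFun n N ι m' = g (blockFun n N ι m) := by
    intro m
    have h1 : blockFun n N ι m ∈ {m : ℤ | m % (n:ℤ) ∈ O} := by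
      rw [← hrange]; exact Set.mem_range_self m
    have h2 : g (blockFun n N ι m) ∈ {m : ℤ | m % (n:ℤ) ∈ O} := C.orbit_closed _ h1
    rw [← hrange] at h2
    exact h2
  choose g₁ hg₁ using hclosed
  exact ⟨g₁, blockFun n N ι, blockFun_strictMono hNpos hmono hbι,
    fun m => blockFun_shift hNpos ι m, hrange, fun m => (hg₁ m).symm⟩

lemma relabel_winding (C : Ctx k n f i j p q u v) {g₁ : ℤ → ℤ}
    (hrel : IsRelabelOn n (resolve n f i j)
      {m : ℤ | m % (n:ℤ) ∈ orbitF n (resolve n f i j) i}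
      (orbitF n (resolve n f i j) i).card g₁) :
    ((winding (orbitF n (resolve n f i j) i).card g₁ : ℤ)) =
      (v - u) - ((p - q) / (n:ℤ)) * k := by
  classical
  have hn := C.hn
  have hn1 := C.n1_range
  have hcard := C.orbit_card
  set g := resolve n f i j with hg
  set O := orbitF n g i with hO
  set N := O.card with hN
  have hNpos : 0 < N := C.orbit_card_pos
  have hNtoNat : N = ((p - q) % (n:ℤ)).toNat := by omega
  set K := (v - u) - ((p - q) / (n:ℤ)) * k with hK
  obtain ⟨φ, hmono, hshift, hrange, hcomm⟩ := hrel
  have hφinj : Function.Injective φ := hmono.injective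
  have hshiftZ : ∀ (t : ℤ) (m : ℤ), φ (m + t * N) = φ m + t * n := fun t m =>
    per_mul2 hshift t m
  have hgper : ∀ m : ℤ, g (m + (n:ℤ)) = g m + n := fun m => resolve_per C.hf i j m
  have hper1 : ∀ m : ℤ, g₁ (m + (N:ℤ)) = g₁ m + N := by
    intro m
    apply hφinj
    rw [← hcomm, hshift, hgper, hcomm, hshift]
  have hbdd1 : IsBoundedFn N g₁ := by
    intro m
    have hb := resolve_bounded C.hf C.hij C.hfij (φ m)
    rw [← hg] at hb
    have h1 : φ m ≤ φ (g₁ m) := by rw [← hcomm]; exact hb.1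
    have h2 : φ (g₁ m) ≤ φ (m + N) := by
      rw [hshift, ← hcomm]; exact hb.2
    exact ⟨(hmono.le_iff_le).1 h1, (hmono.le_iff_le).1 h2⟩
  have hinj1 : Function.Injective g₁ := by
    intro x y hxy
    apply hφinj
    apply C.ginj
    show resolve n f i j (φ x) = resolve n f i j (φ y)
    rw [← hg, hcomm, hcomm, hxy]
  -- base point
  have hiS : i ∈ {m : ℤ | m % (n:ℤ) ∈ O} := by
    rw [Set.mem_setOf_eq, hO, orbitF]
    exact Finset.mem_image.2 ⟨0, Finset.mem_range.2 hn, by simp⟩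
  rw [← hrange] at hiS
  obtain ⟨m₀, hm₀⟩ := hiS
  have hiter : ∀ r : ℕ, φ (g₁^[r] m₀) = g^[r] i := by
    intro r
    induction r with
    | zero => simpa using hm₀
    | succ r ih =>
      rw [Function.iterate_succ_apply', Function.iterate_succ_apply', ← hcomm, ih]
  -- residue transfer
  have hφres : ∀ a' : ℤ, φ a' % (n:ℤ) = φ (a' % N) % n := by
    intro a'
    have h1 : a' = a' % N + (a' / N) * N := by
      have := Int.emod_add_mul_ediv a' (N:ℤ)
      linarith [mul_comm (a' / (N:ℤ)) (N:ℤ)]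
    conv_lhs => rw [h1]
    rw [hshiftZ, Int.add_mul_emod_self_right]
  have hres1 : ∀ a' b' : ℤ, φ a' % (n:ℤ) = φ b' % n → a' % (N:ℤ) = b' % N := by
    intro a' b' h
    rw [hφres a', hφres b'] at h
    have ha0 : 0 ≤ a' % (N:ℤ) := Int.emod_nonneg _ (by omega)
    have haN : a' % (N:ℤ) < N := Int.emod_lt_of_pos _ (by omega)
    have hb0 : 0 ≤ b' % (N:ℤ) := Int.emod_nonneg _ (by omega)
    have hbN : b' % (N:ℤ) < N := Int.emod_lt_of_pos _ (by omega)
    -- both φ-values lie in a window of length n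
    have hN' : φ ((N:ℕ):ℤ) = φ 0 + n := by
      have h' := hshift 0
      rwa [zero_add] at h'
    have w1 : φ 0 ≤ φ (a' % N) := hmono.le_iff_le.2 ha0
    have w2 : φ (a' % N) < φ 0 + n := by
      have h3 : φ (a' % N) < φ ((N:ℕ):ℤ) := hmono haN
      omega
    have w3 : φ 0 ≤ φ (b' % N) := hmono.le_iff_le.2 hb0
    have w4 : φ (b' % N) < φ 0 + n := by
      have h3 : φ (b' % N) < φ ((N:ℕ):ℤ) := hmono hbN
      omega
    exact hφinj (eq_of_res_eq_close h (by omega) (by omega))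
  -- residues of the g₁ orbit are distinct
  have hresorb : ∀ r s : ℕ, r < N → s < N →
      g₁^[r] m₀ % (N:ℤ) = g₁^[s] m₀ % N → r = s := by
    intro r s hr hs h
    apply C.orbit_inj r s (by omega) (by omega)
    rw [← hiter r, ← hiter s] at *
    rw [hφres (g₁^[r] m₀), hφres (g₁^[s] m₀), h]
  -- the two sum formulas
  have hdisp := iter_disp hNpos hper1 m₀ hresorb
  have hsum := sum_disp hinj1 hper1 hbdd1
  rw [hsum] at hdisp
  -- compute the return value
  have hret : g₁^[N] m₀ = m₀ + K * N := by
    apply hφinj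
    rw [hiter N]
    have h1 : g^[N] i = i + (n:ℤ) * K := by
      rw [hNtoNat]
      exact C.orbit_ret
    rw [h1, hshiftZ K m₀, hm₀]
    ring
  rw [hret] at hdisp
  have h2 : K * N = (N:ℤ) * winding N g₁ := by linarith
  have hNne : (N:ℤ) ≠ 0 := by omega
  have h3 : (N:ℤ) * K = (N:ℤ) * winding N g₁ := by linarith [mul_comm K (N:ℤ)]
  exact (mul_left_cancel₀ hNne h3).symm

lemma resParams_cast (C : Ctx k n f i j p q u v) :
    ((resParamsAt n (resolve n f i j) i).1 : ℤ) = (v - u) - ((p - q) / (n:ℤ)) * k ∧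
    ((resParamsAt n (resolve n f i j) i).2 : ℤ) = (p - q) % (n:ℤ) := by
  constructor
  · obtain ⟨g₁0, hrel0⟩ := C.relabel_exists
    have h0 := C.relabel_winding hrel0
    set W := winding (orbitF n (resolve n f i j) i).card g₁0 with hW
    have hset : {k₁ : ℕ | ∃ g₁ : ℤ → ℤ,
        IsRelabelOn n (resolve n f i j)
          {m : ℤ | m % (n:ℤ) ∈ orbitF n (resolve n f i j) i}
          (orbitF n (resolve n f i j) i).card g₁ ∧
        winding (orbitF n (resolve n f i j) i).card g₁ = k₁} = {W} := by
      ext w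
      simp only [Set.mem_setOf_eq, Set.mem_singleton_iff]
      constructor
      · rintro ⟨g₁, hrel, rfl⟩
        have := C.relabel_winding hrel
        rw [← h0] at this
        exact_mod_cast this
      · rintro rfl
        exact ⟨g₁0, hrel0, rfl⟩
    have hrp : resParamsAt n (resolve n f i j) i =
        (W, (orbitF n (resolve n f i j) i).card) := by
      unfold resParamsAt
      rw [hset, csInf_singleton]
    rw [hrp]
    exact h0
  · show (((orbitF n (resolve n f i j) i).card : ℕ) : ℤ) = _
    exact C.orbit_card

end Ctx

namespace Ctx
variable {n k : ℕ} {f : ℤ → ℤ} {i j p q u v : ℤ}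

lemma E_values (C : Ctx k n f i j p q u v) (a b t : ℤ)
    (hbt : p - q = b + t * n) (hat : v - u = a + t * k) :
    Efun n k f a b p = i - j ∧ Efun n k f a b (p + 1) = f i - f j := by
  have hn := C.hn
  have e1 : p - b = q + t * n := by omega
  have h1 : bigPt n k f (p - b) = bigPt n k f q + t * ((k:ℤ) * n) := by
    rw [e1, bigPt_shift hn]
  have e2 : p + 1 - b = (q + 1) + t * n := by omega
  have h2 : bigPt n k f (p + 1 - b) = bigPt n k f (q + 1) + t * ((k:ℤ) * n) := by
    rw [e2, bigPt_shift hn]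
  have hsp : bigPt n k f (p + 1) = f (bigPt n k f p) := bigPt_succ C.hf p
  have hsq : bigPt n k f (q + 1) = f (bigPt n k f q) := bigPt_succ C.hf q
  have hfi : f i = f (bigPt n k f p) + u * n := by
    rw [C.hi, show bigPt n k f p + (n:ℤ) * u = bigPt n k f p + u * n by ring,
      per_mul (theta_per C.hf)]
  have hfj : f j = f (bigPt n k f q) + v * n := by
    rw [C.hj, show bigPt n k f q + (n:ℤ) * v = bigPt n k f q + v * n by ring,
      per_mul (theta_per C.hf)]
  have hi := C.hi
  have hj := C.hj
  constructor
  · unfold Efun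
    rw [h1]
    linear_combination hj - hi + (n:ℤ) * hat
  · unfold Efun
    rw [h2, hsp, hsq]
    linear_combination hfj - hfi + (n:ℤ) * hat

end Ctx

section Decomp
variable {n k : ℕ} {f : ℤ → ℤ}

lemma exists_decomp (hf : IsTheta k n f) (m : ℤ) :
    ∃ p u : ℤ, 0 ≤ p ∧ p < n ∧ m = bigPt n k f p + n * u := by
  obtain ⟨p, hp0, hpn, hres⟩ := bigPt_res_surj hf m
  have hd : (n:ℤ) ∣ (m - bigPt n k f p) := Int.ModEq.dvd (id hres)
  obtain ⟨u, hu⟩ := hd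
  exact ⟨p, u, hp0, hpn, by omega⟩

end Decomp

section Bijection
variable {n k : ℕ} {f : ℤ → ℤ}


lemma fwd_works (hf : IsTheta k n f) (a b p : ℤ) (hp0 : 0 ≤ p) (hpn : p < n)
    (hEneg : Efun n k f a b p < 0) (hEpos : 0 < Efun n k f a b (p + 1)) (x y : ℤ)
    (hx : x = (bigPt n k f p - 1) % (n:ℤ) + 1)
    (hy : y = bigPt n k f (p - b) + a * n + (x - bigPt n k f p)) :
    (x, y) ∈ inversions n f ∧
    ((resParamsAt n (resolve n f x y) x).1 : ℤ) = a - (b / (n:ℤ)) * k ∧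
    ((resParamsAt n (resolve n f x y) x).2 : ℤ) = b % (n:ℤ) := by
  have hn := theta_pos hf
  have hx1 : 1 ≤ x ∧ x ≤ n := by
    have h0 : 0 ≤ (bigPt n k f p - 1) % (n:ℤ) := Int.emod_nonneg _ (by omega)
    have h1 : (bigPt n k f p - 1) % (n:ℤ) < n := Int.emod_lt_of_pos _ (by omega)
    omega
  -- x = bigPt p + n * u'
  have hed := Int.emod_add_mul_ediv (bigPt n k f p - 1) (n:ℤ)
  set d := (bigPt n k f p - 1) / (n:ℤ) with hd
  set u' : ℤ := -d with hu'def
  have hu' : x = bigPt n k f p + n * u' := by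
    have e : (n:ℤ) * u' = -((n:ℤ) * d) := by rw [hu'def]; ring
    omega
  -- y = bigPt q₀ + n * v'
  set q₀ := (p - b) % (n:ℤ) with hq₀
  set s := (p - b) / (n:ℤ) with hs
  have heq : p - b = q₀ + s * n := by
    have := Int.emod_add_mul_ediv (p - b) (n:ℤ)
    linarith [mul_comm (n:ℤ) s]
  have hq₀0 : 0 ≤ q₀ := Int.emod_nonneg _ (by omega)
  have hq₀n : q₀ < n := Int.emod_lt_of_pos _ (by omega)
  have hbig : bigPt n k f (p - b) = bigPt n k f q₀ + s * ((k:ℤ) * n) := by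
    rw [heq, bigPt_shift hn]
  set v' : ℤ := s * k + a + u' with hv'def
  have hyv : y = bigPt n k f q₀ + n * v' := by
    rw [hy, hbig, hu', hv'def]; ring
  -- x < y
  have hEneg' : bigPt n k f p - bigPt n k f (p - b) - a * n < 0 := hEneg
  have hxy : x < y := by omega
  -- f y < f x
  have hfx : f x = bigPt n k f (p + 1) + u' * n := by
    rw [hu', show bigPt n k f p + (n:ℤ) * u' = bigPt n k f p + u' * n by ring,
      per_mul (theta_per hf), bigPt_succ hf]
  have hfy : f y = bigPt n k f (q₀ + 1) + v' * n := by
    rw [hyv, show bigPt n k f q₀ + (n:ℤ) * v' = bigPt n k f q₀ + v' * n by ring,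
      per_mul (theta_per hf), bigPt_succ hf]
  have heq2 : p + 1 - b = (q₀ + 1) + s * n := by omega
  have hbig2 : bigPt n k f (p + 1 - b) = bigPt n k f (q₀ + 1) + s * ((k:ℤ) * n) := by
    rw [heq2, bigPt_shift hn]
  have hEpos' : 0 < bigPt n k f (p + 1) - bigPt n k f (p + 1 - b) - a * n := hEpos
  have hv'n : v' * n = s * ((k:ℤ) * n) + a * n + u' * n := by
    rw [hv'def]; ring
  have hfxy : f y < f x := by omega
  have C : Ctx k n f x y p q₀ u' v' :=
    ⟨hf, hp0, hpn, hq₀0, hq₀n, hu', hyv, hxy, hfxy⟩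
  have hmem : (x, y) ∈ inversions n f := by
    rw [inversions, Finset.mem_filter, Finset.mem_product]
    have hb1 := (theta_bdd hf y).1
    have hb2 := (theta_bdd hf x).2
    refine ⟨⟨?_, ?_⟩, hxy, hfxy⟩
    · rw [Finset.mem_Icc]; omega
    · rw [Finset.mem_Icc]; omega
  refine ⟨hmem, ?_⟩
  have hcast := C.resParams_cast
  have hpq : p - q₀ = b + s * n := by omega
  have hmod : (p - q₀) % (n:ℤ) = b % n := by
    rw [hpq, Int.add_mul_emod_self_right]
  have hdiv : (p - q₀) / (n:ℤ) = b / n + s := by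
    rw [hpq, Int.add_mul_ediv_right _ _ (by omega : (n:ℤ) ≠ 0)]
  constructor
  · rw [hcast.1, hdiv]
    have : v' - u' = a + s * k := by rw [hv'def]; ring
    rw [this]
    ring
  · rw [hcast.2, hmod]

lemma bwd_works (hf : IsTheta k n f) (a b : ℤ) {z : ℤ × ℤ} (hz : z ∈ inversions n f)
    (h1 : ((resParamsAt n (resolve n f z.1 z.2) z.1).1 : ℤ) = a - (b / (n:ℤ)) * k)
    (h2 : ((resParamsAt n (resolve n f z.1 z.2) z.1).2 : ℤ) = b % (n:ℤ)) :
    ∃ p : ℤ, ((0 ≤ p ∧ p < n) ∧ Efun n k f a b p < 0 ∧ 0 < Efun n k f a b (p+1)) ∧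
      z.1 = (bigPt n k f p - 1) % (n:ℤ) + 1 ∧
      z.2 = bigPt n k f (p - b) + a * n + (z.1 - bigPt n k f p) := by
  have hn := theta_pos hf
  rw [inversions, Finset.mem_filter, Finset.mem_product, Finset.mem_Icc, Finset.mem_Icc] at hz
  obtain ⟨⟨⟨hi1, hi2⟩, -⟩, hij, hfij⟩ := hz
  obtain ⟨p, u, hp0, hpn, hi⟩ := exists_decomp hf z.1
  obtain ⟨q, v, hq0, hqn, hj⟩ := exists_decomp hf z.2
  have C : Ctx k n f z.1 z.2 p q u v := ⟨hf, hp0, hpn, hq0, hqn, hi, hj, hij, hfij⟩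
  have hcast := C.resParams_cast
  rw [h1] at hcast
  rw [h2] at hcast
  -- extract the congruence data
  have hmod : (p - q) % (n:ℤ) = b % n := hcast.2.symm
  have hdvd : (n:ℤ) ∣ (p - q - b) := by
    have h3 : (p - q - b) % (n:ℤ) = 0 := by
      rw [Int.sub_emod, hmod, sub_self, Int.zero_emod]
    exact Int.dvd_of_emod_eq_zero h3
  obtain ⟨t, ht⟩ := hdvd
  have hbt : p - q = b + t * n := by
    have : (n:ℤ) * t = t * n := mul_comm _ _
    omega
  have hdiv : (p - q) / (n:ℤ) = b / n + t := by
    rw [hbt, Int.add_mul_ediv_right _ _ (by omega : (n:ℤ) ≠ 0)]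
  have hat : v - u = a + t * k := by
    have h4 := hcast.1.symm
    rw [hdiv] at h4
    have e : (b / (n:ℤ) + t) * k = (b / (n:ℤ)) * k + t * k := by ring
    omega
  obtain ⟨hE1, hE2⟩ := C.E_values a b t hbt hat
  refine ⟨p, ⟨⟨hp0, hpn⟩, by omega, by omega⟩, ?_, ?_⟩
  · -- z.1 is the canonical representative
    have h5 : bigPt n k f p - 1 = (z.1 - 1) + n * (-u) := by
      have e : (n:ℤ) * (-u) = -((n:ℤ) * u) := by ring
      omega
    rw [h5, Int.add_mul_emod_self_left, Int.emod_eq_of_lt (by omega) (by omega)]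
    omega
  · -- z.2 from the E-value
    have h6 : Efun n k f a b p = z.1 - z.2 := hE1
    unfold Efun at h6
    omega

end Bijection

section Assembly
variable {n k : ℕ} {f : ℤ → ℤ}


lemma card_filter_eq (hf : IsTheta k n f) (a b : ℤ) :
    ((inversions n f).filter (fun z => ((a - (b / (n:ℤ)) * (k:ℤ), b % (n:ℤ)) : ℤ × ℤ) =
      (((resParamsAt n (resolve n f z.1 z.2) z.1).1 : ℤ),
       ((resParamsAt n (resolve n f z.1 z.2) z.1).2 : ℤ)))).card =
    ((Finset.Ico (0:ℤ) (n:ℤ)).filter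
      (fun p => Efun n k f a b p < 0 ∧ 0 < Efun n k f a b (p+1))).card := by
  classical
  have hn := theta_pos hf
  symm
  apply Finset.card_bij (i := fun p _ =>
    (((bigPt n k f p - 1) % (n:ℤ) + 1 : ℤ),
      (bigPt n k f (p - b) + a * n + ((bigPt n k f p - 1) % (n:ℤ) + 1 - bigPt n k f p) : ℤ)))
  · intro p hp
    rw [Finset.mem_filter, Finset.mem_Ico] at hp
    obtain ⟨⟨hp0, hpn⟩, hEneg, hEpos⟩ := hp
    obtain ⟨hmem, hc1, hc2⟩ := fwd_works hf a b p hp0 hpn hEneg hEpos _ _ rfl rfl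
    rw [Finset.mem_filter]
    exact ⟨hmem, by rw [Prod.ext_iff]; exact ⟨hc1.symm, hc2.symm⟩⟩
  · intro p hp p' hp' heq
    rw [Finset.mem_filter, Finset.mem_Ico] at hp hp'
    have h1 : (bigPt n k f p - 1) % (n:ℤ) = (bigPt n k f p' - 1) % n := by
      have := (Prod.ext_iff.1 heq).1
      simp only at this
      omega
    have h2 : bigPt n k f p % (n:ℤ) = bigPt n k f p' % n := by
      have hd1 : (n:ℤ) ∣ ((bigPt n k f p' - 1) - (bigPt n k f p - 1)) := Int.ModEq.dvd h1
      have hd2 : (n:ℤ) ∣ (bigPt n k f p' - bigPt n k f p) := by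
        have e : bigPt n k f p' - bigPt n k f p =
            (bigPt n k f p' - 1) - (bigPt n k f p - 1) := by ring
        rw [e]; exact hd1
      exact Int.modEq_iff_dvd.2 hd2
    have h3 := bigPt_res_inj hf h2
    exact eq_of_res_eq_close h3 (by omega) (by omega)
  · intro z hz
    rw [Finset.mem_filter] at hz
    obtain ⟨hzinv, hzpair⟩ := hz
    have hpair := Prod.ext_iff.1 hzpair
    simp only at hpair
    obtain ⟨p, ⟨⟨hp0, hpn⟩, hE1, hE2⟩, hz1, hz2⟩ :=
      bwd_works hf a b hzinv hpair.1.symm hpair.2.symm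
    refine ⟨p, ?_, ?_⟩
    · rw [Finset.mem_filter, Finset.mem_Ico]
      exact ⟨⟨hp0, hpn⟩, hE1, hE2⟩
    · rw [Prod.ext_iff]
      constructor
      · simp only
        omega
      · simp only
        omega

theorem positroid_stmt10' (hf : IsTheta k n f) (a b : ℤ)
    (hα : ¬ ∃ t : ℤ, a = t * (k : ℤ) ∧ b = t * (n : ℤ)) :
    2 * Multiset.count (a - (b / (n : ℤ)) * (k : ℤ), b % (n : ℤ))
        (Multiset.map (fun p : ℕ × ℕ => ((p.1 : ℤ), (p.2 : ℤ))) (invMultiset n f)) =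
      Nat.card {p : ℝ × ℝ // p ∈ bigPath n k f ∧
        p ∈ (fun q : ℝ × ℝ => (q.1 + (b : ℝ), q.2 + (a : ℝ))) '' bigPath n k f ∧
        p.1 ∈ Set.Ico (0 : ℝ) (n : ℝ)} := by
  classical
  have hn := theta_pos hf
  have hEnz := Efun_ne_zero hf a b hα
  have hper : Efun n k f a b ((n:ℕ):ℤ) = Efun n k f a b 0 := by
    have := Efun_period (k := k) (f := f) hn a b 0
    rwa [zero_add] at this
  rw [card_inter hf a b hα, card_cross_split hn hEnz,
    ← card_up_eq_card_down hn hEnz hper, two_mul]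
  congr 1
  · -- count = number of upcrossings
    rw [invMultiset, Multiset.map_map, Multiset.count_map]
    rw [← card_filter_eq hf a b]
    rw [Finset.card_def, Finset.filter_val]
    rfl
  · rw [invMultiset, Multiset.map_map, Multiset.count_map]
    rw [← card_filter_eq hf a b]
    rw [Finset.card_def, Finset.filter_val]
    rfl

end Assembly

/-- For `f ∈ Θ_{k,n}` with big path `P_∞` and a shift `α = (b,a) ∈ ℤ²`
(horizontal shift `b`, vertical shift `a`) which is not a multiple of `(n,k)`:
the multiplicity in `F'(f)` of the normalization of `(a,b)` modulo `ℤ·(k,n)`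
equals half the number of intersection points of `P_∞` with `P_∞ + α`,
counted modulo the translation `(n,k)` (i.e. with horizontal coordinate in `[0,n)`). -/
theorem positroid_stmt10 (k n : ℕ) (f : ℤ → ℤ) (hf : IsTheta k n f) (a b : ℤ)
    (hα : ¬ ∃ t : ℤ, a = t * (k : ℤ) ∧ b = t * (n : ℤ)) :
    2 * Multiset.count (a - (b / (n : ℤ)) * (k : ℤ), b % (n : ℤ))
        (Multiset.map (fun p : ℕ × ℕ => ((p.1 : ℤ), (p.2 : ℤ))) (invMultiset n f)) =
      Nat.card {p : ℝ × ℝ // p ∈ bigPath n k f ∧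
        p ∈ (fun q : ℝ × ℝ => (q.1 + (b : ℝ), q.2 + (a : ℝ))) '' bigPath n k f ∧
        p.1 ∈ Set.Ico (0 : ℝ) (n : ℝ)} := by
  exact positroid_stmt10' hf a b hα
end

section
/- Let f ∈ Θ_{k,n} with big path P_∞, let δ = (k,n) and δ^⊥ = (1, -k/n) (in (vertical, horizontal)-coordinate convention with ⟨δ^⊥, δ⟩ = 0). If α, β ∈ ℤ² satisfy ⟨δ^⊥, α⟩ < 0, ⟨δ^⊥, β⟩ < 0, and neither α nor β lies in F̃'(f) + ℤδ, then α + β ∉ F̃'(f) + ℤδ. -/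
open Finset

/-- `α ∈ F̃'(f) + ℤ·(k,n)`, where `F̃'(f) = F'(f) ∪ {(0,0), (k,n)}`
(points written as `(vertical, horizontal)` pairs). -/
def InFtPlus (k n : ℕ) (f : ℤ → ℤ) (α : ℤ × ℤ) : Prop :=
  ∃ t : ℤ, (α.1 - t * (k : ℤ), α.2 - t * (n : ℤ)) = ((0 : ℤ), (0 : ℤ)) ∨
    ∃ p ∈ invMultiset n f, ((p.1 : ℤ), (p.2 : ℤ)) = (α.1 - t * (k : ℤ), α.2 - t * (n : ℤ))

namespace Stmt11

variable {n : ℕ} {f : ℤ → ℤ}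

lemma per_mul (hper : ∀ i : ℤ, f (i + (n:ℤ)) = f i + (n:ℤ)) :
    ∀ (m x : ℤ), f (x + m * n) = f x + m * n := by
  intro m
  induction m using Int.induction_on with
  | zero => simp
  | succ m ih =>
      intro x
      have h1 : x + ((m : ℤ) + 1) * n = (x + m * n) + n := by ring
      rw [h1, hper, ih x]; ring
  | pred m ih =>
      intro x
      have h1 : x + (-(m : ℤ) - 1) * n + n = x + (-(m:ℤ)) * n := by ring
      have := hper (x + (-(m:ℤ) - 1) * n)
      rw [h1, ih x] at this
      ring_nf at this ⊢
      linarith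

lemma iter_per (hper : ∀ i : ℤ, f (i + (n:ℤ)) = f i + (n:ℤ)) :
    ∀ (r : ℕ) (m x : ℤ), f^[r] (x + m * n) = f^[r] x + m * n := by
  intro r
  induction r with
  | zero => simp
  | succ r ih =>
      intro m x
      rw [Function.iterate_succ_apply', Function.iterate_succ_apply', ih, per_mul hper]

lemma res_exists {x y : ℤ} (h : x % (n:ℤ) = y % (n:ℤ)) : ∃ c : ℤ, y = x + c * n := by
  refine ⟨(y - x) / n, ?_⟩
  have h2 : ((x - y) % (n:ℤ)) = 0 := by
    rw [Int.sub_emod, h, sub_self, Int.zero_emod]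
  have h3 : (n:ℤ) ∣ (y - x) := by
    have h5 : (n:ℤ) ∣ (x - y) := Int.dvd_of_emod_eq_zero h2
    have h6 : (n:ℤ) ∣ -(x - y) := dvd_neg.mpr h5
    simpa using h6
  rw [Int.ediv_mul_cancel h3]; ring

lemma res_of_add_mul (x c : ℤ) : (x + c * n) % (n:ℤ) = x % n := by
  simpa using Int.add_mul_emod_self (a := x) (b := c) (c := (n:ℤ))

lemma res_inj (hinj : Function.Injective f)
    (hper : ∀ i : ℤ, f (i + (n:ℤ)) = f i + (n:ℤ)) {x y : ℤ}
    (h : f x % (n:ℤ) = f y % (n:ℤ)) : x % (n:ℤ) = y % (n:ℤ) := by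
  obtain ⟨c, hc⟩ := res_exists h
  have : f y = f (x + c * n) := by rw [per_mul hper, hc]
  have hxy : y = x + c * n := hinj this
  rw [hxy, res_of_add_mul]

lemma iter_res (hper : ∀ i : ℤ, f (i + (n:ℤ)) = f i + (n:ℤ)) {x y : ℤ}
    (h : x % (n:ℤ) = y % (n:ℤ)) (r : ℕ) : f^[r] x % (n:ℤ) = f^[r] y % (n:ℤ) := by
  obtain ⟨c, hc⟩ := res_exists h
  rw [hc, iter_per hper, res_of_add_mul]

lemma orbit_image (hn : 0 < n) (hcyc : IsCycleMod n f) :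
    (Finset.range n).image (fun r => f^[r] 0 % (n:ℤ)) = Finset.Ico (0:ℤ) n := by
  apply Finset.Subset.antisymm
  · intro x hx
    simp only [Finset.mem_image] at hx
    obtain ⟨r, _, rfl⟩ := hx
    simp only [Finset.mem_Ico]
    constructor
    · exact Int.emod_nonneg _ (by exact_mod_cast hn.ne')
    · exact Int.emod_lt_of_pos _ (by exact_mod_cast hn)
  · intro m hm
    simp only [Finset.mem_Ico] at hm
    obtain ⟨r, hr, hre⟩ := hcyc m
    simp only [Finset.mem_image]
    exact ⟨r, Finset.mem_range.mpr hr, by rw [hre, Int.emod_eq_of_lt hm.1 hm.2]⟩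

lemma orbit_res_inj (hn : 0 < n) (hcyc : IsCycleMod n f) {s s' : ℕ}
    (hs : s < n) (hs' : s' < n) (h : f^[s] 0 % (n:ℤ) = f^[s'] 0 % (n:ℤ)) : s = s' := by
  have hinj : Set.InjOn (fun r => f^[r] 0 % (n:ℤ)) (Finset.range n) := by
    apply Finset.injOn_of_card_image_eq
    rw [orbit_image hn hcyc]
    simp
  exact hinj (by simp [hs]) (by simp [hs']) h

lemma fact1 (hn : 0 < n) (hinj : Function.Injective f)
    (hper : ∀ i : ℤ, f (i + (n:ℤ)) = f i + (n:ℤ)) (hbdd : IsBoundedFn n f)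
    (hcyc : IsCycleMod n f) :
    ∀ x : ℤ, f^[n] x = x + (winding n f : ℤ) * n := by
  set e : ℤ → ℤ := fun x => f x - x with he
  have he_per : ∀ (c x : ℤ), e (x + c * n) = e x := by
    intro c x; simp only [he]; rw [per_mul hper]; ring
  have he_mod : ∀ x : ℤ, e x = e (x % n) := by
    intro x
    conv_lhs => rw [show x = x % (n:ℤ) + (x / n) * n from by
      have h := Int.emod_add_mul_ediv x (n:ℤ); linarith]
    rw [he_per]
  -- telescope
  have htel : ∑ r ∈ Finset.range n, (f^[r+1] 0 - f^[r] 0) = f^[n] 0 - f^[0] 0 :=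
    Finset.sum_range_sub (fun r => f^[r] 0) n
  have hts : ∀ r : ℕ, f^[r+1] 0 - f^[r] 0 = e (f^[r] 0) := by
    intro r; rw [Function.iterate_succ_apply']
  have h1 : f^[n] 0 = ∑ r ∈ Finset.range n, e ((f^[r] 0) % n) := by
    have hh : ∑ r ∈ Finset.range n, e ((f^[r] 0) % (n:ℤ))
        = ∑ r ∈ Finset.range n, (f^[r+1] 0 - f^[r] 0) :=
      Finset.sum_congr rfl (fun r _ => (he_mod (f^[r] 0)).symm.trans (hts r).symm)
    rw [hh, htel]; simp
  have hinj' : ∀ x ∈ Finset.range n, ∀ y ∈ Finset.range n,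
      f^[x] 0 % (n:ℤ) = f^[y] 0 % (n:ℤ) → x = y := by
    intro x hx y hy h
    exact orbit_res_inj hn hcyc (Finset.mem_range.mp hx) (Finset.mem_range.mp hy) h
  have h2 : ∑ r ∈ Finset.range n, e ((f^[r] 0) % n) = ∑ m ∈ Finset.Ico (0:ℤ) n, e m := by
    rw [← orbit_image hn hcyc, Finset.sum_image hinj']
  have h3 : ∑ m ∈ Finset.Ico (0:ℤ) n, e m = ∑ m ∈ Finset.Icc (1:ℤ) n, e m := by
    have hI1 : Finset.Ico (0:ℤ) n = insert 0 (Finset.Ico (1:ℤ) n) := by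
      ext x; simp only [Finset.mem_Ico, Finset.mem_insert]; omega
    have hI2 : Finset.Icc (1:ℤ) n = insert (n:ℤ) (Finset.Ico (1:ℤ) n) := by
      ext x; simp only [Finset.mem_Icc, Finset.mem_Ico, Finset.mem_insert]; omega
    rw [hI1, hI2, Finset.sum_insert (by simp), Finset.sum_insert (by simp)]
    congr 1
    have : e (n:ℤ) = e 0 := by
      have := he_per 1 0; simpa using this
    rw [this]
  -- tau argument
  set s : Finset ℤ := Finset.Icc (1:ℤ) n with hs
  set τ : ℤ → ℤ := fun i => if (n:ℤ) < f i then f i - n else f i with hτ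
  have hmem : ∀ i ∈ s, τ i ∈ s := by
    intro i hi
    simp only [hs, Finset.mem_Icc] at hi ⊢
    have h1 := (hbdd i).1
    have h2 := (hbdd i).2
    simp only [hτ]
    split_ifs with h <;> omega
  have hτinj : ∀ x ∈ s, ∀ y ∈ s, τ x = τ y → x = y := by
    intro x hx y hy h
    simp only [hs, Finset.mem_Icc] at hx hy
    have hfr : f x % (n:ℤ) = f y % (n:ℤ) := by
      simp only [hτ] at h
      split_ifs at h with h1 h2 h2
      · have hxy : f x = f y := by omega
        rw [hxy]
      · have hxy : f x = f y + 1 * n := by omega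
        rw [hxy, res_of_add_mul]
      · have hxy : f y = f x + 1 * n := by omega
        rw [hxy, res_of_add_mul]
      · rw [h]
    have hxy := res_inj hinj hper hfr
    obtain ⟨c, hc⟩ := res_exists hxy
    rcases lt_trichotomy c 0 with h | h | h
    · have h1 : c ≤ -1 := by omega
      have h2 : c * n ≤ -1 * n := mul_le_mul_of_nonneg_right h1 (by positivity)
      have hnn : (0:ℤ) < n := by exact_mod_cast hn
      nlinarith [hx.1, hx.2, hy.1, hy.2]
    · subst h; simp at hc; omega
    · have h1 : (1:ℤ) ≤ c := by omega
      have h2 : 1 * n ≤ c * n := mul_le_mul_of_nonneg_right h1 (by positivity)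
      have hnn : (0:ℤ) < n := by exact_mod_cast hn
      nlinarith [hx.1, hx.2, hy.1, hy.2]
  have himg : s.image τ = s := by
    apply Finset.eq_of_subset_of_card_le
    · intro x hx
      simp only [Finset.mem_image] at hx
      obtain ⟨y, hy, rfl⟩ := hx
      exact hmem y hy
    · rw [Finset.card_image_of_injOn (fun x hx y hy => hτinj x hx y hy)]
  have hsumτ : ∑ i ∈ s, τ i = ∑ i ∈ s, i := by
    conv_rhs => rw [← himg]
    rw [Finset.sum_image hτinj]
  have hsplit : ∑ i ∈ s, (f i - i) = (winding n f : ℤ) * n := by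
    have : ∀ i ∈ s, f i - i = (τ i - i) + (if (n:ℤ) < f i then (n:ℤ) else 0) := by
      intro i _
      simp only [hτ]; split_ifs <;> ring
    rw [Finset.sum_congr rfl this, Finset.sum_add_distrib, Finset.sum_sub_distrib, hsumτ,
      sub_self, zero_add, Finset.sum_ite, Finset.sum_const, Finset.sum_const_zero, add_zero,
      nsmul_eq_mul]
    rfl
  have hzero : f^[n] 0 = (winding n f : ℤ) * n := by
    rw [h1, h2, h3, ← hsplit]
  -- general x
  intro x
  obtain ⟨r, hr, hx⟩ := hcyc x
  obtain ⟨c, hc⟩ := res_exists hx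
  have h4 : f^[n] x = f^[r] (f^[n] 0) + c * n := by
    rw [hc, iter_per hper, ← Function.iterate_add_apply, Nat.add_comm,
      Function.iterate_add_apply]
  have h5 : f^[r] ((winding n f : ℤ) * n) = f^[r] 0 + (winding n f : ℤ) * n := by
    have := iter_per hper r ((winding n f : ℤ)) 0
    simpa using this
  rw [h4, hzero, h5, hc]; ring


/-! ### The sequence `u r = f^[r] 0` extended to `ℤ` -/

def uu (n k : ℕ) (f : ℤ → ℤ) (r : ℤ) : ℤ :=
  f^[(r % (n:ℤ)).toNat] 0 + (r / (n:ℤ)) * ((k:ℤ) * n)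

variable {k : ℕ}

lemma emod_ediv_of (hn : 0 < n) {s q r : ℤ} (hs : 0 ≤ s) (hs' : s < n)
    (hr : r = s + q * n) : r % (n:ℤ) = s ∧ r / (n:ℤ) = q := by
  have hne : (n:ℤ) ≠ 0 := by exact_mod_cast hn.ne'
  constructor
  · rw [hr, res_of_add_mul, Int.emod_eq_of_lt hs hs']
  · rw [hr, Int.add_mul_ediv_right _ _ hne, Int.ediv_eq_zero_of_lt hs hs', zero_add]

lemma uu_shift (hn : 0 < n) (t r : ℤ) :
    uu n k f (r + t * n) = uu n k f r + t * ((k:ℤ) * n) := by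
  have hne : (n:ℤ) ≠ 0 := by exact_mod_cast hn.ne'
  unfold uu
  rw [res_of_add_mul, Int.add_mul_ediv_right _ _ hne]
  ring

lemma uu_zero : uu n k f 0 = 0 := by simp [uu]

lemma uu_succ (hn : 0 < n) (hper : ∀ i : ℤ, f (i + (n:ℤ)) = f i + (n:ℤ))
    (hN : f^[n] 0 = (k:ℤ) * n) (r : ℤ) :
    uu n k f (r + 1) = f (uu n k f r) := by
  have hs0 : 0 ≤ r % (n:ℤ) := Int.emod_nonneg _ (by exact_mod_cast hn.ne')
  have hsn : r % (n:ℤ) < n := Int.emod_lt_of_pos _ (by exact_mod_cast hn)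
  have hr : r = r % (n:ℤ) + (r / n) * n := by
    have h := Int.emod_add_mul_ediv r (n:ℤ); linarith
  by_cases hcase : r % (n:ℤ) + 1 < n
  · obtain ⟨h1, h2⟩ := emod_ediv_of hn (by omega) hcase
      (show r + 1 = (r % (n:ℤ) + 1) + (r / n) * n by omega)
    unfold uu
    rw [h1, h2, show (r % (n:ℤ) + 1).toNat = (r % (n:ℤ)).toNat + 1 by omega,
      Function.iterate_succ_apply',
      show (r / (n:ℤ)) * ((k:ℤ) * n) = ((r / (n:ℤ)) * k) * n by ring,
      per_mul hper]
  · have hs : r % (n:ℤ) = n - 1 := by omega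
    obtain ⟨h1, h2⟩ := emod_ediv_of hn le_rfl (show (0:ℤ) < n by exact_mod_cast hn)
      (show r + 1 = 0 + (r / n + 1) * n by linear_combination hr + hs)
    unfold uu
    rw [h1, h2]
    simp only [Int.toNat_zero, Function.iterate_zero_apply]
    have h3 : f (f^[(r % (n:ℤ)).toNat] 0 + (r / (n:ℤ)) * ((k:ℤ) * n))
        = f (f^[(r % (n:ℤ)).toNat] 0) + (r / (n:ℤ)) * k * n := by
      rw [show (r / (n:ℤ)) * ((k:ℤ) * n) = ((r / (n:ℤ)) * k) * n by ring, per_mul hper]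
    rw [h3]
    have h4 : f (f^[(r % (n:ℤ)).toNat] 0) = f^[(r % (n:ℤ)).toNat + 1] 0 :=
      (Function.iterate_succ_apply' f _ 0).symm
    rw [h4, show (r % (n:ℤ)).toNat + 1 = n by omega, hN]
    ring

lemma uu_add_nat (hn : 0 < n) (hper : ∀ i : ℤ, f (i + (n:ℤ)) = f i + (n:ℤ))
    (hN : f^[n] 0 = (k:ℤ) * n) (r : ℤ) (s : ℕ) :
    uu n k f (r + s) = f^[s] (uu n k f r) := by
  induction s with
  | zero => simp
  | succ s ih =>
      have hc : ((s+1:ℕ):ℤ) = (s:ℤ) + 1 := by push_cast; ring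
      rw [hc, show r + ((s:ℤ) + 1) = (r + s) + 1 by ring, uu_succ hn hper hN,
        Function.iterate_succ_apply', ih]
  
lemma uu_res (r : ℤ) : uu n k f r % n = f^[(r % (n:ℤ)).toNat] 0 % n := by
  unfold uu
  rw [show (r / (n:ℤ)) * ((k:ℤ) * n) = ((r / (n:ℤ)) * k) * n by ring, res_of_add_mul]

lemma uu_mod_eq {r r' : ℤ} (h : r % (n:ℤ) = r' % n) :
    uu n k f r % n = uu n k f r' % n := by
  rw [uu_res, uu_res, h]

lemma uu_inj (hn : 0 < n) (hcyc : IsCycleMod n f) {r r' : ℤ}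
    (h : uu n k f r % n = uu n k f r' % n) : r % (n:ℤ) = r' % n := by
  rw [uu_res, uu_res] at h
  have h1 : ((r % (n:ℤ)).toNat) < n := by
    have := Int.emod_lt_of_pos r (show (0:ℤ) < n by exact_mod_cast hn); omega
  have h2 : ((r' % (n:ℤ)).toNat) < n := by
    have := Int.emod_lt_of_pos r' (show (0:ℤ) < n by exact_mod_cast hn); omega
  have h3 := orbit_res_inj hn hcyc h1 h2 h
  have h4 : 0 ≤ r % (n:ℤ) := Int.emod_nonneg _ (by exact_mod_cast hn.ne')
  have h5 : 0 ≤ r' % (n:ℤ) := Int.emod_nonneg _ (by exact_mod_cast hn.ne')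
  omega

lemma uu_surj (hn : 0 < n) (hcyc : IsCycleMod n f) (x : ℤ) :
    ∃ ρ : ℤ, 0 ≤ ρ ∧ ρ < n ∧ uu n k f ρ % n = x % n := by
  obtain ⟨r, hr, hre⟩ := hcyc x
  refine ⟨(r:ℤ), by exact_mod_cast Nat.zero_le r, by exact_mod_cast hr, ?_⟩
  have h0 : ((r:ℤ) % (n:ℤ)) = r :=
    Int.emod_eq_of_lt (by exact_mod_cast Nat.zero_le r) (by exact_mod_cast hr)
  rw [uu_res, h0]
  simpa using hre

lemma uu_step (hbdd : IsBoundedFn n f) (hn : 0 < n)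
    (hper : ∀ i : ℤ, f (i + (n:ℤ)) = f i + (n:ℤ)) (hN : f^[n] 0 = (k:ℤ) * n) (r : ℤ) :
    uu n k f r ≤ uu n k f (r + 1) ∧ uu n k f (r + 1) ≤ uu n k f r + n := by
  rw [uu_succ hn hper hN]
  exact hbdd _


/-! ### Generic helpers -/

lemma no_small_multiple (hn : 0 < n) {a c : ℤ} (ha1 : 0 < a) (ha2 : a < n)
    (h : a = c * n) : False := by
  have hnn : (0:ℤ) < n := by exact_mod_cast hn
  rcases le_or_gt c 0 with hc | hc
  · nlinarith
  · have : (1:ℤ) ≤ c := hc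
    nlinarith

lemma iter_ge (hbdd : IsBoundedFn n f) (x : ℤ) (s : ℕ) : x ≤ f^[s] x := by
  induction s with
  | zero => simp
  | succ s ih =>
      rw [Function.iterate_succ_apply']
      exact le_trans ih (hbdd _).1

/-! ### Properties of `resolve` -/

variable {i j : ℤ}

lemma inv_res_ne (hn : 0 < n) (hper : ∀ i : ℤ, f (i + (n:ℤ)) = f i + (n:ℤ))
    (hij : i < j) (hfij : f j < f i) : i % (n:ℤ) ≠ j % n := by
  intro h
  obtain ⟨c, hc⟩ := res_exists h
  have h2 : f j = f i + c * n := by rw [hc, per_mul hper]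
  exact no_small_multiple hn (by omega) (by nlinarith [show (0:ℤ) < n by exact_mod_cast hn])
    (show j - i = c * n by omega)

lemma resolve_at_i {x : ℤ} (hx : x % (n:ℤ) = i % n) :
    resolve n f i j x = f j + (x - i) := by
  unfold resolve; rw [if_pos hx]

lemma resolve_at_j (hne : i % (n:ℤ) ≠ j % n) {x : ℤ} (hx : x % (n:ℤ) = j % n) :
    resolve n f i j x = f i + (x - j) := by
  unfold resolve
  rw [if_neg (by rw [hx]; exact fun hh => hne hh.symm), if_pos hx]

lemma resolve_other {x : ℤ} (hxi : x % (n:ℤ) ≠ i % n) (hxj : x % (n:ℤ) ≠ j % n) :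
    resolve n f i j x = f x := by
  unfold resolve; rw [if_neg hxi, if_neg hxj]

lemma resolve_per (hper : ∀ i : ℤ, f (i + (n:ℤ)) = f i + (n:ℤ)) (x : ℤ) :
    resolve n f i j (x + (n:ℤ)) = resolve n f i j x + n := by
  unfold resolve
  rw [show x + (n:ℤ) = x + 1 * n by ring, res_of_add_mul]
  split_ifs with h1 h2
  · ring
  · ring
  · rw [show x + 1 * (n:ℤ) = x + n by ring, hper]

lemma resolve_bdd (hn : 0 < n) (hbdd : IsBoundedFn n f)
    (h1i : 1 ≤ i) (hij : i < j) (hfij : f j < f i) :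
    IsBoundedFn n (resolve n f i j) := by
  intro x
  unfold resolve
  have hbi := hbdd i
  have hbj := hbdd j
  have hbx := hbdd x
  split_ifs with h1 h2
  · constructor <;> omega
  · constructor <;> omega
  · exact hbx

lemma resolve_inj (hn : 0 < n) (hinj : Function.Injective f)
    (hper : ∀ i : ℤ, f (i + (n:ℤ)) = f i + (n:ℤ)) (hne : i % (n:ℤ) ≠ j % n) :
    Function.Injective (resolve n f i j) := by
  set σ : ℤ → ℤ := fun x =>
    if x % (n:ℤ) = i % n then j + (x - i)
    else if x % (n:ℤ) = j % n then i + (x - j) else x with hσ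
  have hcomp : ∀ x, resolve n f i j x = f (σ x) := by
    intro x
    simp only [hσ]
    unfold resolve
    split_ifs with h1 h2
    · obtain ⟨c, hc⟩ := res_exists h1.symm
      rw [show j + (x - i) = j + c * n by omega, per_mul hper]
      omega
    · obtain ⟨c, hc⟩ := res_exists h2.symm
      rw [show i + (x - j) = i + c * n by omega, per_mul hper]
      omega
    · rfl
  have hσres : ∀ x : ℤ,
      (x % (n:ℤ) = i % n → σ x % n = j % n) ∧
      (x % (n:ℤ) = j % n → σ x % n = i % n) ∧
      (x % (n:ℤ) ≠ i % n → x % (n:ℤ) ≠ j % n → σ x % n = x % n) := by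
    intro x
    refine ⟨fun h1 => ?_, fun h2 => ?_, fun h1 h2 => ?_⟩
    · simp only [hσ, if_pos h1]
      obtain ⟨c, hc⟩ := res_exists h1.symm
      rw [show j + (x - i) = j + c * n by omega, res_of_add_mul]
    · have h1 : x % (n:ℤ) ≠ i % n := by rw [h2]; exact fun hh => hne hh.symm
      simp only [hσ, if_neg h1, if_pos h2]
      obtain ⟨c, hc⟩ := res_exists h2.symm
      rw [show i + (x - j) = i + c * n by omega, res_of_add_mul]
    · simp only [hσ, if_neg h1, if_neg h2]
  have hσinj : Function.Injective σ := by
    intro x y h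
    have hres : σ x % (n:ℤ) = σ y % n := by rw [h]
    by_cases hxi : x % (n:ℤ) = i % n
    · by_cases hyi : y % (n:ℤ) = i % n
      · simp only [hσ, if_pos hxi, if_pos hyi] at h; omega
      · exfalso
        have e1 := (hσres x).1 hxi
        by_cases hyj : y % (n:ℤ) = j % n
        · have e2 := (hσres y).2.1 hyj
          rw [← hres] at e2
          exact hne (e2.symm.trans e1)
        · have e2 := (hσres y).2.2 hyi hyj
          rw [← hres] at e2
          exact hyj (e2.symm.trans e1)
    · by_cases hxj : x % (n:ℤ) = j % n
      · have e1 := (hσres x).2.1 hxj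
        by_cases hyj : y % (n:ℤ) = j % n
        · have hyi : ¬ (y % (n:ℤ) = i % n) := fun hh => hne (hh.symm.trans hyj)
          simp only [hσ, if_neg hxi, if_pos hxj, if_neg hyi, if_pos hyj] at h; omega
        · exfalso
          by_cases hyi : y % (n:ℤ) = i % n
          · have e2 := (hσres y).1 hyi
            rw [← hres] at e2
            exact hne (e1.symm.trans e2)
          · have e2 := (hσres y).2.2 hyi hyj
            rw [← hres] at e2
            exact hyi (e2.symm.trans e1)
      · have e1 := (hσres x).2.2 hxi hxj
        by_cases hyi : y % (n:ℤ) = i % n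
        · exfalso
          have e2 := (hσres y).1 hyi
          rw [← hres] at e2
          exact hxj (e1.symm.trans e2)
        · by_cases hyj : y % (n:ℤ) = j % n
          · exfalso
            have e2 := (hσres y).2.1 hyj
            rw [← hres] at e2
            exact hxi (e1.symm.trans e2)
          · simp only [hσ, if_neg hxi, if_neg hxj, if_neg hyi, if_neg hyj] at h
            exact h
  intro x y h
  rw [hcomp, hcomp] at h
  exact hσinj (hinj h)


lemma map_res (hper : ∀ i : ℤ, f (i + (n:ℤ)) = f i + (n:ℤ)) {x y : ℤ}
    (h : x % (n:ℤ) = y % (n:ℤ)) : f x % (n:ℤ) = f y % (n:ℤ) := by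
  simpa using iter_res hper h 1

lemma per_mul_gen {g : ℤ → ℤ} {p q : ℤ} (h : ∀ m : ℤ, g (m + p) = g m + q) :
    ∀ (c m : ℤ), g (m + c * p) = g m + c * q := by
  intro c
  induction c using Int.induction_on with
  | zero => simp
  | succ c ih =>
      intro m
      have h1 : m + ((c : ℤ) + 1) * p = (m + c * p) + p := by ring
      rw [h1, h, ih m]; ring
  | pred c ih =>
      intro m
      have h1 : m + (-(c : ℤ) - 1) * p + p = m + (-(c:ℤ)) * p := by ring
      have h2 := h (m + (-(c:ℤ) - 1) * p)
      rw [h1, ih m] at h2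
      ring_nf at h2 ⊢
      linarith

/-! ### The central lemma -/

set_option maxHeartbeats 1000000 in
lemma central (hn : 0 < n) (hinj : Function.Injective f)
    (hper : ∀ i : ℤ, f (i + (n:ℤ)) = f i + (n:ℤ)) (hbdd : IsBoundedFn n f)
    (hcyc : IsCycleMod n f) (hN : f^[n] 0 = (k:ℤ) * n)
    (h1i : 1 ≤ i) (hij : i < j) (hfij : f j < f i) :
    ∃ (B : ℕ) (K ρj : ℤ),
      0 < B ∧ (B:ℤ) < n ∧ 0 ≤ ρj ∧ ρj < n ∧ uu n k f ρj % n = j % n ∧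
      0 ≤ K ∧ f^[B] j = i + K * n ∧
      resParamsAt n (resolve n f i j) i = (K.toNat, B) := by
  have hnz : (0:ℤ) < n := by exact_mod_cast hn
  have hne : i % (n:ℤ) ≠ j % n := inv_res_ne hn hper hij hfij
  set gg := resolve n f i j with hgg
  have hggper : ∀ x : ℤ, gg (x + (n:ℤ)) = gg x + n := fun x => resolve_per hper x
  have hggbdd : IsBoundedFn n gg := resolve_bdd hn hbdd h1i hij hfij
  have hgginj : Function.Injective gg := resolve_inj hn hinj hper hne
  obtain ⟨ρi, hρi0, hρin, hρi⟩ := uu_surj (k := k) hn hcyc i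
  obtain ⟨ρj, hρj0, hρjn, hρj⟩ := uu_surj (k := k) hn hcyc j
  set b : ℤ := (ρi - ρj) % n with hb
  have hb0 : 0 ≤ b := Int.emod_nonneg _ hnz.ne'
  have hbn : b < n := Int.emod_lt_of_pos _ hnz
  have hρib : (ρj + b) % (n:ℤ) = ρi % n := by
    have h1 : ρj + b = ρi + (-( (ρi - ρj) / n)) * n := by
      have h2 := Int.emod_add_mul_ediv (ρi - ρj) (n:ℤ)
      simp only [hb]; linarith
    rw [h1, res_of_add_mul]
  have hbne : b ≠ 0 := by
    intro h0
    apply hne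
    rw [← hρi, ← hρj]
    apply uu_mod_eq
    rw [← hρib, h0, add_zero]
  clear_value b
  set B := b.toNat with hB
  have hBb : (B:ℤ) = b := Int.toNat_of_nonneg hb0
  have hBpos : 0 < B := by omega
  have hBn : (B:ℤ) < n := by omega
  have hfj_res : ∀ s : ℕ, f^[s] j % (n:ℤ) = uu n k f (ρj + s) % n := by
    intro s
    have h1 : f^[s] j % (n:ℤ) = f^[s] (uu n k f ρj) % n := iter_res hper hρj.symm s
    rw [h1, ← uu_add_nat hn hper hN]
  have hI : i % (n:ℤ) = uu n k f (ρj + b) % n := by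
    rw [← hρi]
    exact uu_mod_eq hρib.symm
  -- the iterates of gg starting at i
  have hgs : ∀ s : ℕ, 1 ≤ s → (s:ℤ) ≤ b → gg^[s] i = f^[s] j := by
    intro s
    induction s with
    | zero => intro h; omega
    | succ s ih =>
        intro _ hsb
        by_cases hs0 : s = 0
        · subst hs0
          show gg^[1] i = f^[1] j
          simp only [Function.iterate_one]
          rw [hgg, resolve_at_i rfl]
          ring
        · have hs1 : 1 ≤ s := by omega
          have hsb' : (s:ℤ) ≤ b := by push_cast at hsb ⊢; omega
          rw [Function.iterate_succ_apply', ih hs1 hsb']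
          have hres : f^[s] j % (n:ℤ) = uu n k f (ρj + s) % n := hfj_res s
          have hnoti : f^[s] j % (n:ℤ) ≠ i % n := by
            rw [hres, hI]
            intro h
            have h2 := uu_inj (k := k) hn hcyc h
            obtain ⟨c, hc⟩ := res_exists h2
            exact no_small_multiple hn (a := b - s) (c := c) (by push_cast at hsb; omega)
              (by omega) (by linarith)
          have hnotj : f^[s] j % (n:ℤ) ≠ j % n := by
            rw [hres, ← hρj]
            intro h
            have h2 := uu_inj (k := k) hn hcyc h
            obtain ⟨c, hc⟩ := res_exists h2
            exact no_small_multiple hn (a := (s:ℤ)) (c := -c) (by exact_mod_cast hs1)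
              (by push_cast at hsb; omega) (by linarith)
          rw [hgg]
          rw [resolve_other hnoti hnotj]
          exact (Function.iterate_succ_apply' f s j).symm
  have hgsB : gg^[B] i = f^[B] j := hgs B hBpos (by omega)
  have hKex : ∃ K : ℤ, f^[B] j = i + K * n := by
    have h1 : f^[B] j % (n:ℤ) = i % n := by
      rw [hfj_res B, hI, hBb]
    obtain ⟨c, hc⟩ := res_exists h1
    exact ⟨-c, by linarith⟩
  obtain ⟨K, hK⟩ := hKex
  have hK0 : 0 ≤ K := by
    have h1 : j ≤ f^[B] j := iter_ge hbdd j B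
    rcases le_or_gt 0 K with h | h
    · exact h
    · exfalso
      have : K * n ≤ -1 * n := mul_le_mul_of_nonneg_right (by omega) hnz.le
      linarith
  have hgB : gg^[B] i = i + K * n := by rw [hgsB, hK]
  have hgp : ∀ s : ℕ, gg^[s + B] i = gg^[s] i + K * n := by
    intro s
    rw [Function.iterate_add_apply, hgB, iter_per hggper]
  have hgq : ∀ (q s : ℕ), gg^[s + B * q] i = gg^[s] i + (q:ℤ) * (K * n) := by
    intro q
    induction q with
    | zero => simp
    | succ q ih =>
        intro s
        have h1 : s + B * (q + 1) = (s + B * q) + B := by ring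
        rw [h1, Function.iterate_add_apply, hgB, iter_per hggper, ih]
        push_cast; ring
  set O' : Finset ℤ := (Finset.range B).image (fun s : ℕ => uu n k f (ρj + 1 + (s:ℤ)) % n)
    with hO'
  have hO'' : ∀ s : ℕ, s < B → uu n k f (ρj + 1 + (s:ℤ)) % n = gg^[s+1] i % n := by
    intro s hs
    rw [hgs (s+1) (by omega) (by push_cast; omega), hfj_res (s+1)]
    congr 2
    push_cast; ring
  have horb_all : ∀ r : ℕ, gg^[r] i % (n:ℤ) ∈ O' := by
    intro r
    obtain ⟨s', q, hrq, hs'B⟩ : ∃ s' q : ℕ, r = B * q + s' ∧ s' < B :=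
      ⟨r % B, r / B, (Nat.div_add_mod r B).symm, Nat.mod_lt _ hBpos⟩
    have h1 : gg^[r] i = gg^[s'] i + (q:ℤ) * (K * n) := by
      rw [hrq, show B * q + s' = s' + B * q by omega, hgq]
    have h2 : gg^[r] i % (n:ℤ) = gg^[s'] i % n := by
      rw [h1, show ((q:ℕ):ℤ) * (K * n) = (((q:ℕ):ℤ) * K) * n by ring,
        res_of_add_mul]
    rw [h2]
    by_cases hs0 : s' = 0
    · rw [hs0]
      simp only [Function.iterate_zero_apply]
      rw [hI]
      rw [hO', Finset.mem_image]
      refine ⟨B - 1, Finset.mem_range.mpr (by omega), ?_⟩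
      congr 2
      push_cast
      omega
    · rw [hgs s' (by omega) (by omega), hfj_res s']
      rw [hO', Finset.mem_image]
      refine ⟨s' - 1, Finset.mem_range.mpr (by omega), ?_⟩
      congr 2
      push_cast
      omega
  have horbit_eq : orbitF n gg i = O' := by
    apply Finset.Subset.antisymm
    · intro x hx
      rw [orbitF, Finset.mem_image] at hx
      obtain ⟨r, _, rfl⟩ := hx
      exact horb_all r
    · intro x hx
      rw [hO', Finset.mem_image] at hx
      obtain ⟨s, hs, rfl⟩ := hx
      rw [Finset.mem_range] at hs
      rw [hO'' s hs, orbitF, Finset.mem_image]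
      exact ⟨s + 1, Finset.mem_range.mpr (by omega), rfl⟩
  have hcard : (orbitF n gg i).card = B := by
    rw [horbit_eq, hO']
    rw [Finset.card_image_of_injOn, Finset.card_range]
    intro s hs s' hs' h
    simp only [Finset.coe_range, Set.mem_Iio] at hs hs'
    have h2 := uu_inj (k := k) hn hcyc h
    obtain ⟨c, hc⟩ := res_exists h2
    have hss' : (s':ℤ) = (s:ℤ) + c * n := by linarith
    have hs'0 : (0:ℤ) ≤ s' := by positivity
    have hs0' : (0:ℤ) ≤ s := by positivity
    have hsB' : (s:ℤ) < B := by exact_mod_cast hs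
    have hs'B' : (s':ℤ) < B := by exact_mod_cast hs'
    have hc0 : c = 0 := by
      by_contra hcne
      rcases lt_or_gt_of_ne hcne with hlt | hgt
      · have h5 : c ≤ -1 := by omega
        have h6 : c * (n:ℤ) ≤ -1 * n := mul_le_mul_of_nonneg_right h5 hnz.le
        linarith
      · have h5 : (1:ℤ) ≤ c := by omega
        have h6 : 1 * (n:ℤ) ≤ c * n := mul_le_mul_of_nonneg_right h5 hnz.le
        linarith
    rw [hc0] at hss'
    simp at hss'
    exact_mod_cast hss'.symm
  have hOelem : ∀ x ∈ orbitF n gg i, 0 ≤ x ∧ x < n := by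
    intro x hx
    rw [orbitF, Finset.mem_image] at hx
    obtain ⟨r, _, rfl⟩ := hx
    exact ⟨Int.emod_nonneg _ hnz.ne', Int.emod_lt_of_pos _ hnz⟩
  have hclose : ∀ x : ℤ, x % (n:ℤ) ∈ orbitF n gg i → gg x % n ∈ orbitF n gg i := by
    intro x hx
    rw [orbitF, Finset.mem_image] at hx
    obtain ⟨r, _, hrx⟩ := hx
    have h1 : gg x % (n:ℤ) = gg^[r+1] i % n := by
      rw [Function.iterate_succ_apply']
      exact map_res hggper hrx.symm
    rw [h1, horbit_eq]
    exact horb_all (r+1)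
  have hiorb : i % (n:ℤ) ∈ orbitF n gg i := by
    rw [orbitF, Finset.mem_image]
    exact ⟨0, Finset.mem_range.mpr hn, by simp⟩
  -- (β) : every relabeling has winding K.toNat
  have hβ : ∀ g₁ : ℤ → ℤ,
      IsRelabelOn n gg {m : ℤ | m % (n:ℤ) ∈ orbitF n gg i} B g₁ →
      winding B g₁ = K.toNat := by
    intro g₁ ⟨φ, hmono, hperφ, hrangeφ, hcommφ⟩
    have hφinj := hmono.injective
    have hφS : ∀ m : ℤ, φ m % (n:ℤ) ∈ orbitF n gg i := by
      intro m
      have h1 : φ m ∈ Set.range φ := Set.mem_range_self m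
      rw [hrangeφ] at h1
      exact h1
    have hφmul : ∀ (c m : ℤ), φ (m + c * B) = φ m + c * n := per_mul_gen hperφ
    have hφres_to : ∀ m m' : ℤ, φ m % (n:ℤ) = φ m' % n → m % (B:ℤ) = m' % B := by
      intro m m' h
      obtain ⟨c, hc⟩ := res_exists h
      have h1 : φ m' = φ (m + c * B) := by rw [hφmul]; linarith
      have h2 := hφinj h1
      rw [h2, res_of_add_mul]
    have hg₁per : ∀ m : ℤ, g₁ (m + (B:ℤ)) = g₁ m + B := by
      intro m
      apply hφinj
      rw [← hcommφ, hperφ, hperφ, hggper, hcommφ]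
    have hg₁bdd : IsBoundedFn B g₁ := by
      intro m
      have h1 := (hggbdd (φ m)).1
      have h2 := (hggbdd (φ m)).2
      rw [hcommφ] at h1 h2
      constructor
      · exact hmono.le_iff_le.mp h1
      · have h3 : φ (g₁ m) ≤ φ (m + B) := by rw [hperφ]; exact h2
        exact hmono.le_iff_le.mp h3
    have hg₁inj : Function.Injective g₁ := by
      intro a b h
      apply hφinj
      apply hgginj
      rw [hcommφ, hcommφ, h]
    have hitφ : ∀ (r : ℕ) (m : ℤ), gg^[r] (φ m) = φ (g₁^[r] m) := by
      intro r
      induction r with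
      | zero => simp
      | succ r ih =>
          intro m
          rw [Function.iterate_succ_apply', ih, hcommφ]
          exact congrArg φ (Function.iterate_succ_apply' g₁ r m).symm
    have hO'char : ∀ x : ℤ, x % (n:ℤ) ∈ orbitF n gg i →
        ∃ s : ℕ, s < B ∧ x % (n:ℤ) = gg^[s+1] i % n := by
      intro x hx
      rw [horbit_eq, hO', Finset.mem_image] at hx
      obtain ⟨s, hs, hsx⟩ := hx
      rw [Finset.mem_range] at hs
      exact ⟨s, hs, by rw [← hsx, hO'' s hs]⟩
    have hcycB : IsCycleMod B g₁ := by
      intro m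
      obtain ⟨s₀, hs₀B, hs₀⟩ := hO'char (φ 0) (hφS 0)
      obtain ⟨s₁, hs₁B, hs₁⟩ := hO'char (φ m) (hφS m)
      rcases le_or_gt s₀ s₁ with hc | hc
      · refine ⟨s₁ - s₀, by omega, ?_⟩
        apply hφres_to
        rw [← hitφ]
        have e1 : gg^[s₁ - s₀] (φ 0) % (n:ℤ) = gg^[s₁ - s₀] (gg^[s₀+1] i) % n :=
          iter_res hggper hs₀ _
        rw [e1, ← Function.iterate_add_apply, show s₁ - s₀ + (s₀+1) = s₁+1 by omega, ← hs₁]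
      · refine ⟨s₁ + B - s₀, by omega, ?_⟩
        apply hφres_to
        rw [← hitφ]
        have e1 : gg^[s₁ + B - s₀] (φ 0) % (n:ℤ) = gg^[s₁ + B - s₀] (gg^[s₀+1] i) % n :=
          iter_res hggper hs₀ _
        have e2 : gg^[s₁ + B - s₀ + (s₀+1)] i = gg^[s₁+1] i + K * (n:ℤ) := by
          rw [show s₁ + B - s₀ + (s₀+1) = (s₁+1) + B by omega]
          exact hgp (s₁+1)
        rw [e1, ← Function.iterate_add_apply, e2, res_of_add_mul, ← hs₁]
    have hg₁N := fact1 (n := B) (f := g₁) hBpos hg₁inj hg₁per hg₁bdd hcycB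
    obtain ⟨x₀, hx₀⟩ : ∃ x₀ : ℤ, φ x₀ = i := by
      have h1 : i ∈ {m : ℤ | m % (n:ℤ) ∈ orbitF n gg i} := hiorb
      rw [← hrangeφ] at h1
      exact h1
    have e2 : φ (g₁^[B] x₀) = φ (x₀ + K * B) := by
      rw [← hitφ, hx₀, hgB, hφmul, hx₀]
    have e3 := hφinj e2
    rw [hg₁N x₀] at e3
    have e4 : ((winding B g₁ : ℤ)) * B = K * B := by omega
    have e5 : ((winding B g₁ : ℤ)) = K :=
      mul_right_cancel₀ (by exact_mod_cast hBpos.ne') e4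
    omega
  -- (α) : existence of a relabeling
  have hα : ∃ g₁ : ℤ → ℤ,
      IsRelabelOn n gg {m : ℤ | m % (n:ℤ) ∈ orbitF n gg i} B g₁ := by
    set O := orbitF n gg i with hO
    set E := O.orderEmbOfFin hcard with hE
    have hBz : ((B:ℤ)) ≠ 0 := by exact_mod_cast hBpos.ne'
    have hBzpos : (0:ℤ) < B := by exact_mod_cast hBpos
    have hidx : ∀ m : ℤ, (m % (B:ℤ)).toNat < B := by
      intro m
      have h1 : 0 ≤ m % (B:ℤ) := Int.emod_nonneg _ hBz
      have h2 : m % (B:ℤ) < B := Int.emod_lt_of_pos _ hBzpos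
      omega
    set φ₀ : ℤ → ℤ := fun m => (n:ℤ) * (m / (B:ℤ)) + E ⟨(m % (B:ℤ)).toNat, hidx m⟩
      with hφ₀
    have hEmem : ∀ t : Fin B, (E t : ℤ) ∈ O := fun t => Finset.orderEmbOfFin_mem O hcard t
    have hEbdd : ∀ t : Fin B, 0 ≤ (E t : ℤ) ∧ (E t : ℤ) < n := fun t => hOelem _ (hEmem t)
    have hφval : ∀ (m : ℤ) (t : Fin B), m % (B:ℤ) = ((t:ℕ):ℤ) →
        φ₀ m = (n:ℤ) * (m / (B:ℤ)) + E t := by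
      intro m t ht
      simp only [hφ₀]
      congr 2
      apply Fin.ext
      show (m % (B:ℤ)).toNat = (t:ℕ)
      omega
    clear_value φ₀ E
    have hmono₀ : StrictMono φ₀ := by
      apply strictMono_int_of_lt_succ
      intro m
      have hm0 : 0 ≤ m % (B:ℤ) := Int.emod_nonneg _ hBz
      have hmB : m % (B:ℤ) < B := Int.emod_lt_of_pos _ hBzpos
      have hrm : m = m % (B:ℤ) + (m / B) * B := by
        have := Int.emod_add_mul_ediv m (B:ℤ); linarith
      have hφm := hφval m ⟨(m % (B:ℤ)).toNat, hidx m⟩ (by show _ = (((m % (B:ℤ)).toNat : ℕ):ℤ); omega)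
      by_cases hcase : m % (B:ℤ) + 1 < B
      · obtain ⟨h1, h2⟩ := emod_ediv_of hBpos (s := m % (B:ℤ) + 1) (q := m / (B:ℤ))
          (r := m + 1) (by omega) hcase (by omega)
        have ht' : (m+1) % (B:ℤ) = (((⟨(m % (B:ℤ)).toNat + 1, by omega⟩ : Fin B) : ℕ):ℤ) := by
          show (m+1) % (B:ℤ) = (((m % (B:ℤ)).toNat + 1 : ℕ):ℤ)
          omega
        have hv := hφval (m+1) _ ht'
        rw [hv, h2, hφm]
        have hlt : (⟨(m % (B:ℤ)).toNat, hidx m⟩ : Fin B)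
            < ⟨(m % (B:ℤ)).toNat + 1, by omega⟩ := by
          simp [Fin.mk_lt_mk]
        have := E.strictMono hlt
        omega
      · have hs : m % (B:ℤ) = B - 1 := by omega
        obtain ⟨h1, h2⟩ := emod_ediv_of hBpos (s := (0:ℤ)) (q := m / (B:ℤ) + 1)
          (r := m + 1) le_rfl hBzpos (by linear_combination hrm + hs)
        have ht' : (m+1) % (B:ℤ) = (((⟨0, hBpos⟩ : Fin B) : ℕ):ℤ) := by
          show (m+1) % (B:ℤ) = ((0 : ℕ):ℤ)
          omega
        have hv := hφval (m+1) _ ht'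
        rw [hv, h2, hφm]
        have h6 := (hEbdd ⟨(m % (B:ℤ)).toNat, hidx m⟩).2
        have h7 := (hEbdd ⟨0, hBpos⟩).1
        have h8 : (n:ℤ) * (m / (B:ℤ) + 1) = n * (m / (B:ℤ)) + n := by ring
        linarith [h6, h7, h8]
    have hper₀ : ∀ m : ℤ, φ₀ (m + (B:ℤ)) = φ₀ m + n := by
      intro m
      have h1 : (m + (B:ℤ)) % B = m % B := by
        rw [show m + (B:ℤ) = m + 1 * B by ring, res_of_add_mul]
      have h2 : (m + (B:ℤ)) / B = m / B + 1 := by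
        rw [show m + (B:ℤ) = m + 1 * B by ring, Int.add_mul_ediv_right _ _ hBz]
      have hm0 : 0 ≤ m % (B:ℤ) := Int.emod_nonneg _ hBz
      have hv := hφval (m + B) ⟨(m % (B:ℤ)).toNat, hidx m⟩
        (by show _ = (((m % (B:ℤ)).toNat : ℕ):ℤ); omega)
      rw [hv, h2]
      have hφm := hφval m ⟨(m % (B:ℤ)).toNat, hidx m⟩
        (by show _ = (((m % (B:ℤ)).toNat : ℕ):ℤ); omega)
      rw [hφm]
      ring
    have hrange₀ : Set.range φ₀ = {m : ℤ | m % (n:ℤ) ∈ O} := by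
      ext x
      constructor
      · rintro ⟨m, rfl⟩
        have h1 : φ₀ m % (n:ℤ) = (E ⟨(m % (B:ℤ)).toNat, hidx m⟩ : ℤ) := by
          have hm0 : 0 ≤ m % (B:ℤ) := Int.emod_nonneg _ hBz
          have hφm := hφval m ⟨(m % (B:ℤ)).toNat, hidx m⟩
            (by show _ = (((m % (B:ℤ)).toNat : ℕ):ℤ); omega)
          rw [hφm, show (n:ℤ) * (m / (B:ℤ)) + (E ⟨(m % (B:ℤ)).toNat, hidx m⟩ : ℤ)
            = (E ⟨(m % (B:ℤ)).toNat, hidx m⟩ : ℤ) + (m / (B:ℤ)) * n by ring,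
            res_of_add_mul]
          exact Int.emod_eq_of_lt (hEbdd _).1 (hEbdd _).2
        show φ₀ m % (n:ℤ) ∈ O
        rw [h1]
        exact hEmem _
      · intro hx
        have hx' : x % (n:ℤ) ∈ (O : Set ℤ) := hx
        rw [← Finset.range_orderEmbOfFin O hcard] at hx'
        rw [show O.orderEmbOfFin hcard = E from hE.symm] at hx'
        obtain ⟨t, ht⟩ := hx'
        refine ⟨(x / n) * B + ((t:ℕ):ℤ), ?_⟩
        obtain ⟨h1, h2⟩ := emod_ediv_of hBpos (s := ((t:ℕ):ℤ)) (q := x / (n:ℤ))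
          (r := (x / n) * B + ((t:ℕ):ℤ)) (by positivity) (by exact_mod_cast t.2) (by ring)
        have hv := hφval ((x / n) * B + ((t:ℕ):ℤ)) t (by rw [h1])
        rw [hv, h2]
        have ht2 : (E t : ℤ) = x % n := ht
        rw [ht2]
        have := Int.emod_add_mul_ediv x (n:ℤ)
        linarith
    have hex : ∀ m : ℤ, ∃ m' : ℤ, φ₀ m' = gg (φ₀ m) := by
      intro m
      have h1 : φ₀ m ∈ Set.range φ₀ := Set.mem_range_self m
      rw [hrange₀] at h1
      have h2 : gg (φ₀ m) ∈ {m : ℤ | m % (n:ℤ) ∈ O} := hclose _ h1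
      rw [← hrange₀] at h2
      exact h2
    refine ⟨fun m => Classical.choose (hex m), φ₀, hmono₀, hper₀, hrange₀, fun m => ?_⟩
    exact (Classical.choose_spec (hex m)).symm
  -- conclude
  obtain ⟨g₁α, hrelα⟩ := hα
  have hW : {k₁ : ℕ | ∃ g₁ : ℤ → ℤ,
      IsRelabelOn n gg {m : ℤ | m % (n:ℤ) ∈ orbitF n gg i} (orbitF n gg i).card g₁ ∧
      winding (orbitF n gg i).card g₁ = k₁} = {K.toNat} := by
    ext k₁
    simp only [Set.mem_setOf_eq, Set.mem_singleton_iff]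
    constructor
    · rintro ⟨g₁, hrel, hwind⟩
      rw [hcard] at hrel hwind
      rw [← hwind]
      exact hβ g₁ hrel
    · rintro rfl
      refine ⟨g₁α, ?_, ?_⟩
      · rw [hcard]; exact hrelα
      · rw [hcard]; exact hβ _ hrelα
  refine ⟨B, K, ρj, hBpos, hBn, hρj0, hρjn, hρj, hK0, hK, ?_⟩
  rw [resParamsAt, hW, hcard]
  simp
/-! ### Direction B : InFtPlus gives a touching point -/

lemma dirB (hn : 0 < n) (hinj : Function.Injective f)
    (hper : ∀ i : ℤ, f (i + (n:ℤ)) = f i + (n:ℤ)) (hbdd : IsBoundedFn n f)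
    (hcyc : IsCycleMod n f) (hN : f^[n] 0 = (k:ℤ) * n) (γ : ℤ × ℤ)
    (h : InFtPlus k n f γ) :
    ∃ r : ℤ, uu n k f r ≤ uu n k f (r - γ.2) + γ.1 * n := by
  have hnz : (0:ℤ) < n := by exact_mod_cast hn
  obtain ⟨t, hcase⟩ := h
  rcases hcase with h0 | ⟨p, hp, hpe⟩
  · rw [Prod.mk.injEq] at h0
    have h1 : γ.1 = t * k := by omega
    have h2 : γ.2 = t * n := by omega
    refine ⟨0, ?_⟩
    rw [h2, show (0:ℤ) - t * n = 0 + (-t) * n by ring, uu_shift hn, uu_zero, h1]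
    have : (0:ℤ) + (-t) * ((k:ℤ) * n) + (t * k) * n = 0 := by ring
    linarith
  · rw [invMultiset, Multiset.mem_map] at hp
    obtain ⟨q, hq, hqp⟩ := hp
    obtain ⟨i, j⟩ := q
    have hq' : (i, j) ∈ inversions n f := hq
    rw [inversions, Finset.mem_filter, Finset.mem_product, Finset.mem_Icc, Finset.mem_Icc]
      at hq'
    obtain ⟨⟨⟨h1i, hin⟩, ⟨h1j, h3j⟩⟩, hij, hfij⟩ := hq'
    dsimp only at h1i hin h1j h3j hij hfij
    obtain ⟨B, K, ρj, hBpos, hBn, hρj0, hρjn, hρj, hK0, hK, hpar⟩ :=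
      central hn hinj hper hbdd hcyc hN h1i hij hfij
    simp only at hqp
    rw [hpar] at hqp
    rw [← hqp, Prod.mk.injEq] at hpe
    obtain ⟨hp1, hp2⟩ := hpe
    simp only at hp1 hp2
    have hγ1 : γ.1 = K + t * k := by omega
    have hγ2 : γ.2 = (B:ℤ) + t * n := by omega
    obtain ⟨c, hc⟩ := res_exists hρj
    have hfb : f^[B] j = uu n k f (ρj + B) + c * n := by
      rw [hc, iter_per hper, ← uu_add_nat hn hper hN]
    refine ⟨ρj + B + t * n, ?_⟩
    rw [show ρj + (B:ℤ) + t * n - γ.2 = ρj by omega,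
      show ρj + (B:ℤ) + t * n = (ρj + (B:ℤ)) + t * n by ring, uu_shift hn]
    have e1 : uu n k f (ρj + (B:ℤ)) = i + K * n - c * n := by linarith [hfb, hK]
    have e2 : uu n k f ρj = j - c * n := by linarith [hc]
    have e3 : γ.1 * (n:ℤ) = (K + t * (k:ℤ)) * n := by rw [hγ1]
    rw [e1, e2, e3]
    have : ((K:ℤ) + t * k) * n = K * n + t * ((k:ℤ) * n) := by ring
    linarith

/-! ### Window sums -/

lemma uu_tel (hn : 0 < n) (hper : ∀ i : ℤ, f (i + (n:ℤ)) = f i + (n:ℤ))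
    (hN : f^[n] 0 = (k:ℤ) * n) (c : ℤ) (N : ℕ) :
    ∑ s ∈ Finset.range N, (uu n k f (c + s + 1) - uu n k f (c + s))
      = uu n k f (c + N) - uu n k f c := by
  have h := Finset.sum_range_sub (fun s : ℕ => uu n k f (c + s)) N
  simp only [Nat.cast_zero, add_zero] at h
  rw [← h]
  apply Finset.sum_congr rfl
  intro s _
  congr 2
  push_cast
  ring

lemma hGstep (hn : 0 < n) (hper : ∀ i : ℤ, f (i + (n:ℤ)) = f i + (n:ℤ))
    (hN : f^[n] 0 = (k:ℤ) * n) (c : ℤ) :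
    (∑ s ∈ Finset.range n, uu n k f (c + 1 + s))
      = (∑ s ∈ Finset.range n, uu n k f (c + s)) + (k:ℤ) * n := by
  have h1 : ∑ s ∈ Finset.range n, uu n k f (c + 1 + s)
      = ∑ s ∈ Finset.range n, (uu n k f (c + s) + (uu n k f (c + s + 1) - uu n k f (c + s))) := by
    apply Finset.sum_congr rfl
    intro s _
    have : uu n k f (c + 1 + s) = uu n k f (c + s + 1) := by congr 1; ring
    rw [this]; ring
  rw [h1, Finset.sum_add_distrib, uu_tel hn hper hN]
  have h2 : uu n k f (c + n) = uu n k f c + 1 * ((k:ℤ) * n) := by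
    rw [show c + (n:ℤ) = c + 1 * n by ring, uu_shift hn]
  rw [h2]; ring

lemma hGdown (hn : 0 < n) (hper : ∀ i : ℤ, f (i + (n:ℤ)) = f i + (n:ℤ))
    (hN : f^[n] 0 = (k:ℤ) * n) (b : ℕ) (c : ℤ) :
    (∑ s ∈ Finset.range n, uu n k f (c - b + s))
      = (∑ s ∈ Finset.range n, uu n k f (c + s)) - (b:ℤ) * ((k:ℤ) * n) := by
  induction b with
  | zero => simp
  | succ b ih =>
      have h1 : ∑ s ∈ Finset.range n, uu n k f (c - (b+1:ℕ) + s)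
          = ∑ s ∈ Finset.range n, uu n k f ((c - b - 1) + s) := by
        apply Finset.sum_congr rfl
        intro s _
        congr 1
        push_cast
        ring
      have h2 := hGstep hn hper hN (c - b - 1)
      have h3 : ∑ s ∈ Finset.range n, uu n k f ((c - b - 1) + 1 + s)
          = ∑ s ∈ Finset.range n, uu n k f (c - b + s) := by
        apply Finset.sum_congr rfl
        intro s _
        congr 1
        ring
      rw [h1]
      rw [h3] at h2
      rw [ih] at h2
      push_cast
      linarith

/-! ### Direction A : a touching point gives InFtPlus -/

lemma dirA (hn : 0 < n) (hinj : Function.Injective f)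
    (hper : ∀ i : ℤ, f (i + (n:ℤ)) = f i + (n:ℤ)) (hbdd : IsBoundedFn n f)
    (hcyc : IsCycleMod n f) (hN : f^[n] 0 = (k:ℤ) * n) (a b : ℤ)
    (hhp : a * n < (k:ℤ) * b) (hex : ∃ r : ℤ, uu n k f r ≤ uu n k f (r - b) + a * n) :
    InFtPlus k n f (a, b) := by
  have hnz : (0:ℤ) < n := by exact_mod_cast hn
  set t : ℤ := b / n with ht
  set b₀ : ℤ := b % n with hb₀
  have hb₀0 : 0 ≤ b₀ := Int.emod_nonneg _ hnz.ne'
  have hb₀n : b₀ < n := Int.emod_lt_of_pos _ hnz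
  have hbdec : b = b₀ + t * n := by
    have := Int.emod_add_mul_ediv b (n:ℤ); simp only [ht, hb₀]; linarith
  clear_value t b₀
  set a₀ : ℤ := a - t * k with ha₀
  have hhp₀ : a₀ * n < (k:ℤ) * b₀ := by
    have h1 : (k:ℤ) * b₀ = k * b - (t * k) * n := by rw [hbdec]; ring
    have h2 : a₀ * (n:ℤ) = a * n - (t * k) * n := by rw [ha₀]; ring
    linarith
  clear_value a₀
  have hex₀ : ∃ r : ℤ, uu n k f r ≤ uu n k f (r - b₀) + a₀ * n := by
    obtain ⟨r, hr⟩ := hex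
    refine ⟨r, ?_⟩
    have h1 : uu n k f (r - b) = uu n k f (r - b₀) + (-t) * ((k:ℤ) * n) := by
      rw [show r - b = (r - b₀) + (-t) * n by rw [hbdec]; ring, uu_shift hn]
    have h2 : a₀ * (n:ℤ) = a * n - t * ((k:ℤ) * n) := by rw [ha₀]; ring
    linarith
  clear hex
  have hb₀pos : 0 < b₀ := by
    rcases lt_or_eq_of_le hb₀0 with h | h
    · exact h
    · exfalso
      obtain ⟨r, hr⟩ := hex₀
      rw [← h, sub_zero] at hr
      have : a₀ * n < 0 := by
        have : (k:ℤ) * b₀ = 0 := by rw [← h]; ring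
        linarith
      linarith
  -- find a sign change
  obtain ⟨r₀, hr₀⟩ := hex₀
  have hDneg : ∃ m : ℕ, uu n k f (r₀ + m) > uu n k f (r₀ + m - b₀) + a₀ * n := by
    by_contra hcon
    push_neg at hcon
    have hcon' : ∀ s : ℕ, uu n k f (r₀ + 1 + s) ≤ uu n k f (r₀ + 1 + s - b₀) + a₀ * n := by
      intro s
      have h := hcon (s + 1)
      rw [show r₀ + ((s+1:ℕ):ℤ) = r₀ + 1 + s by push_cast; ring] at h
      exact h
    have hsum : ∑ s ∈ Finset.range n,
        (uu n k f (r₀ + 1 + s - b₀) + a₀ * n - uu n k f (r₀ + 1 + s)) =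
        n * (a₀ * n) - b₀ * ((k:ℤ) * n) := by
      have h1 : ∑ s ∈ Finset.range n, uu n k f (r₀ + 1 + s - b₀)
          = ∑ s ∈ Finset.range n, uu n k f ((r₀ + 1 - b₀) + s) := by
        apply Finset.sum_congr rfl; intro s _; congr 1; ring
      have h3 := hGdown hn hper hN b₀.toNat (r₀ + 1)
      rw [Int.toNat_of_nonneg hb₀0] at h3
      have h4 : ∑ s ∈ Finset.range n,
          (uu n k f (r₀ + 1 + s - b₀) + a₀ * n - uu n k f (r₀ + 1 + s))
          = (∑ s ∈ Finset.range n, uu n k f (r₀ + 1 + s - b₀))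
            - (∑ s ∈ Finset.range n, uu n k f (r₀ + 1 + s))
            + (n:ℤ) * (a₀ * n) := by
        simp only [Finset.sum_sub_distrib, Finset.sum_add_distrib, Finset.sum_const,
          Finset.card_range, nsmul_eq_mul]
        ring
      rw [h4, h1, h3]
      ring
    have hnonneg : (0:ℤ) ≤ ∑ s ∈ Finset.range n,
        (uu n k f (r₀ + 1 + s - b₀) + a₀ * n - uu n k f (r₀ + 1 + s)) := by
      apply Finset.sum_nonneg
      intro s _
      have := hcon' s
      linarith
    rw [hsum] at hnonneg
    have hneg : (n:ℤ) * (a₀ * n) - b₀ * ((k:ℤ) * n) < 0 := by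
      have h6 : (n:ℤ) * (a₀ * n) - b₀ * ((k:ℤ) * n) = n * (a₀ * n - k * b₀) := by ring
      rw [h6]
      apply mul_neg_of_pos_of_neg hnz
      linarith
    linarith
  -- least m with negative value
  have hm₀spec := Nat.find_spec hDneg
  set m₀ := Nat.find hDneg with hm₀def
  have hm₀pos : 1 ≤ m₀ := by
    by_contra h
    have h0 : m₀ = 0 := by omega
    rw [h0] at hm₀spec
    push_cast at hm₀spec
    simp at hm₀spec
    linarith
  have hmin := Nat.find_min hDneg (show m₀ - 1 < m₀ by omega)
  set rs : ℤ := r₀ + (m₀:ℤ) - 1 with hrs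
  have e1 : r₀ + ((m₀ - 1 : ℕ):ℤ) = rs := by rw [hrs]; omega
  have e2 : r₀ + ((m₀:ℕ):ℤ) = rs + 1 := by rw [hrs]; ring
  rw [e1] at hmin
  rw [e2] at hm₀spec
  push_neg at hmin
  clear_value rs
  -- hmin : uu rs ≤ uu (rs - b₀) + a₀ * n ; hm₀spec : uu (rs+1) > uu (rs+1-b₀) + a₀ * n
  have hfj₀ : f (uu n k f (rs - b₀) + a₀ * n) = uu n k f (rs + 1 - b₀) + a₀ * n := by
    rw [per_mul hper, ← uu_succ hn hper hN, show rs - b₀ + 1 = rs + 1 - b₀ by ring]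
  have hfi₀ : f (uu n k f rs) = uu n k f (rs + 1) := (uu_succ hn hper hN rs).symm
  have hflt : f (uu n k f (rs - b₀) + a₀ * n) < f (uu n k f rs) := by
    rw [hfj₀, hfi₀]; linarith
  have hij₀ : uu n k f rs < uu n k f (rs - b₀) + a₀ * n := by
    rcases lt_or_eq_of_le hmin with h | h
    · exact h
    · exfalso; rw [h] at hflt; exact lt_irrefl _ hflt
  have hdlt : uu n k f (rs - b₀) + a₀ * n - uu n k f rs < n := by
    have st1 := (uu_step hbdd hn hper hN rs).2
    have st2 := (uu_step hbdd hn hper hN (rs - b₀)).1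
    have e3 : uu n k f (rs - b₀ + 1) = uu n k f (rs + 1 - b₀) := by congr 1; ring
    linarith
  -- position into the box
  obtain ⟨sdiv, hsd⟩ : ∃ sdiv : ℤ, (n:ℤ) * sdiv + (uu n k f rs - 1) % n = uu n k f rs - 1 :=
    ⟨(uu n k f rs - 1) / n, Int.mul_ediv_add_emod _ _⟩
  have hsd0 : 0 ≤ (uu n k f rs - 1) % (n:ℤ) := Int.emod_nonneg _ hnz.ne'
  have hsdn : (uu n k f rs - 1) % (n:ℤ) < n := Int.emod_lt_of_pos _ hnz
  set ii : ℤ := uu n k f rs - sdiv * n with hii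
  set jj : ℤ := uu n k f (rs - b₀) + a₀ * n - sdiv * n with hjj
  have hcomm : sdiv * (n:ℤ) = n * sdiv := mul_comm _ _
  have h1ii : 1 ≤ ii := by omega
  have hiin : ii ≤ n := by omega
  have hijlt : ii < jj := by omega
  have hjj3 : jj ≤ 3 * n := by omega
  have hfjj : f jj = f (uu n k f (rs - b₀) + a₀ * n) + (-sdiv) * n := by
    rw [show jj = (uu n k f (rs - b₀) + a₀ * n) + (-sdiv) * n by rw [hjj]; ring,
      per_mul hper]
  have hfii : f ii = f (uu n k f rs) + (-sdiv) * n := by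
    rw [show ii = uu n k f rs + (-sdiv) * n by rw [hii]; ring, per_mul hper]
  have hfij' : f jj < f ii := by rw [hfjj, hfii]; linarith
  have hmem : (ii, jj) ∈ inversions n f := by
    rw [inversions, Finset.mem_filter, Finset.mem_product, Finset.mem_Icc, Finset.mem_Icc]
    exact ⟨⟨⟨h1ii, hiin⟩, ⟨by omega, hjj3⟩⟩, hijlt, hfij'⟩
  obtain ⟨B, K, ρj, hBpos, hBn, hρj0, hρjn, hρjres, hK0, hK, hpar⟩ :=
    central hn hinj hper hbdd hcyc hN h1ii hijlt hfij'
  have hb₀nat : ((b₀.toNat:ℕ):ℤ) = b₀ := Int.toNat_of_nonneg hb₀0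
  have hfbb : f^[b₀.toNat] jj = ii + a₀ * n := by
    have hA1 : f^[b₀.toNat] jj = f^[b₀.toNat] (uu n k f (rs - b₀)) + (a₀ - sdiv) * n := by
      rw [show jj = uu n k f (rs - b₀) + (a₀ - sdiv) * n by rw [hjj]; ring]
      exact iter_per hper _ _ _
    have hA2 : f^[b₀.toNat] (uu n k f (rs - b₀)) = uu n k f (rs - b₀ + (b₀.toNat:ℤ)) :=
      (uu_add_nat hn hper hN _ _).symm
    have hA3 : rs - b₀ + ((b₀.toNat:ℕ):ℤ) = rs := by omega
    rw [hA1, hA2, hA3, hii]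
    ring
  have hres1 : uu n k f (ρj + B) % (n:ℤ) = f^[B] jj % n := by
    rw [uu_add_nat hn hper hN]
    exact iter_res hper hρjres B
  have hres2 : uu n k f (ρj + (b₀.toNat:ℤ)) % (n:ℤ) = f^[b₀.toNat] jj % n := by
    rw [uu_add_nat hn hper hN]
    exact iter_res hper hρjres b₀.toNat
  have hiB : f^[B] jj % (n:ℤ) = ii % n := by rw [hK, res_of_add_mul]
  have hib : f^[b₀.toNat] jj % (n:ℤ) = ii % n := by rw [hfbb, res_of_add_mul]
  have heq : uu n k f (ρj + (B:ℤ)) % (n:ℤ) = uu n k f (ρj + (b₀.toNat:ℤ)) % n := by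
    rw [hres1, hres2, hiB, hib]
  have h2 := uu_inj (k := k) hn hcyc heq
  obtain ⟨c, hc⟩ := res_exists h2
  have hceq : (B:ℤ) = b₀ := by
    have hd : b₀ - (B:ℤ) = c * n := by omega
    have hc0 : c = 0 := by
      by_contra hcne
      rcases lt_or_gt_of_ne hcne with hlt | hgt
      · have h5 : c * (n:ℤ) ≤ -1 * n := mul_le_mul_of_nonneg_right (by omega) hnz.le
        linarith
      · have h5 : 1 * (n:ℤ) ≤ c * n := mul_le_mul_of_nonneg_right (by omega) hnz.le
        linarith
    rw [hc0, zero_mul] at hd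
    omega
  have hBnat : B = b₀.toNat := by omega
  have hKa : K = a₀ := by
    have h6 : ii + K * (n:ℤ) = ii + a₀ * n := by rw [← hK, hBnat, hfbb]
    have h7 : K * (n:ℤ) = a₀ * n := by linarith
    exact mul_right_cancel₀ hnz.ne' h7
  refine ⟨t, Or.inr ⟨(K.toNat, B), ?_, ?_⟩⟩
  · rw [invMultiset, Multiset.mem_map]
    exact ⟨(ii, jj), Finset.mem_val.mpr hmem, hpar⟩
  · rw [Prod.mk.injEq]
    constructor
    · show (K.toNat:ℤ) = (a, b).1 - t * k
      have h8 : (K.toNat:ℤ) = K := Int.toNat_of_nonneg hK0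
      rw [h8, hKa, ha₀]
    · show (B:ℤ) = (a, b).2 - t * n
      show (B:ℤ) = b - t * n
      rw [hceq, hbdec]; ring

end Stmt11

/-- For `f ∈ Θ_{k,n}`, `δ = (k,n)` and `δ^⊥ = (1, -k/n)`: if
`⟨δ^⊥,α⟩ < 0` (i.e. `α₁·n < k·α₂`), `⟨δ^⊥,β⟩ < 0`, and neither `α` nor `β` lies in
`F̃'(f) + ℤδ`, then `α + β ∉ F̃'(f) + ℤδ`. -/
theorem positroid_stmt11 (k n : ℕ) (f : ℤ → ℤ) (hf : IsTheta k n f) (α β : ℤ × ℤ)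
    (hα : α.1 * (n : ℤ) < (k : ℤ) * α.2) (hβ : β.1 * (n : ℤ) < (k : ℤ) * β.2)
    (hα' : ¬ InFtPlus k n f α) (hβ' : ¬ InFtPlus k n f β) :
    ¬ InFtPlus k n f (α.1 + β.1, α.2 + β.2) := by
  obtain ⟨⟨⟨hbij, hper⟩, hbdd⟩, hcyc, hwind⟩ := hf
  have hinj := hbij.injective
  have hn : 0 < n := by
    obtain ⟨r, hr, _⟩ := hcyc 0
    omega
  have hN : f^[n] 0 = (k:ℤ) * n := by
    have h := Stmt11.fact1 hn hinj hper hbdd hcyc 0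
    rw [hwind] at h
    simpa using h
  intro hcon
  obtain ⟨r, hr⟩ := Stmt11.dirB hn hinj hper hbdd hcyc hN _ hcon
  simp only at hr
  have hA : ∀ r' : ℤ, Stmt11.uu n k f (r' - α.2) + α.1 * n < Stmt11.uu n k f r' := by
    intro r'
    by_contra hge
    push_neg at hge
    apply hα'
    exact Stmt11.dirA hn hinj hper hbdd hcyc hN α.1 α.2 hα ⟨r', hge⟩
  have hB : ∀ r' : ℤ, Stmt11.uu n k f (r' - β.2) + β.1 * n < Stmt11.uu n k f r' := by
    intro r'
    by_contra hge
    push_neg at hge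
    apply hβ'
    exact Stmt11.dirA hn hinj hper hbdd hcyc hN β.1 β.2 hβ ⟨r', hge⟩
  have h1 := hA (r - β.2)
  have h2 := hB r
  rw [show r - (α.2 + β.2) = (r - β.2) - α.2 by ring] at hr
  linarith
end

section
/- Given a concave profile H = (0 = H_0, H_1, ..., H_n = k), the associated permutation f_H belongs to Θ_{k,n} and satisfies ⌊f^r(0)/n⌋ = ⌊H_r⌋ for all 0 ≤ r ≤ n, where f = f_H. -/
open Finset

lemma auxDvdSmall (N t : ℤ) (hN : 0 < N) (h : N ∣ t) (h1 : -N < t) (h2 : t < N) : t = 0 := by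
  obtain ⟨m, rfl⟩ := h
  have : m = 0 := by
    by_contra hm
    rcases lt_or_gt_of_ne hm with h' | h'
    · have hm1 : m ≤ -1 := by omega
      nlinarith
    · have hm1 : 1 ≤ m := by omega
      nlinarith
  simp [this]

lemma auxIntStep (N q q' x x' : ℤ) (hN : 0 < N) (hx : 0 ≤ x) (hxN : x < N)
    (hx' : 0 ≤ x') (hx'N : x' < N) (h1 : N*q + x < N*q' + x') (h2 : N*q' + x' < N*q + x + N) :
    (x' < x → q' = q + 1) ∧ (x < x' → q' = q) := by
  constructor
  · intro hlt
    have h5 : 0 < q' - q := by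
      by_contra h
      push_neg at h
      nlinarith
    have h6 : q' - q < 2 := by
      by_contra h
      push_neg at h
      nlinarith
    omega
  · intro hlt
    have h5 : -1 < q' - q := by
      by_contra h
      push_neg at h
      nlinarith
    have h6 : q' - q < 1 := by
      by_contra h
      push_neg at h
      nlinarith
    omega

lemma auxRealStep (x y : ℝ) (h1 : 0 < y - x) (h2 : y - x < 1) :
    (Int.fract y < Int.fract x → ⌊y⌋ = ⌊x⌋ + 1) ∧ (Int.fract x < Int.fract y → ⌊y⌋ = ⌊x⌋) := by
  have hx := Int.self_sub_fract x
  have hy := Int.self_sub_fract y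
  have hfx0 := Int.fract_nonneg x
  have hfx1 := Int.fract_lt_one x
  have hfy0 := Int.fract_nonneg y
  have hfy1 := Int.fract_lt_one y
  constructor
  · intro h
    have c1 : (0:ℝ) < ((⌊y⌋ - ⌊x⌋ : ℤ) : ℝ) := by push_cast; linarith
    have c2 : ((⌊y⌋ - ⌊x⌋ : ℤ) : ℝ) < 2 := by push_cast; linarith
    have d1 : 0 < ⌊y⌋ - ⌊x⌋ := by exact_mod_cast c1
    have d2 : ⌊y⌋ - ⌊x⌋ < 2 := by exact_mod_cast c2
    omega
  · intro h
    have c1 : (-1:ℝ) < ((⌊y⌋ - ⌊x⌋ : ℤ) : ℝ) := by push_cast; linarith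
    have c2 : ((⌊y⌋ - ⌊x⌋ : ℤ) : ℝ) < 1 := by push_cast; linarith
    have d1 : -1 < ⌊y⌋ - ⌊x⌋ := by exact_mod_cast c1
    have d2 : ⌊y⌋ - ⌊x⌋ < 1 := by exact_mod_cast c2
    omega

/-- Given a concave profile `H = (0 = H_0, …, H_n = k)`, the associated
bounded affine permutation `f_H` (characterized by the condition that the residues
`f^i(0) mod n`, `0 ≤ i < n`, have the same relative order as the fractional parts `h_i`)
belongs to `Θ_{k,n}` and satisfies `⌊f^r(0)/n⌋ = ⌊H_r⌋` for all `0 ≤ r ≤ n`. -/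
theorem positroid_stmt14 (k n : ℕ) (hn : 0 < n) (H : ℕ → ℝ)
    (hH0 : H 0 = 0) (hHn : H n = k)
    (hinc : ∀ i < n, 0 < H (i + 1) - H i ∧ H (i + 1) - H i < 1)
    (hconc : ∀ i j : ℕ, i ≤ j → j < n → H (j + 1) - H j ≤ H (i + 1) - H i)
    (hfrac : ∀ i j : ℕ, i < n → j < n → i ≠ j → Int.fract (H i) ≠ Int.fract (H j))
    (f : ℤ → ℤ) (hf : IsBAP n f)
    (horder : ∀ i j : ℕ, i < n → j < n →
      ((f^[i] 0) % (n : ℤ) < (f^[j] 0) % (n : ℤ) ↔ Int.fract (H i) < Int.fract (H j))) :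
    IsTheta k n f ∧ ∀ r : ℕ, r ≤ n → (f^[r] 0) / (n : ℤ) = ⌊H r⌋ := by
  classical
  have hNpos : (0:ℤ) < (n:ℤ) := by exact_mod_cast hn
  have hNne : (n:ℤ) ≠ 0 := ne_of_gt hNpos
  have hn2 : 2 ≤ n := by
    rcases Nat.lt_or_ge n 2 with h | h
    · exfalso
      have hn1 : n = 1 := by omega
      subst hn1
      have h1 := hinc 0 (by norm_num)
      rw [hH0] at h1
      have hk1 : H 1 = (k:ℝ) := hHn
      rw [hk1] at h1
      have hk0 : (0:ℝ) < (k:ℝ) := by linarith [h1.1]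
      have hk2 : (k:ℝ) < 1 := by linarith [h1.2]
      have hk0' : 0 < k := by exact_mod_cast hk0
      have hk2' : k < 1 := by exact_mod_cast hk2
      omega
    · exact h
  have hbij : Function.Bijective f := hf.1.1
  have hper : ∀ i : ℤ, f (i + (n:ℤ)) = f i + (n:ℤ) := hf.1.2
  have hbd : ∀ i : ℤ, i ≤ f i ∧ f i ≤ i + (n:ℤ) := hf.2
  -- periodicity for all integer multiples
  have hperm : ∀ (x m : ℤ), f (x + m * (n:ℤ)) = f x + m * (n:ℤ) := by
    intro x m
    induction m using Int.induction_on with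
    | zero => simp
    | succ m ih =>
      have := hper (x + (m:ℤ) * n)
      have e : x + ((m:ℤ)+1) * n = x + (m:ℤ) * n + n := by ring
      rw [e, this, ih]; ring
    | pred m ih =>
      have := hper (x + (-(m:ℤ)-1) * n)
      have e : x + (-(m:ℤ)-1) * n + (n:ℤ) = x + (-(m:ℤ)) * n := by ring
      rw [e] at this
      have : f (x + (-(m:ℤ)-1) * n) = f (x + (-(m:ℤ)) * n) - n := by omega
      rw [this, ih]; ring
  have hmodinj : ∀ x y : ℤ, f x % (n:ℤ) = f y % (n:ℤ) → x % (n:ℤ) = y % (n:ℤ) := by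
    intro x y h
    have hdvd : (n:ℤ) ∣ f y - f x := Int.ModEq.dvd h
    obtain ⟨m, hm⟩ := hdvd
    have : f (x + m * n) = f y := by rw [hperm]; linarith
    have hxy : x + m * n = y := hbij.1 this
    rw [← hxy]
    simp [Int.add_mul_emod_self_left]
  have hainj : ∀ i j : ℕ, i < n → j < n → (f^[i] 0) % (n:ℤ) = (f^[j] 0) % (n:ℤ) → i = j := by
    intro i j hi hj hij
    by_contra hne
    rcases lt_trichotomy (Int.fract (H i)) (Int.fract (H j)) with h | h | h
    · have := (horder i j hi hj).mpr h
      omega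
    · exact hfrac i j hi hj hne h
    · have := (horder j i hj hi).mpr h
      omega
  have haimg : (Finset.range n).image (fun r => (f^[r] 0) % (n:ℤ)) = Finset.Ico (0:ℤ) (n:ℤ) := by
    apply Finset.eq_of_subset_of_card_le
    · intro x hx
      simp only [Finset.mem_image, Finset.mem_range] at hx
      obtain ⟨r, hr, rfl⟩ := hx
      simp only [Finset.mem_Ico]
      exact ⟨Int.emod_nonneg _ hNne, Int.emod_lt_of_pos _ hNpos⟩
    · rw [Finset.card_image_of_injOn, Finset.card_range]
      · simp
      · intro x hx y hy hxy
        simp only [Finset.coe_range, Set.mem_Iio] at hx hy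
        exact hainj x y hx hy hxy
  have hcyc : IsCycleMod n f := by
    intro j
    have hjm : j % (n:ℤ) ∈ Finset.Ico (0:ℤ) (n:ℤ) := by
      simp only [Finset.mem_Ico]
      exact ⟨Int.emod_nonneg _ hNne, Int.emod_lt_of_pos _ hNpos⟩
    rw [← haimg] at hjm
    simp only [Finset.mem_image, Finset.mem_range] at hjm
    obtain ⟨r, hr, hr2⟩ := hjm
    exact ⟨r, hr, hr2⟩
  -- the residue of f^[n] 0 is 0
  have han : (f^[n] 0) % (n:ℤ) = 0 := by
    have hmem : (f^[n] 0) % (n:ℤ) ∈ Finset.Ico (0:ℤ) (n:ℤ) := by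
      simp only [Finset.mem_Ico]
      exact ⟨Int.emod_nonneg _ hNne, Int.emod_lt_of_pos _ hNpos⟩
    rw [← haimg] at hmem
    simp only [Finset.mem_image, Finset.mem_range] at hmem
    obtain ⟨r, hr, hr2⟩ := hmem
    rcases Nat.eq_zero_or_pos r with h0 | h0
    · subst h0
      simp only [Function.iterate_zero, id_eq] at hr2
      rw [← hr2]
      simp
    · exfalso
      obtain ⟨s, rfl⟩ : ∃ s, r = s + 1 := ⟨r - 1, by omega⟩
      have e1 : f^[s+1] 0 = f (f^[s] 0) := Function.iterate_succ_apply' f s 0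
      have e2 : f^[n] 0 = f (f^[n-1] 0) := by
        conv_lhs => rw [show n = (n-1)+1 by omega, Function.iterate_succ_apply' f (n-1) 0]
      rw [e1, e2] at hr2
      have := hmodinj _ _ hr2
      have := hainj s (n-1) (by omega) (by omega) this
      omega
  -- successive residues differ
  have hane : ∀ r, r < n → (f^[r+1] 0) % (n:ℤ) ≠ (f^[r] 0) % (n:ℤ) := by
    intro r hr hcon
    rcases Nat.lt_or_ge (r+1) n with h | h
    · have := hainj (r+1) r h (by omega) hcon
      omega
    · have hr1 : r + 1 = n := by omega
      rw [hr1, han] at hcon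
      have h0 : (f^[0] 0) % (n:ℤ) = 0 := by simp
      have := hainj r 0 hr (by omega) (by rw [h0]; exact hcon.symm)
      omega
  -- strict step bounds
  have hstep : ∀ r, r < n → f^[r] 0 < f^[r+1] 0 ∧ f^[r+1] 0 < f^[r] 0 + (n:ℤ) := by
    intro r hr
    have e1 : f^[r+1] 0 = f (f^[r] 0) := Function.iterate_succ_apply' f r 0
    have hb := hbd (f^[r] 0)
    have hne := hane r hr
    constructor
    · rcases lt_or_eq_of_le hb.1 with h | h
      · rw [e1]; exact h
      · exfalso; apply hne; rw [e1, ← h]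
    · rcases lt_or_eq_of_le hb.2 with h | h
      · rw [e1]; exact h
      · exfalso; apply hne
        rw [e1, h]
        simp [Int.add_mul_emod_self_left]
  -- fract H 0 = 0 facts
  have hfr0 : Int.fract (H 0) = 0 := by rw [hH0]; simp
  have hfrn : Int.fract (H n) = 0 := by rw [hHn]; simp
  have hfrpos : ∀ r, r < n → r ≠ 0 → 0 < Int.fract (H r) := by
    intro r hr hr0
    rcases lt_or_eq_of_le (Int.fract_nonneg (H r)) with h | h
    · exact h
    · exfalso
      exact hfrac r 0 hr hn hr0 (by rw [hfr0, ← h])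
  -- link between residue order and fract order at each step
  have hlink : ∀ r, r < n →
      ((f^[r+1] 0) % (n:ℤ) < (f^[r] 0) % (n:ℤ) ↔ Int.fract (H (r+1)) < Int.fract (H r)) := by
    intro r hr
    rcases Nat.lt_or_ge (r+1) n with h | h
    · exact horder (r+1) r h hr
    · have hr1 : r + 1 = n := by omega
      have ha0 : (f^[r] 0) % (n:ℤ) ≠ 0 := by
        intro hcon
        have h0 : (f^[0] 0) % (n:ℤ) = 0 := by simp
        have := hainj r 0 hr (by omega) (by rw [h0]; exact hcon)
        omega
      have hapos : 0 < (f^[r] 0) % (n:ℤ) :=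
        lt_of_le_of_ne (Int.emod_nonneg _ hNne) (Ne.symm ha0)
      constructor
      · intro _
        rw [hr1, hfrn]
        exact hfrpos r hr (by omega)
      · intro _
        rw [hr1, han]
        exact hapos
  have hfrne : ∀ r, r < n → Int.fract (H (r+1)) ≠ Int.fract (H r) := by
    intro r hr
    rcases Nat.lt_or_ge (r+1) n with h | h
    · exact hfrac (r+1) r h hr (by omega)
    · have hr1 : r + 1 = n := by omega
      rw [hr1, hfrn]
      exact (Ne.symm (ne_of_gt (hfrpos r hr (by omega))))
  -- the main floor computation by induction
  have hq : ∀ r : ℕ, r ≤ n → (f^[r] 0) / (n:ℤ) = ⌊H r⌋ := by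
    intro r
    induction r with
    | zero =>
      intro _
      simp [hH0]
    | succ r ih =>
      intro hr1
      have hrn : r < n := hr1
      have ihq := ih (Nat.le_of_lt hrn)
      have hs := hstep r hrn
      have hl := hlink r hrn
      have hne := hane r hrn
      have hfne := hfrne r hrn
      have hinc' := hinc r hrn
      have hreal := auxRealStep (H r) (H (r+1)) hinc'.1 hinc'.2
      have hed : (n:ℤ) * ((f^[r] 0) / n) + (f^[r] 0) % n = f^[r] 0 := Int.mul_ediv_add_emod _ _
      have hed' : (n:ℤ) * ((f^[r+1] 0) / n) + (f^[r+1] 0) % n = f^[r+1] 0 := Int.mul_ediv_add_emod _ _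
      have hint := auxIntStep (n:ℤ) ((f^[r] 0) / n) ((f^[r+1] 0) / n)
        ((f^[r] 0) % n) ((f^[r+1] 0) % n) hNpos
        (Int.emod_nonneg _ hNne) (Int.emod_lt_of_pos _ hNpos)
        (Int.emod_nonneg _ hNne) (Int.emod_lt_of_pos _ hNpos)
        (by rw [hed, hed']; exact hs.1)
        (by rw [hed, hed']; exact hs.2)
      rcases lt_or_gt_of_ne hne with hlt | hgt
      · have e1 := hint.1 hlt
        have e2 := hreal.1 (hl.mp hlt)
        push_cast
        omega
      · have e1 := hint.2 hgt
        have hfr : Int.fract (H r) < Int.fract (H (r+1)) := by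
          rcases lt_trichotomy (Int.fract (H (r+1))) (Int.fract (H r)) with h | h | h
          · exact absurd (hl.mpr h) (not_lt.mpr (le_of_lt hgt))
          · exact absurd h hfne
          · exact h
        have e2 := hreal.2 hfr
        push_cast
        omega
  -- f^[n] 0 = k * n
  have hbnq : (f^[n] 0) / (n:ℤ) = (k:ℤ) := by
    have := hq n le_rfl
    rw [hHn] at this
    simpa using this
  have hbn : f^[n] 0 = (k:ℤ) * n := by
    have := Int.mul_ediv_add_emod (f^[n] 0) (n:ℤ)
    rw [han, hbnq] at this
    linarith
  -- winding number computation
  have hwind : winding n f = k := by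
    set g : ℤ → ℤ := fun i => if (n:ℤ) < f i then f i - n else f i with hg
    have hgmod : ∀ i, g i % (n:ℤ) = f i % (n:ℤ) := by
      intro i
      rw [hg]
      dsimp only
      split
      · rw [Int.sub_emod, Int.emod_self, sub_zero, Int.emod_emod_of_dvd _ dvd_rfl]
      · rfl
    have hginj : ∀ i ∈ Finset.Icc (1:ℤ) (n:ℤ), ∀ j ∈ Finset.Icc (1:ℤ) (n:ℤ), g i = g j → i = j := by
      intro i hi j hj hij
      simp only [Finset.mem_Icc] at hi hj
      have h1 : f i % (n:ℤ) = f j % (n:ℤ) := by rw [← hgmod, ← hgmod, hij]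
      have h2 := hmodinj i j h1
      have hdvd : (n:ℤ) ∣ j - i := Int.ModEq.dvd h2
      have := auxDvdSmall (n:ℤ) (j - i) hNpos hdvd (by omega) (by omega)
      omega
    have hgmap : ∀ i ∈ Finset.Icc (1:ℤ) (n:ℤ), g i ∈ Finset.Icc (1:ℤ) (n:ℤ) := by
      intro i hi
      simp only [Finset.mem_Icc] at hi ⊢
      have hb := hbd i
      rw [hg]
      dsimp only
      split <;> omega
    have himg : Finset.image g (Finset.Icc (1:ℤ) (n:ℤ)) = Finset.Icc (1:ℤ) (n:ℤ) := by
      apply Finset.eq_of_subset_of_card_le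
      · exact Finset.image_subset_iff.mpr hgmap
      · rw [Finset.card_image_of_injOn (fun x hx y hy => hginj x hx y hy)]
    have hsum2 : ∑ i ∈ Finset.Icc (1:ℤ) (n:ℤ), g i = ∑ i ∈ Finset.Icc (1:ℤ) (n:ℤ), i := by
      conv_rhs => rw [← himg]
      rw [Finset.sum_image hginj]
    have hsum1 : ∑ i ∈ Finset.Icc (1:ℤ) (n:ℤ), f i
        = (∑ i ∈ Finset.Icc (1:ℤ) (n:ℤ), g i) + (winding n f : ℤ) * (n:ℤ) := by
      have hsplit : ∀ i ∈ Finset.Icc (1:ℤ) (n:ℤ), f i = g i + (if (n:ℤ) < f i then (n:ℤ) else 0) := by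
        intro i _
        rw [hg]
        dsimp only
        split <;> ring
      rw [Finset.sum_congr rfl hsplit, Finset.sum_add_distrib]
      congr 1
      rw [← Finset.sum_filter, Finset.sum_const, nsmul_eq_mul]
      rfl
    have hA : ∑ i ∈ Finset.Icc (1:ℤ) (n:ℤ), (f i - i) = (winding n f : ℤ) * (n:ℤ) := by
      rw [Finset.sum_sub_distrib, hsum1, hsum2]
      ring
    have hfn : f (n:ℤ) - (n:ℤ) = f 0 - 0 := by
      have := hper 0
      rw [zero_add] at this
      omega
    have hB : ∑ i ∈ Finset.Icc (1:ℤ) (n:ℤ), (f i - i) = ∑ i ∈ Finset.Ico (0:ℤ) (n:ℤ), (f i - i) := by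
      have e1 : Finset.Icc (1:ℤ) (n:ℤ) = insert (n:ℤ) (Finset.Ico (1:ℤ) (n:ℤ)) :=
        (Finset.Ico_insert_right (by exact_mod_cast hn)).symm
      have e2 : Finset.Ico (0:ℤ) (n:ℤ) = insert (0:ℤ) (Finset.Ico (1:ℤ) (n:ℤ)) := by
        ext x
        simp only [Finset.mem_Ico, Finset.mem_insert]
        omega
      rw [e1, e2, Finset.sum_insert (by simp), Finset.sum_insert (by simp)]
      rw [hfn]
    have hC : ∑ i ∈ Finset.Ico (0:ℤ) (n:ℤ), (f i - i)
        = ∑ r ∈ Finset.range n, (f ((f^[r] 0) % (n:ℤ)) - (f^[r] 0) % (n:ℤ)) := by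
      rw [← haimg, Finset.sum_image (fun x hx y hy h => by
        simp only [Finset.mem_coe, Finset.mem_range] at hx hy
        exact hainj x y hx hy h)]
    have hD : ∀ r : ℕ, f ((f^[r] 0) % (n:ℤ)) - (f^[r] 0) % (n:ℤ) = f (f^[r] 0) - f^[r] 0 := by
      intro r
      have he := Int.mul_ediv_add_emod (f^[r] 0) (n:ℤ)
      have hb' : f^[r] 0 = (f^[r] 0) % (n:ℤ) + ((f^[r] 0) / (n:ℤ)) * (n:ℤ) := by linarith
      have key := hperm ((f^[r] 0) % (n:ℤ)) ((f^[r] 0) / (n:ℤ))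
      rw [← hb'] at key
      linarith [key, hb']
    have hE : ∑ r ∈ Finset.range n, (f (f^[r] 0) - f^[r] 0) = (k:ℤ) * (n:ℤ) := by
      have hc : ∀ r ∈ Finset.range n, f (f^[r] 0) - f^[r] 0 = f^[r+1] 0 - f^[r] 0 := by
        intro r _
        rw [Function.iterate_succ_apply']
      rw [Finset.sum_congr rfl hc, Finset.sum_range_sub (fun r => f^[r] 0)]
      simp [hbn]
    have hfinal : (winding n f : ℤ) * (n:ℤ) = (k:ℤ) * (n:ℤ) := by
      rw [← hA, hB, hC]
      rw [Finset.sum_congr rfl (fun r _ => hD r)]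
      exact hE
    have : (winding n f : ℤ) = (k:ℤ) := mul_right_cancel₀ hNne hfinal
    exact_mod_cast this
  exact ⟨⟨hf, hcyc, hwind⟩, hq⟩
end
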